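/- arXiv:1205.5758 — 7 statements merged into one kernel-verified Lean document; each statement's English description precedes it below -/
import Mathlib

section
/- For every infinite word ω ∈ Σ the limit s(ω) = lim_{k→∞} μ̃(I_{ω_k}) / μ̃(I_{σ*(ω_k)}) exists, where σ*(i_1, …, i_k) = (i_2, …, i_k). Moreover s(ω) = lim_{k→∞} μ(C_{ω_k}) / μ(C_{σ*(ω_k)}), where μ is the Borel probability on Σ determined by μ(C_γ) = ∫_{I_γ} v dμ̃ on cylinders; that is, the scaling function s is the Jacobian of the measure μ with respect to the shift. -/
open MeasureTheory Set Filter Topology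
open scoped NNReal ENNReal
set_option maxHeartbeats 1000000

lemma cmvt {U : Set ℂ} (hU : IsOpen U) {F : ℂ → ℂ} (hF : DifferentiableOn ℂ F U)
    {s : Set ℂ} (hs : Convex ℝ s) (hsU : s ⊆ U) {M : ℝ}
    (hM : ∀ z ∈ s, ‖deriv F z‖ ≤ M) :
    ∀ x ∈ s, ∀ y ∈ s, ‖F y - F x‖ ≤ M * ‖y - x‖ := by
  intro x hx y hy
  refine Convex.norm_image_sub_le_of_norm_hasFDerivWithin_le
    (f' := fun z => ContinuousLinearMap.smulRight (1 : ℂ →L[ℂ] ℂ) (deriv F z))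
    (fun z hz => ?_) (fun z hz => ?_) hs hx hy
  · exact ((hF.differentiableAt (hU.mem_nhds (hsU hz))).hasDerivAt.hasFDerivAt).hasFDerivWithinAt
  · rw [ContinuousLinearMap.norm_smulRight_apply]
    simpa [ContinuousLinearMap.one_def, ContinuousLinearMap.norm_id] using hM z hz

lemma derivCont {U : Set ℂ} (hU : IsOpen U) {F : ℂ → ℂ} (hF : DifferentiableOn ℂ F U) :
    ContinuousOn (deriv F) U :=
  ((hF.analyticOnNhd hU).deriv).continuousOn

lemma loglip {δ x y : ℝ} (hδ : 0 < δ) (hx : δ ≤ x) (hy : δ ≤ y) :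
    |Real.log x - Real.log y| ≤ |x - y| / δ := by
  have key : ∀ a b : ℝ, δ ≤ a → δ ≤ b → b ≤ a → Real.log a - Real.log b ≤ (a - b) / δ := by
    intro a b ha hb hba
    have hb0 : 0 < b := lt_of_lt_of_le hδ hb
    have ha0 : 0 < a := lt_of_lt_of_le hδ ha
    have h1 : Real.log a - Real.log b = Real.log (a / b) := (Real.log_div ha0.ne' hb0.ne').symm
    have h2 : Real.log (a / b) ≤ a / b - 1 := Real.log_le_sub_one_of_pos (div_pos ha0 hb0)
    have h3 : a / b - 1 = (a - b) / b := by field_simp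
    have h4 : (a - b) / b ≤ (a - b) / δ :=
      div_le_div_of_nonneg_left (by linarith) hδ hb
    linarith
  rcases le_total y x with h | h
  · rw [abs_of_nonneg (by linarith [Real.log_le_log (lt_of_lt_of_le hδ hy) h] :
      (0:ℝ) ≤ Real.log x - Real.log y), abs_of_nonneg (by linarith : (0:ℝ) ≤ x - y)]
    exact key x y hx hy h
  · rw [abs_sub_comm, abs_of_nonneg (by linarith [Real.log_le_log (lt_of_lt_of_le hδ hx) h] :
      (0:ℝ) ≤ Real.log y - Real.log x), abs_sub_comm x y, abs_of_nonneg (by linarith : (0:ℝ) ≤ y - x)]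
    exact key y x hy hx h

/-- scaling function, Section 4 of the paper.
For every `ω ∈ Σ` the limit `s(ω) = lim_k μ̃(I_{ω_k}) / μ̃(I_{σ*(ω_k)})` exists, where
`σ*` drops the first symbol of a finite word; moreover `s(ω)` also equals
`lim_k μ(C_{ω_k}) / μ(C_{σ*(ω_k)})` for the probability `μ` on `Σ` determined by
`μ(C_γ) = ∫_{I_γ} v dμ̃`: the scaling function is the Jacobian of `μ`. -/
theorem stmt2
    (d : ℕ) (hd : 1 ≤ d)
    -- the complex neighborhood O of I = [0,1]
    (O : Set ℂ) (hOopen : IsOpen O) (hObdd : Bornology.IsBounded O)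
    (hOsc : SimplyConnectedSpace O)
    (hIO : ∀ x : ℝ, x ∈ Icc (0:ℝ) 1 → (x : ℂ) ∈ O)
    -- the expanding map f and its inverse branches ψ_i, extended univalently to O
    (f : ℝ → ℝ) (ψ : Fin d → ℂ → ℂ) (lam : ℝ) (hlam : lam < 1)
    (hψdiff : ∀ i, DifferentiableOn ℂ (ψ i) O)
    (hψinj : ∀ i, InjOn (ψ i) O)
    (hψcont : ∀ i, ContinuousOn (ψ i) (closure O))
    (hψmap : ∀ i, ψ i '' (closure O) ⊆ O)
    (hψderiv : ∀ i, ∀ x ∈ O, ‖deriv (ψ i) x‖ ≤ lam)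
    (hψreal : ∀ i, ∀ x ∈ Icc (0:ℝ) 1, ∃ y ∈ Icc (0:ℝ) 1, ψ i (x : ℂ) = (y : ℂ))
    (hψsection : ∀ i, ∀ x ∈ Icc (0:ℝ) 1, f ((ψ i (x : ℂ)).re) = x)
    -- the complex analytic potential g, through its branches g_i
    (g : Fin d → ℂ → ℂ)
    (hgdiff : ∀ i, DifferentiableOn ℂ (g i) (ψ i '' O))
    (hgcont : ∀ i, ContinuousOn (g i) (closure (ψ i '' O)))
    (hgne : ∀ i, ∀ z ∈ closure (ψ i '' O), g i z ≠ 0)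
    (hgpos : ∀ i, ∀ z ∈ ψ i '' O, z.im = 0 → (g i z).im = 0 ∧ 0 < (g i z).re)
    -- compositions ψ_γ along finite words γ = (i₁,…,i_k), the intervals I_γ = ψ_γ(I)
    (ψw : List (Fin d) → ℂ → ℂ)
    (hψw : ∀ γ x, ψw γ x = γ.foldl (fun z i => ψ i z) x)
    (Iw : List (Fin d) → Set ℝ)
    (hIw : ∀ γ, Iw γ = {y : ℝ | ∃ x ∈ Icc (0:ℝ) 1, ψw γ (x : ℂ) = (y : ℂ)})
    -- the twisted products h̃_γ
    (htil : List (Fin d) → ℂ → ℂ)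
    (htilone : ∀ i x, htil [i] x = g i (ψ i x))
    (htilrec : ∀ γ, γ ≠ [] → ∀ i x, htil (γ ++ [i]) x = htil γ x * g i (ψw (γ ++ [i]) x))
    -- the conformal measure μ̃, the eigenvalue α and the eigenfunction v
    (μt : Measure ℝ) [IsProbabilityMeasure μt] [NullSingletonClass μt]
    (hμtI : μt (Icc (0:ℝ) 1) = 1)
    (hμtfull : ∀ s : Set ℝ, IsOpen s → (s ∩ Icc (0:ℝ) 1).Nonempty → 0 < μt s)
    (α : ℝ) (hα : 0 < α)
    (v : ℝ → ℝ) (hvpos : ∀ x ∈ Icc (0:ℝ) 1, 0 < v x)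
    (hvHolder : ∃ (C r : ℝ≥0), 0 < r ∧ HolderWith C r v)
    (hveig : ∀ x ∈ Icc (0:ℝ) 1,
      (∑ i : Fin d, (g i (ψ i (x : ℂ))).re * v ((ψ i (x : ℂ)).re)) = α * v x)
    (hvnorm : ∫ x in Icc (0:ℝ) 1, v x ∂μt = 1)
    (hconf : ∀ q : ℝ → ℝ, ContinuousOn q (Icc (0:ℝ) 1) →
      ∫ x in Icc (0:ℝ) 1, (∑ i : Fin d, (g i (ψ i (x : ℂ))).re * q ((ψ i (x : ℂ)).re)) ∂μt
        = α * ∫ x in Icc (0:ℝ) 1, q x ∂μt)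
    -- the normalized products h_γ = h̃_γ / (α^{|γ|} μ̃(I_γ))
    (hγ : List (Fin d) → ℂ → ℂ)
    (hhγ : ∀ γ x, hγ γ x = htil γ x / ((α ^ γ.length * (μt (Iw γ)).toReal : ℝ) : ℂ))
    -- the Borel probability μ on Σ determined by μ(C_γ) = ∫_{I_γ} v dμ̃
    (μ : Measure (ℕ → Fin d)) (hμprob : IsProbabilityMeasure μ)
    (hμcyl : ∀ γ : List (Fin d),
      μ {ω : ℕ → Fin d | (List.ofFn fun j : Fin γ.length => ω j) = γ}
        = ENNReal.ofReal (∫ t in Iw γ, v t ∂μt)) :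
    -- conclusion
    ∀ ω : ℕ → Fin d, ∃ s : ℝ,
      Tendsto (fun k : ℕ =>
          (μt (Iw (List.ofFn fun j : Fin k => ω j))).toReal
            / (μt (Iw (List.ofFn fun j : Fin k => ω j).tail)).toReal)
        atTop (nhds s) ∧
      Tendsto (fun k : ℕ =>
          (μ {ω' : ℕ → Fin d |
              (List.ofFn fun j : Fin k => ω' j) = (List.ofFn fun j : Fin k => ω j)}).toReal
            / (μ {ω' : ℕ → Fin d |
              (List.ofFn fun j : Fin (List.ofFn fun j : Fin k => ω j).tail.length => ω' j)
                = (List.ofFn fun j : Fin k => ω j).tail}).toReal)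
        atTop (nhds s) := by
  classical
  classical
  have h0I : (0:ℝ) ∈ Icc (0:ℝ) 1 := ⟨le_refl _, zero_le_one⟩
  have h1I : (1:ℝ) ∈ Icc (0:ℝ) 1 := ⟨zero_le_one, le_refl _⟩
  have hO0 : (0:ℂ) ∈ O := by simpa using hIO 0 h0I
  haveI : Nonempty (Fin d) := ⟨⟨0, hd⟩⟩
  set Λ : ℝ := max lam (1/2) with hΛdef
  have hΛpos : 0 < Λ := lt_max_of_lt_right (by norm_num)
  have hΛlt1 : Λ < 1 := max_lt hlam (by norm_num)
  have hΛhalf : (1:ℝ)/2 ≤ Λ := le_max_right _ _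
  have hlamΛ : lam ≤ Λ := le_max_left _ _
  -- the complexified interval
  set cI : Set ℂ := Complex.ofReal '' Icc (0:ℝ) 1 with hcIdef
  have hcIO : cI ⊆ O := by rintro z ⟨x, hx, rfl⟩; exact hIO x hx
  have hlinR : IsLinearMap ℝ (fun x : ℝ => (x:ℂ)) := by
    constructor
    · intro x y; push_cast; ring
    · intro c x; simp only [Complex.real_smul, smul_eq_mul]; push_cast; ring
  have hcIconv : Convex ℝ cI := (convex_Icc (0:ℝ) 1).is_linear_image hlinR
  have hcIcpt : IsCompact cI := isCompact_Icc.image Complex.continuous_ofReal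
  have hseg : ∀ a b : ℝ, segment ℝ (a:ℂ) (b:ℂ) = Complex.ofReal '' segment ℝ a b := by
    intro a b
    ext z; constructor
    · rintro ⟨t, s, ht, hs, hts, rfl⟩
      refine ⟨t * a + s * b, ⟨t, s, ht, hs, hts, by simp [smul_eq_mul]⟩, by push_cast; simp [Complex.real_smul]⟩
    · rintro ⟨u, ⟨t, s, ht, hs, hts, rfl⟩, rfl⟩
      exact ⟨t, s, ht, hs, hts, by simp only [Complex.real_smul, smul_eq_mul]; push_cast; ring⟩
  -- real trace facts of single branches
  have hφmem : ∀ i, ∀ x ∈ Icc (0:ℝ) 1,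
      (ψ i (x:ℂ)).re ∈ Icc (0:ℝ) 1 ∧ ψ i (x:ℂ) = (((ψ i (x:ℂ)).re : ℝ) : ℂ) := by
    intro i x hx
    obtain ⟨y, hy, heq⟩ := hψreal i x hx
    rw [heq]; simpa using hy
  have hψlip : ∀ l, ∀ x ∈ Icc (0:ℝ) 1, ∀ y ∈ Icc (0:ℝ) 1,
      ‖ψ l (y:ℂ) - ψ l (x:ℂ)‖ ≤ Λ * |y - x| := by
    intro l x hx y hy
    have hsub : segment ℝ (x:ℂ) (y:ℂ) ⊆ O :=
      subset_trans (hcIconv.segment_subset ⟨x, hx, rfl⟩ ⟨y, hy, rfl⟩) hcIO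
    have := cmvt hOopen (hψdiff l) (convex_segment _ _) hsub
      (fun z hz => le_trans (hψderiv l z (hsub hz)) hlamΛ)
      _ (left_mem_segment ℝ _ _) _ (right_mem_segment ℝ _ _)
    calc ‖ψ l (y:ℂ) - ψ l (x:ℂ)‖ ≤ Λ * ‖(y:ℂ) - (x:ℂ)‖ := this
    _ = Λ * |y - x| := by rw [← Complex.ofReal_sub, Complex.norm_real, Real.norm_eq_abs]
  have hφlip : ∀ l, ∀ x ∈ Icc (0:ℝ) 1, ∀ y ∈ Icc (0:ℝ) 1,
      |(ψ l (y:ℂ)).re - (ψ l (x:ℂ)).re| ≤ Λ * |y - x| := by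
    intro l x hx y hy
    calc |(ψ l (y:ℂ)).re - (ψ l (x:ℂ)).re| = |(ψ l (y:ℂ) - ψ l (x:ℂ)).re| := by rw [Complex.sub_re]
    _ ≤ ‖ψ l (y:ℂ) - ψ l (x:ℂ)‖ := Complex.abs_re_le_norm _
    _ ≤ Λ * |y - x| := by exact hψlip l x hx y hy
  have hφcont : ∀ l, ContinuousOn (fun x : ℝ => (ψ l (x:ℂ)).re) (Icc (0:ℝ) 1) := by
    intro l
    refine (LipschitzOnWith.of_dist_le_mul (K := Real.toNNReal Λ) fun x hx y hy => ?_).continuousOn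
    rw [Real.dist_eq, Real.dist_eq, Real.coe_toNNReal _ hΛpos.le]
    exact hφlip l y hy x hx
  -- connectivity, open mapping for the branches
  have hOconn : IsPreconnected O := by
    have hpc : PathConnectedSpace ↥O := inferInstance
    exact (isPathConnected_iff_pathConnectedSpace.2 hpc).isConnected.isPreconnected
  have hψOopen : ∀ l, IsOpen (ψ l '' O) := by
    intro l
    rcases ((hψdiff l).analyticOnNhd hOopen).is_constant_or_isOpen hOconn with ⟨w, hw⟩ | hopen
    · exfalso
      have h1 : O ∩ {z : ℂ | z ≠ 0} ∈ 𝓝[≠] (0:ℂ) :=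
        inter_mem (mem_nhdsWithin_of_mem_nhds (hOopen.mem_nhds hO0)) self_mem_nhdsWithin
      obtain ⟨z, hzO, hz0⟩ := Filter.nonempty_of_mem h1
      exact hz0 (hψinj l hzO hO0 (by rw [hw z hzO, hw 0 hO0]))
    · exact hopen O subset_rfl hOopen
  -- compactness and derivative bounds for the potential branches
  have hψcI : ∀ l, ∀ x ∈ Icc (0:ℝ) 1, ψ l (x:ℂ) ∈ ψ l '' cI :=
    fun l x hx => ⟨(x:ℂ), ⟨x, hx, rfl⟩, rfl⟩
  have hKcpt : ∀ l, IsCompact (ψ l '' cI) :=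
    fun l => hcIcpt.image_of_continuousOn ((hψcont l).mono (hcIO.trans subset_closure))
  have hKsub : ∀ l, ψ l '' cI ⊆ ψ l '' O := fun l => image_mono hcIO
  have hMex : ∀ l : Fin d, ∃ Ml : ℝ, ∀ z ∈ ψ l '' cI, ‖deriv (g l) z‖ ≤ Ml :=
    fun l => (hKcpt l).exists_bound_of_continuousOn
      ((derivCont (hψOopen l) (hgdiff l)).mono (hKsub l))
  choose M hM using hMex
  set M' : Fin d → ℝ := fun l => max (M l) 0 with hM'def
  have hM'0 : ∀ l, 0 ≤ M' l := fun l => le_max_right _ _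
  have hM' : ∀ l, ∀ z ∈ ψ l '' cI, ‖deriv (g l) z‖ ≤ M' l :=
    fun l z hz => le_trans (hM l z hz) (le_max_left _ _)
  -- segments between branch values stay in the image of the interval
  have hsegK : ∀ l, ∀ x ∈ Icc (0:ℝ) 1, ∀ y ∈ Icc (0:ℝ) 1,
      segment ℝ (ψ l (x:ℂ)) (ψ l (y:ℂ)) ⊆ ψ l '' cI := by
    intro l x hx y hy z hz
    have huIcc : uIcc x y ⊆ Icc (0:ℝ) 1 := by
      intro t ht
      rw [mem_uIcc] at ht
      rcases ht with ⟨h1, h2⟩ | ⟨h1, h2⟩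
      · exact ⟨le_trans hx.1 h1, le_trans h2 hy.2⟩
      · exact ⟨le_trans hy.1 h1, le_trans h2 hx.2⟩
    rw [(hφmem l x hx).2, (hφmem l y hy).2, hseg] at hz
    obtain ⟨u, hu, rfl⟩ := hz
    rw [segment_eq_uIcc] at hu
    have hival := intermediate_value_uIcc ((hφcont l).mono huIcc)
    obtain ⟨t, ht, htu⟩ := hival hu
    refine ⟨(t:ℂ), ⟨t, huIcc ht, rfl⟩, ?_⟩
    rw [(hφmem l t (huIcc ht)).2]
    exact congrArg Complex.ofReal htu
  -- Lipschitz continuity of the potential along branches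
  have hgl_lip : ∀ l, ∀ x ∈ Icc (0:ℝ) 1, ∀ y ∈ Icc (0:ℝ) 1,
      ‖g l (ψ l (y:ℂ)) - g l (ψ l (x:ℂ))‖ ≤ M' l * (Λ * |y - x|) := by
    intro l x hx y hy
    have h1 : ‖g l (ψ l (y:ℂ)) - g l (ψ l (x:ℂ))‖ ≤ M' l * ‖ψ l (y:ℂ) - ψ l (x:ℂ)‖ :=
      cmvt (hψOopen l) (hgdiff l) (convex_segment _ _)
        ((hsegK l x hx y hy).trans (hKsub l))
        (fun z hz => hM' l z (hsegK l x hx y hy hz))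
        _ (left_mem_segment ℝ _ _) _ (right_mem_segment ℝ _ _)
    exact le_trans h1 (mul_le_mul_of_nonneg_left (hψlip l x hx y hy) (hM'0 l))
  -- identity-theorem dichotomy for pairs of branches
  have hdich : ∀ l i : Fin d, (¬ ∀ t ∈ Icc (0:ℝ) 1, ψ l (t:ℂ) = ψ i (t:ℂ)) →
      Set.Finite {x : ℝ | x ∈ Icc (0:ℝ) 1 ∧ ψ l (x:ℂ) = ψ i (x:ℂ)} := by
    intro l i hne
    by_contra hinf
    apply hne
    have hEinf : Set.Infinite {x : ℝ | x ∈ Icc (0:ℝ) 1 ∧ ψ l (x:ℂ) = ψ i (x:ℂ)} := hinf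
    obtain ⟨x₀, hx₀K, hacc⟩ := hEinf.exists_accPt_of_subset_isCompact isCompact_Icc
      (fun x hx => hx.1)
    rw [accPt_iff_frequently] at hacc
    have hfreq : ∃ᶠ u in (𝓝[≠] x₀ : Filter ℝ), ψ l ((u:ℝ):ℂ) = ψ i ((u:ℝ):ℂ) := by
      rw [frequently_nhdsWithin_iff]
      exact hacc.mono (fun u hu => ⟨hu.2.2, hu.1⟩)
    have htend : Tendsto (fun u : ℝ => (u:ℂ)) (𝓝[≠] x₀) (𝓝[≠] (x₀:ℂ)) := by
      apply Complex.continuous_ofReal.continuousAt.continuousWithinAt.tendsto_nhdsWithin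
      intro u hu
      simp only [mem_compl_iff, mem_singleton_iff] at hu ⊢
      exact fun h => hu (by exact_mod_cast h)
    have hfreqC : ∃ᶠ z in 𝓝[≠] ((x₀:ℝ):ℂ), ψ l z = ψ i z := htend.frequently hfreq
    have heq := AnalyticOnNhd.eqOn_of_preconnected_of_frequently_eq
      ((hψdiff l).analyticOnNhd hOopen) ((hψdiff i).analyticOnNhd hOopen)
      hOconn (hIO x₀ hx₀K) hfreqC
    exact fun t ht => heq (hIO t ht)
  -- the combined potential along equal-branch classes
  set G : Fin d → ℝ → ℝ := fun i x => ∑ l : Fin d,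
    if (∀ t ∈ Icc (0:ℝ) 1, ψ l (t:ℂ) = ψ i (t:ℂ)) then (g l (ψ l (x:ℂ))).re else 0 with hGdef
  have hglre : ∀ l, ∀ x ∈ Icc (0:ℝ) 1, 0 < (g l (ψ l (x:ℂ))).re := by
    intro l x hx
    refine (hgpos l (ψ l (x:ℂ)) ⟨(x:ℂ), hIO x hx, rfl⟩ ?_).2
    rw [(hφmem l x hx).2]; simp
  have hGpos : ∀ i, ∀ x ∈ Icc (0:ℝ) 1, 0 < G i x := by
    intro i x hx
    refine Finset.sum_pos' (fun l _ => ?_) ⟨i, Finset.mem_univ i, ?_⟩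
    · split
      · exact (hglre l x hx).le
      · exact le_refl 0
    · rw [if_pos (fun t _ => rfl)]
      exact hglre i x hx
  have hglcont : ∀ l, ContinuousOn (fun x : ℝ => (g l (ψ l (x:ℂ))).re) (Icc (0:ℝ) 1) := by
    intro l
    have c1 : ContinuousOn (fun x : ℝ => ψ l (x:ℂ)) (Icc (0:ℝ) 1) :=
      (hψcont l).comp Complex.continuous_ofReal.continuousOn
        (fun x hx => subset_closure (hIO x hx))
    have c2 : ContinuousOn (fun x : ℝ => g l (ψ l (x:ℂ))) (Icc (0:ℝ) 1) :=
      (hgcont l).comp c1 (fun x hx => subset_closure ⟨(x:ℂ), hIO x hx, rfl⟩)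
    exact Complex.continuous_re.comp_continuousOn c2
  have hGcont : ∀ i, ContinuousOn (G i) (Icc (0:ℝ) 1) := by
    intro i
    rw [hGdef]
    apply continuousOn_finset_sum
    intro l _
    split
    · exact hglcont l
    · exact continuousOn_const
  set Mg : ℝ := (∑ l : Fin d, M' l) * Λ with hMgdef
  have hMg0 : 0 ≤ Mg := mul_nonneg (Finset.sum_nonneg fun l _ => hM'0 l) hΛpos.le
  have hGlip : ∀ i, ∀ x ∈ Icc (0:ℝ) 1, ∀ y ∈ Icc (0:ℝ) 1,
      |G i y - G i x| ≤ Mg * |y - x| := by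
    intro i x hx y hy
    rw [hGdef]
    simp only []
    rw [← Finset.sum_sub_distrib]
    refine le_trans (Finset.abs_sum_le_sum_abs _ _) ?_
    have hterm : ∀ l : Fin d,
        |(if (∀ t ∈ Icc (0:ℝ) 1, ψ l (t:ℂ) = ψ i (t:ℂ)) then (g l (ψ l (y:ℂ))).re else 0) -
          (if (∀ t ∈ Icc (0:ℝ) 1, ψ l (t:ℂ) = ψ i (t:ℂ)) then (g l (ψ l (x:ℂ))).re else 0)|
          ≤ M' l * (Λ * |y - x|) := by
      intro l
      split
      · calc |(g l (ψ l (y:ℂ))).re - (g l (ψ l (x:ℂ))).re|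
            = |(g l (ψ l (y:ℂ)) - g l (ψ l (x:ℂ))).re| := by rw [Complex.sub_re]
          _ ≤ ‖g l (ψ l (y:ℂ)) - g l (ψ l (x:ℂ))‖ := Complex.abs_re_le_norm _
          _ ≤ M' l * (Λ * |y - x|) := by
              exact hgl_lip l x hx y hy
      · simpa using mul_nonneg (hM'0 l) (mul_nonneg hΛpos.le (abs_nonneg _))
    refine le_trans (Finset.sum_le_sum fun l _ => hterm l) ?_
    apply le_of_eq
    rw [hMgdef, mul_assoc, ← Finset.sum_mul]
  have hδGex : ∃ δG : ℝ, 0 < δG ∧ ∀ i : Fin d, ∀ x ∈ Icc (0:ℝ) 1, δG ≤ G i x := by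
    have hmin : ∀ i : Fin d, ∃ δ : ℝ, 0 < δ ∧ ∀ x ∈ Icc (0:ℝ) 1, δ ≤ G i x := by
      intro i
      obtain ⟨xi, hxi, hximin⟩ := isCompact_Icc.exists_isMinOn ⟨0, h0I⟩ (hGcont i)
      exact ⟨G i xi, hGpos i xi hxi, fun x hx => hximin hx⟩
    choose δ hδpos hδle using hmin
    refine ⟨Finset.univ.inf' Finset.univ_nonempty δ, ?_, ?_⟩
    · obtain ⟨i, _, hi⟩ := Finset.exists_mem_eq_inf' Finset.univ_nonempty δ
      rw [hi]; exact hδpos i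
    · intro i x hx
      exact le_trans (Finset.inf'_le δ (Finset.mem_univ i)) (hδle i x hx)
  obtain ⟨δG, hδG0, hδG⟩ := hδGex
  -- word maps
  have hψwnil : ∀ x : ℂ, ψw [] x = x := fun x => by simp [hψw]
  have hψwsnoc : ∀ γ i (x : ℂ), ψw (γ ++ [i]) x = ψ i (ψw γ x) := fun γ i x => by
    simp [hψw, List.foldl_append]
  have hψwcons : ∀ j γ (x : ℂ), ψw (j :: γ) x = ψw γ (ψ j x) := fun j γ x => by
    simp [hψw]
  have keyW : ∀ γ : List (Fin d),
      (∀ x ∈ Icc (0:ℝ) 1,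
        (ψw γ (x:ℂ)).re ∈ Icc (0:ℝ) 1 ∧ ψw γ (x:ℂ) = (((ψw γ (x:ℂ)).re : ℝ) : ℂ)) ∧
      (∀ x ∈ Icc (0:ℝ) 1, ∀ y ∈ Icc (0:ℝ) 1,
        |(ψw γ (y:ℂ)).re - (ψw γ (x:ℂ)).re| ≤ Λ ^ γ.length * |y - x|) ∧
      (∀ x ∈ Icc (0:ℝ) 1, ∀ y ∈ Icc (0:ℝ) 1, (ψw γ (x:ℂ)).re = (ψw γ (y:ℂ)).re → x = y) := by
    intro γ
    induction γ using List.reverseRecOn with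
    | nil =>
      refine ⟨fun x hx => by simp [hψwnil, hx], fun x hx y hy => by simp [hψwnil], ?_⟩
      intro x hx y hy h
      simpa [hψwnil] using h
    | append_singleton γ i IH =>
      obtain ⟨IH1, IH2, IH3⟩ := IH
      have hmem : ∀ x ∈ Icc (0:ℝ) 1,
          (ψw (γ ++ [i]) (x:ℂ)).re ∈ Icc (0:ℝ) 1 ∧
          ψw (γ ++ [i]) (x:ℂ) = (((ψw (γ ++ [i]) (x:ℂ)).re : ℝ) : ℂ) := by
        intro x hx
        rw [hψwsnoc, (IH1 x hx).2]
        exact hφmem i _ (IH1 x hx).1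
      refine ⟨hmem, ?_, ?_⟩
      · intro x hx y hy
        rw [hψwsnoc, hψwsnoc, (IH1 x hx).2, (IH1 y hy).2]
        calc |(ψ i (((ψw γ (y:ℂ)).re : ℝ):ℂ)).re - (ψ i (((ψw γ (x:ℂ)).re : ℝ):ℂ)).re|
            ≤ Λ * |(ψw γ (y:ℂ)).re - (ψw γ (x:ℂ)).re| :=
              hφlip i _ (IH1 x hx).1 _ (IH1 y hy).1
          _ ≤ Λ * (Λ ^ γ.length * |y - x|) :=
              mul_le_mul_of_nonneg_left (IH2 x hx y hy) hΛpos.le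
          _ = Λ ^ (γ ++ [i]).length * |y - x| := by
              rw [List.length_append, List.length_singleton, pow_succ]
              ring
      · intro x hx y hy h
        rw [hψwsnoc, hψwsnoc, (IH1 x hx).2, (IH1 y hy).2] at h
        have hxI := (IH1 x hx).1
        have hyI := (IH1 y hy).1
        have h2 : ψ i (((ψw γ (x:ℂ)).re : ℝ):ℂ) = ψ i (((ψw γ (y:ℂ)).re : ℝ):ℂ) := by
          rw [(hφmem i _ hxI).2, (hφmem i _ hyI).2, h]
        have h3 := hψinj i (hIO _ hxI) (hIO _ hyI) h2
        have h4 : (ψw γ (x:ℂ)).re = (ψw γ (y:ℂ)).re := by exact_mod_cast h3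
        exact IH3 x hx y hy h4
  -- the intervals I_γ
  have hIwim : ∀ γ, Iw γ = (fun x : ℝ => (ψw γ (x:ℂ)).re) '' Icc (0:ℝ) 1 := by
    intro γ
    rw [hIw]
    ext y
    simp only [mem_setOf_eq, mem_image]
    constructor
    · rintro ⟨x, hx, hxy⟩
      exact ⟨x, hx, by rw [hxy]; simp⟩
    · rintro ⟨x, hx, rfl⟩
      exact ⟨x, hx, ((keyW γ).1 x hx).2⟩
  have hIwsub : ∀ γ, Iw γ ⊆ Icc (0:ℝ) 1 := by
    intro γ y hy
    rw [hIwim] at hy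
    obtain ⟨x, hx, rfl⟩ := hy
    exact ((keyW γ).1 x hx).1
  have hφwcont : ∀ γ, ContinuousOn (fun x : ℝ => (ψw γ (x:ℂ)).re) (Icc (0:ℝ) 1) := by
    intro γ
    refine (LipschitzOnWith.of_dist_le_mul (K := Real.toNNReal (Λ ^ γ.length))
      fun x hx y hy => ?_).continuousOn
    rw [Real.dist_eq, Real.dist_eq, Real.coe_toNNReal _ (pow_nonneg hΛpos.le _)]
    exact (keyW γ).2.1 y hy x hx
  have hIwcpt : ∀ γ, IsCompact (Iw γ) := by
    intro γ
    rw [hIwim]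
    exact isCompact_Icc.image_of_continuousOn (hφwcont γ)
  have hIwne : ∀ γ, (Iw γ).Nonempty := by
    intro γ
    rw [hIwim]
    exact ⟨_, ⟨0, h0I, rfl⟩⟩
  have hIwmeas : ∀ γ, MeasurableSet (Iw γ) := fun γ => (hIwcpt γ).isClosed.measurableSet
  have hIwdiam : ∀ γ, ∀ p ∈ Iw γ, ∀ q ∈ Iw γ, |p - q| ≤ Λ ^ γ.length := by
    intro γ p hp q hq
    rw [hIwim] at hp hq
    obtain ⟨x, hx, rfl⟩ := hp
    obtain ⟨y, hy, rfl⟩ := hq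
    have h1 : |(ψw γ (x:ℂ)).re - (ψw γ (y:ℂ)).re| ≤ Λ ^ γ.length * |x - y| :=
      (keyW γ).2.1 y hy x hx
    have h2 : |x - y| ≤ 1 := by
      rw [abs_le]
      constructor <;> [linarith [hx.1, hy.2]; linarith [hx.2, hy.1]]
    calc |(ψw γ (x:ℂ)).re - (ψw γ (y:ℂ)).re| ≤ Λ ^ γ.length * |x - y| := h1
      _ ≤ Λ ^ γ.length * 1 := mul_le_mul_of_nonneg_left h2 (pow_nonneg hΛpos.le _)
      _ = Λ ^ γ.length := mul_one _
  have hIwpos : ∀ γ, 0 < (μt (Iw γ)).toReal := by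
    intro γ
    set a : ℝ := (ψw γ ((0:ℝ):ℂ)).re with hadef
    set b : ℝ := (ψw γ ((1:ℝ):ℂ)).re with hbdef
    have hab : a ≠ b := by
      intro h
      exact zero_ne_one ((keyW γ).2.2 0 h0I 1 h1I h)
    have haI : a ∈ Iw γ := by rw [hIwim]; exact ⟨0, h0I, rfl⟩
    have hbI : b ∈ Iw γ := by rw [hIwim]; exact ⟨1, h1I, rfl⟩
    have hpre : IsPreconnected (Iw γ) := by
      rw [hIwim]
      exact isPreconnected_Icc.image _ (hφwcont γ)
    have hminmem : min a b ∈ Iw γ := by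
      rcases le_total a b with h | h
      · rwa [min_eq_left h]
      · rwa [min_eq_right h]
    have hmaxmem : max a b ∈ Iw γ := by
      rcases le_total a b with h | h
      · rwa [max_eq_right h]
      · rwa [max_eq_left h]
    have hcc : Icc (min a b) (max a b) ⊆ Iw γ := hpre.Icc_subset hminmem hmaxmem
    have hlt : min a b < max a b := min_lt_max.2 hab
    have hmid : (min a b + max a b) / 2 ∈ Ioo (min a b) (max a b) := by
      constructor <;> [linarith; linarith]
    have hIoosub : Ioo (min a b) (max a b) ⊆ Iw γ := fun t ht => hcc (Ioo_subset_Icc_self ht)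
    have hpos : 0 < μt (Ioo (min a b) (max a b)) := by
      apply hμtfull _ isOpen_Ioo
      exact ⟨_, hmid, hIwsub γ (hIoosub hmid)⟩
    have h2 : 0 < μt (Iw γ) := lt_of_lt_of_le hpos (measure_mono hIoosub)
    exact ENNReal.toReal_pos h2.ne' (measure_ne_top μt _)
  have hIwsnoc : ∀ γ i, Iw (γ ++ [i]) = (fun y : ℝ => (ψ i (y:ℂ)).re) '' Iw γ := by
    intro γ i
    rw [hIwim γ, hIwim (γ ++ [i]), ← image_comp]
    apply image_congr
    intro x hx
    simp only [Function.comp_apply]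
    rw [hψwsnoc, ((keyW γ).1 x hx).2]
    simp
  have hIwcons : ∀ j γ, Iw (j :: γ) ⊆ Iw γ := by
    intro j γ y hy
    rw [hIwim] at hy
    obtain ⟨x, hx, rfl⟩ := hy
    rw [hIwim]
    have hh : (ψw (j :: γ) ((x:ℝ):ℂ)).re = (ψw γ ((((ψ j ((x:ℝ):ℂ)).re : ℝ)):ℂ)).re := by
      rw [hψwcons, (hφmem j x hx).2]
      simp
    exact ⟨(ψ j ((x:ℝ):ℂ)).re, (hφmem j x hx).1, hh.symm⟩
  -- integration toolkit
  have hIccMeas : MeasurableSet (Icc (0:ℝ) 1) := measurableSet_Icc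
  have hInt : ∀ (w : ℝ → ℝ) (A : Set ℝ), ContinuousOn w A → IsCompact A → IntegrableOn w A μt :=
    fun w A hw hA => hw.integrableOn_compact hA
  choose B hB using fun l : Fin d => isCompact_Icc.exists_bound_of_continuousOn (hglcont l)
  have hB0 : ∀ l, 0 ≤ B l := fun l => le_trans (norm_nonneg _) (hB l 0 h0I)
  -- the conformal property applied to indicators of closed sets
  have keyE : ∀ J : Set ℝ, IsClosed J → J.Nonempty →
      (∑ l : Fin d, ∫ x in Icc (0:ℝ) 1,
        (g l (ψ l (x:ℂ))).re * (J.indicator (fun _ => (1:ℝ)) ((ψ l (x:ℂ)).re)) ∂μt)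
        = α * (μt (J ∩ Icc (0:ℝ) 1)).toReal := by
    intro J hJcl hJne
    set q : ℕ → ℝ → ℝ := fun n y => max 0 (1 - (n:ℝ) * Metric.infDist y J) with hqdef
    have hqcont : ∀ n, Continuous (q n) := fun n =>
      continuous_const.max (continuous_const.sub
        (continuous_const.mul (Metric.continuous_infDist_pt J)))
    have hq0 : ∀ n y, 0 ≤ q n y := fun n y => le_max_left _ _
    have hq1 : ∀ n y, q n y ≤ 1 := by
      intro n y
      apply max_le (by norm_num)
      have : 0 ≤ (n:ℝ) * Metric.infDist y J :=
        mul_nonneg (Nat.cast_nonneg n) Metric.infDist_nonneg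
      linarith
    have hqlim : ∀ y, Tendsto (fun n => q n y) atTop
        (𝓝 (J.indicator (fun _ => (1:ℝ)) y)) := by
      intro y
      by_cases hy : y ∈ J
      · rw [indicator_of_mem hy]
        have : ∀ n : ℕ, q n y = 1 := by
          intro n
          rw [hqdef]
          simp [Metric.infDist_zero_of_mem hy]
        rw [funext this]
        exact tendsto_const_nhds
      · rw [indicator_of_notMem hy]
        have hpos : 0 < Metric.infDist y J := (hJcl.notMem_iff_infDist_pos hJne).1 hy
        apply tendsto_const_nhds.congr'
        filter_upwards [eventually_ge_atTop ⌈1 / Metric.infDist y J⌉₊] with n hn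
        have h1 : 1 / Metric.infDist y J ≤ (n:ℝ) :=
          le_trans (Nat.le_ceil _) (Nat.cast_le.2 hn)
        have h2 : 1 ≤ (n:ℝ) * Metric.infDist y J := by
          rw [div_le_iff₀ hpos] at h1; linarith
        rw [hqdef]
        simp only []
        rw [max_eq_left (by linarith)]
    have hlimL : ∀ l : Fin d, Tendsto
        (fun n => ∫ x in Icc (0:ℝ) 1, (g l (ψ l (x:ℂ))).re * q n ((ψ l (x:ℂ)).re) ∂μt) atTop
        (𝓝 (∫ x in Icc (0:ℝ) 1,
          (g l (ψ l (x:ℂ))).re * (J.indicator (fun _ => (1:ℝ)) ((ψ l (x:ℂ)).re)) ∂μt)) := by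
      intro l
      apply MeasureTheory.tendsto_integral_of_dominated_convergence (fun _ => B l)
      · intro n
        exact (((hglcont l).mul ((hqcont n).comp_continuousOn (hφcont l))).aestronglyMeasurable
          hIccMeas)
      · exact integrable_const _
      · intro n
        refine (ae_restrict_iff' hIccMeas).2 (ae_of_all _ fun x hx => ?_)
        rw [Real.norm_eq_abs, abs_mul]
        calc |(g l (ψ l (x:ℂ))).re| * |q n ((ψ l (x:ℂ)).re)|
            ≤ B l * 1 := by
              apply mul_le_mul ?_ ?_ (abs_nonneg _) (hB0 l)
              · rw [← Real.norm_eq_abs]; exact hB l x hx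
              · rw [abs_of_nonneg (hq0 n _)]; exact hq1 n _
          _ = B l := mul_one _
      · exact ae_of_all _ fun x => (hqlim _).const_mul _
    have hindI : ∫ x in Icc (0:ℝ) 1, (J.indicator (fun _ => (1:ℝ)) x) ∂μt
        = (μt (J ∩ Icc (0:ℝ) 1)).toReal := by
      rw [setIntegral_indicator hJcl.measurableSet, setIntegral_const, inter_comm]
      simp
      rfl
    have hlimR : Tendsto (fun n => α * ∫ x in Icc (0:ℝ) 1, q n x ∂μt) atTop
        (𝓝 (α * (μt (J ∩ Icc (0:ℝ) 1)).toReal)) := by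
      rw [← hindI]
      apply Tendsto.const_mul
      apply MeasureTheory.tendsto_integral_of_dominated_convergence (fun _ => (1:ℝ))
      · exact fun n => ((hqcont n).continuousOn.aestronglyMeasurable hIccMeas)
      · exact integrable_const _
      · intro n
        refine ae_of_all _ fun x => ?_
        rw [Real.norm_eq_abs, abs_of_nonneg (hq0 n _)]
        exact hq1 n _
      · exact ae_of_all _ fun x => hqlim x
    have hsum_n : (fun n => ∑ l : Fin d,
        ∫ x in Icc (0:ℝ) 1, (g l (ψ l (x:ℂ))).re * q n ((ψ l (x:ℂ)).re) ∂μt)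
        = fun n => α * ∫ x in Icc (0:ℝ) 1, q n x ∂μt := by
      funext n
      rw [← integral_finset_sum]
      · exact hconf (q n) (hqcont n).continuousOn
      · intro l _
        exact hInt _ _ ((hglcont l).mul ((hqcont n).comp_continuousOn (hφcont l))) isCompact_Icc
    have h1 := tendsto_finset_sum Finset.univ (fun l (_ : l ∈ Finset.univ) => hlimL l)
    rw [hsum_n] at h1
    exact tendsto_nhds_unique h1 hlimR
  -- the key recursion for measures of the intervals
  have keyF : ∀ (γ : List (Fin d)) (i : Fin d),
      α * (μt (Iw (γ ++ [i]))).toReal = ∫ x in Iw γ, G i x ∂μt := by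
    intro γ i
    have hJcl : IsClosed (Iw (γ ++ [i])) := (hIwcpt _).isClosed
    have hJI : Iw (γ ++ [i]) ∩ Icc (0:ℝ) 1 = Iw (γ ++ [i]) :=
      inter_eq_self_of_subset_left (hIwsub _)
    have hE := keyE (Iw (γ ++ [i])) hJcl (hIwne _)
    rw [hJI] at hE
    rw [← hE]
    have hiff : ∀ l : Fin d, ∀ x ∈ Icc (0:ℝ) 1,
        ((ψ l ((x:ℝ):ℂ)).re ∈ Iw (γ ++ [i]) ↔
          (x ∈ Iw γ ∧ ψ l ((x:ℝ):ℂ) = ψ i ((x:ℝ):ℂ))) := by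
      intro l x hx
      constructor
      · intro hmem
        rw [hIwsnoc] at hmem
        obtain ⟨y, hyIw, hyx⟩ := hmem
        have hyI : y ∈ Icc (0:ℝ) 1 := hIwsub γ hyIw
        have h1 : f ((ψ l ((x:ℝ):ℂ)).re) = x := hψsection l x hx
        have h2 : f ((ψ i ((y:ℝ):ℂ)).re) = y := hψsection i y hyI
        have hyx' : (ψ i ((y:ℝ):ℂ)).re = (ψ l ((x:ℝ):ℂ)).re := hyx
        have hxy : x = y := by
          rw [hyx'] at h2
          rw [← h2]
          exact h1.symm
        subst hxy
        refine ⟨hyIw, ?_⟩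
        calc ψ l ((x:ℝ):ℂ) = (((ψ l ((x:ℝ):ℂ)).re : ℝ) : ℂ) := (hφmem l x hx).2
          _ = (((ψ i ((x:ℝ):ℂ)).re : ℝ) : ℂ) := congrArg Complex.ofReal hyx'.symm
          _ = ψ i ((x:ℝ):ℂ) := ((hφmem i x hx).2).symm
      · rintro ⟨hxIw, heq⟩
        rw [hIwsnoc]
        exact ⟨x, hxIw, congrArg Complex.re heq.symm⟩
    have hterm : ∀ l : Fin d,
        (∫ x in Icc (0:ℝ) 1, (g l (ψ l (x:ℂ))).re *
          ((Iw (γ ++ [i])).indicator (fun _ => (1:ℝ)) ((ψ l (x:ℂ)).re)) ∂μt)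
        = ∫ x in Iw γ,
            (if (∀ t ∈ Icc (0:ℝ) 1, ψ l (t:ℂ) = ψ i (t:ℂ))
              then (g l (ψ l (x:ℂ))).re else 0) ∂μt := by
      intro l
      by_cases hP : ∀ t ∈ Icc (0:ℝ) 1, ψ l (t:ℂ) = ψ i (t:ℂ)
      · have hpt : ∀ x ∈ Icc (0:ℝ) 1,
            (g l (ψ l (x:ℂ))).re *
              ((Iw (γ ++ [i])).indicator (fun _ => (1:ℝ)) ((ψ l (x:ℂ)).re))
            = (Iw γ).indicator (fun t : ℝ => (g l (ψ l (t:ℂ))).re) x := by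
          intro x hx
          by_cases hxIw : x ∈ Iw γ
          · rw [indicator_of_mem hxIw,
              indicator_of_mem ((hiff l x hx).2 ⟨hxIw, hP x hx⟩), mul_one]
          · rw [indicator_of_notMem hxIw, indicator_of_notMem, mul_zero]
            intro hc
            exact hxIw ((hiff l x hx).1 hc).1
        rw [setIntegral_congr_fun hIccMeas hpt,
          setIntegral_indicator (hIwmeas γ),
          inter_eq_self_of_subset_right (hIwsub γ)]
        apply setIntegral_congr_fun (hIwmeas γ)
        intro x _
        exact (if_pos hP).symm
      · have hfin := hdich l i hP
        have hz : ∀ᵐ (x : ℝ) ∂μt.restrict (Icc (0:ℝ) 1),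
            (g l (ψ l (x:ℂ))).re *
              ((Iw (γ ++ [i])).indicator (fun _ => (1:ℝ)) ((ψ l (x:ℂ)).re)) = 0 := by
          refine (ae_restrict_iff' hIccMeas).2 ?_
          rw [ae_iff]
          apply measure_mono_null ?_ (hfin.measure_zero μt)
          intro x hx
          simp only [mem_setOf_eq] at hx ⊢
          push_neg at hx
          obtain ⟨hxI, hne⟩ := hx
          by_cases hmem : (ψ l ((x:ℝ):ℂ)).re ∈ Iw (γ ++ [i])
          · exact ⟨hxI, ((hiff l x hxI).1 hmem).2⟩
          · exact absurd (by rw [indicator_of_notMem hmem, mul_zero]) hne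
        calc (∫ x in Icc (0:ℝ) 1, (g l (ψ l (x:ℂ))).re *
              ((Iw (γ ++ [i])).indicator (fun _ => (1:ℝ)) ((ψ l (x:ℂ)).re)) ∂μt)
            = 0 := integral_eq_zero_of_ae hz
          _ = ∫ _x in Iw γ, (0:ℝ) ∂μt := by simp
          _ = _ := setIntegral_congr_fun (hIwmeas γ) (fun x _ => (if_neg hP).symm)
    calc (∑ l : Fin d, ∫ x in Icc (0:ℝ) 1,
          (g l (ψ l (x:ℂ))).re *
            ((Iw (γ ++ [i])).indicator (fun _ => (1:ℝ)) ((ψ l (x:ℂ)).re)) ∂μt)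
        = ∑ l : Fin d, ∫ x in Iw γ,
            (if (∀ t ∈ Icc (0:ℝ) 1, ψ l (t:ℂ) = ψ i (t:ℂ))
              then (g l (ψ l (x:ℂ))).re else 0) ∂μt :=
          Finset.sum_congr rfl fun l _ => hterm l
      _ = ∫ x in Iw γ, (∑ l : Fin d,
            if (∀ t ∈ Icc (0:ℝ) 1, ψ l (t:ℂ) = ψ i (t:ℂ))
              then (g l (ψ l (x:ℂ))).re else 0) ∂μt := by
          refine (integral_finset_sum _ fun l _ => ?_).symm
          by_cases hP : ∀ t ∈ Icc (0:ℝ) 1, ψ l (t:ℂ) = ψ i (t:ℂ)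
          · have he : (fun x : ℝ => if (∀ t ∈ Icc (0:ℝ) 1, ψ l (t:ℂ) = ψ i (t:ℂ))
                then (g l (ψ l (x:ℂ))).re else 0) = fun x : ℝ => (g l (ψ l (x:ℂ))).re := by
              funext x; exact if_pos hP
            rw [he]
            exact hInt _ _ ((hglcont l).mono (hIwsub γ)) (hIwcpt γ)
          · have he : (fun x : ℝ => if (∀ t ∈ Icc (0:ℝ) 1, ψ l (t:ℂ) = ψ i (t:ℂ))
                then (g l (ψ l (x:ℂ))).re else 0) = fun _ : ℝ => (0:ℝ) := by
              funext x; exact if_neg hP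
            rw [he]
            exact integrable_zero _ _ _
      _ = ∫ x in Iw γ, G i x ∂μt := rfl
  intro ω
  set Γ : ℕ → List (Fin d) := fun k => List.ofFn fun j : Fin k => ω j with hΓdef
  have hΓlen : ∀ k, (Γ k).length = k := fun k => by simp [hΓdef]
  have hΓsucc : ∀ k, Γ (k + 1) = Γ k ++ [ω k] := by
    intro k
    rw [hΓdef]
    simp only []
    rw [List.ofFn_succ']
    simp [List.concat_eq_append]
  have hΓne : ∀ k, Γ (k + 1) ≠ [] := by
    intro k h
    have h2 := congrArg List.length h
    rw [hΓlen] at h2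
    simpa using h2
  have hΓtail : ∀ k, (Γ (k + 2)).tail = (Γ (k + 1)).tail ++ [ω (k + 1)] := by
    intro k
    rw [hΓsucc (k + 1)]
    obtain ⟨b, l, hbl⟩ := List.exists_cons_of_ne_nil (hΓne k)
    rw [hbl]
    simp
  have hΓtail_len : ∀ k, ((Γ (k + 1)).tail).length = k := by
    intro k
    rw [List.length_tail, hΓlen]
    omega
  have hΓsub : ∀ k, Iw (Γ (k + 1)) ⊆ Iw ((Γ (k + 1)).tail) := by
    intro k
    have h := List.cons_head_tail (hΓne k)
    have h2 := hIwcons ((Γ (k + 1)).head (hΓne k)) ((Γ (k + 1)).tail)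
    rwa [h] at h2
  set m : List (Fin d) → ℝ := fun γ => (μt (Iw γ)).toReal with hmdef
  have hm : ∀ γ, 0 < m γ := hIwpos
  -- normalized averages over the intervals
  have havg_ge : ∀ (γ : List (Fin d)) (w : ℝ → ℝ) (δ : ℝ), ContinuousOn w (Icc (0:ℝ) 1) →
      (∀ x ∈ Icc (0:ℝ) 1, δ ≤ w x) → δ ≤ (∫ x in Iw γ, w x ∂μt) / m γ := by
    intro γ w δ hw hδ
    rw [le_div_iff₀ (hm γ)]
    have h1 : δ * m γ = ∫ _x in Iw γ, δ ∂μt := by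
      rw [setIntegral_const, smul_eq_mul, hmdef, Measure.real]
      ring
    rw [h1]
    exact setIntegral_mono_on (integrableOn_const (measure_lt_top _ _).ne)
      (hInt _ _ (hw.mono (hIwsub γ)) (hIwcpt γ)) (hIwmeas γ)
      (fun x hx => hδ x (hIwsub γ hx))
  have havg_close : ∀ (γ : List (Fin d)) (w : ℝ → ℝ) (z : ℝ) (ε : ℝ),
      ContinuousOn w (Icc (0:ℝ) 1) →
      (∀ x ∈ Iw γ, |w x - w z| ≤ ε) → |(∫ x in Iw γ, w x ∂μt) / m γ - w z| ≤ ε := by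
    intro γ w z ε hw hosc
    have hint : IntegrableOn w (Iw γ) μt := hInt _ _ (hw.mono (hIwsub γ)) (hIwcpt γ)
    have h1 : (∫ x in Iw γ, w x ∂μt) / m γ - w z
        = (∫ x in Iw γ, (w x - w z) ∂μt) / m γ := by
      rw [integral_sub hint (integrableOn_const (measure_lt_top _ _).ne),
        setIntegral_const, smul_eq_mul, hmdef, Measure.real]
      field_simp [(hIwpos γ).ne']
    have h2 : ‖∫ x in Iw γ, (w x - w z) ∂μt‖ ≤ ε * m γ := by
      rw [hmdef]
      exact norm_setIntegral_le_of_norm_le_const (measure_lt_top _ _)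
        (fun x hx => by rw [Real.norm_eq_abs]; exact hosc x hx)
    rw [h1, abs_div, abs_of_pos (hm γ), div_le_iff₀ (hm γ)]
    rw [Real.norm_eq_abs] at h2
    exact h2
  set R : List (Fin d) → Fin d → ℝ := fun γ i => (∫ x in Iw γ, G i x ∂μt) / m γ with hRdef
  have hR_ge : ∀ γ i, δG ≤ R γ i := fun γ i => havg_ge γ (G i) δG (hGcont i) (hδG i)
  have hR_pos : ∀ γ i, 0 < R γ i := fun γ i => lt_of_lt_of_le hδG0 (hR_ge γ i)
  have hkeyF' : ∀ γ i, m (γ ++ [i]) = R γ i * m γ / α := by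
    intro γ i
    have h := keyF γ i
    rw [hRdef, hmdef]
    simp only []
    rw [div_mul_cancel₀ _ (by rw [hmdef] at hm; exact (hm γ).ne')]
    rw [eq_div_iff hα.ne', mul_comm]
    exact h
  set L : ℕ → ℝ := fun k => Real.log (m (Γ k)) - Real.log (m ((Γ k).tail)) with hLdef
  have hLstep : ∀ k, L (k + 2) - L (k + 1)
      = Real.log (R (Γ (k + 1)) (ω (k + 1))) - Real.log (R ((Γ (k + 1)).tail) (ω (k + 1))) := by
    intro k
    rw [hLdef]
    simp only []
    rw [hΓtail k, hΓsucc (k + 1),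
      hkeyF' (Γ (k + 1)) (ω (k + 1)), hkeyF' ((Γ (k + 1)).tail) (ω (k + 1)),
      Real.log_div (mul_ne_zero (hR_pos _ _).ne' (hm _).ne') hα.ne',
      Real.log_div (mul_ne_zero (hR_pos _ _).ne' (hm _).ne') hα.ne',
      Real.log_mul (hR_pos _ _).ne' (hm _).ne',
      Real.log_mul (hR_pos _ _).ne' (hm _).ne']
    ring
  have hosc : ∀ k (i : Fin d), ∀ x ∈ Iw ((Γ (k + 1)).tail), ∀ z ∈ Iw ((Γ (k + 1)).tail),
      |G i x - G i z| ≤ Mg * Λ ^ k := by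
    intro k i x hx z hz
    calc |G i x - G i z| ≤ Mg * |x - z| := hGlip i z (hIwsub _ hz) x (hIwsub _ hx)
      _ ≤ Mg * Λ ^ k := by
        apply mul_le_mul_of_nonneg_left ?_ hMg0
        have h := hIwdiam _ x hx z hz
        rwa [hΓtail_len k] at h
  have hLdist : ∀ k, dist (L (k + 1)) (L (k + 2)) ≤ 2 * Mg / δG * Λ ^ k := by
    intro k
    obtain ⟨z, hz⟩ := hIwne (Γ (k + 1))
    have hz' : z ∈ Iw ((Γ (k + 1)).tail) := hΓsub k hz
    have h1 : |R (Γ (k + 1)) (ω (k + 1)) - G (ω (k + 1)) z| ≤ Mg * Λ ^ k :=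
      havg_close _ _ _ _ (hGcont _) (fun x hx => hosc k _ x (hΓsub k hx) z hz')
    have h2 : |R ((Γ (k + 1)).tail) (ω (k + 1)) - G (ω (k + 1)) z| ≤ Mg * Λ ^ k :=
      havg_close _ _ _ _ (hGcont _) (fun x hx => hosc k _ x hx z hz')
    have h3 : |R (Γ (k + 1)) (ω (k + 1)) - R ((Γ (k + 1)).tail) (ω (k + 1))|
        ≤ 2 * (Mg * Λ ^ k) := by
      calc |R (Γ (k + 1)) (ω (k + 1)) - R ((Γ (k + 1)).tail) (ω (k + 1))|
          ≤ |R (Γ (k + 1)) (ω (k + 1)) - G (ω (k + 1)) z|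
            + |G (ω (k + 1)) z - R ((Γ (k + 1)).tail) (ω (k + 1))| := abs_sub_le _ _ _
        _ ≤ Mg * Λ ^ k + Mg * Λ ^ k := add_le_add h1 (by rw [abs_sub_comm]; exact h2)
        _ = 2 * (Mg * Λ ^ k) := by ring
    rw [Real.dist_eq, abs_sub_comm, hLstep k]
    calc |Real.log (R (Γ (k + 1)) (ω (k + 1))) - Real.log (R ((Γ (k + 1)).tail) (ω (k + 1)))|
        ≤ |R (Γ (k + 1)) (ω (k + 1)) - R ((Γ (k + 1)).tail) (ω (k + 1))| / δG :=
          loglip hδG0 (hR_ge _ _) (hR_ge _ _)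
      _ ≤ 2 * (Mg * Λ ^ k) / δG := by
          exact (div_le_div_iff_of_pos_right hδG0).2 h3
      _ = 2 * Mg / δG * Λ ^ k := by ring
  have hCauchy : CauchySeq (fun n => L (n + 1)) :=
    cauchySeq_of_le_geometric Λ (2 * Mg / δG) hΛlt1 hLdist
  obtain ⟨ℓ, hℓ⟩ := cauchySeq_tendsto_of_complete hCauchy
  have hLtend : Tendsto L atTop (𝓝 ℓ) := (tendsto_add_atTop_iff_nat 1).1 hℓ
  have haexp : ∀ k, m (Γ k) / m ((Γ k).tail) = Real.exp (L k) := by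
    intro k
    rw [hLdef]
    simp only []
    rw [Real.exp_sub, Real.exp_log (hm _), Real.exp_log (hm _)]
  have hpart1 : Tendsto (fun k => m (Γ k) / m ((Γ k).tail)) atTop (𝓝 (Real.exp ℓ)) := by
    have h := (Real.continuous_exp.tendsto ℓ).comp hLtend
    exact h.congr (fun k => (haexp k).symm)
  -- second part: the measure μ on the shift space
  obtain ⟨Cv, rv, hrv, hHold⟩ := hvHolder
  have hrvR : (0:ℝ) < (rv:ℝ) := by exact_mod_cast hrv
  have hvcont : Continuous v := hHold.continuous hrv
  obtain ⟨xv, hxvI, hxvmin⟩ :=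
    isCompact_Icc.exists_isMinOn (⟨0, h0I⟩ : (Icc (0:ℝ) 1).Nonempty) hvcont.continuousOn
  have hδv0 : 0 < v xv := hvpos xv hxvI
  have hδvle : ∀ x ∈ Icc (0:ℝ) 1, v xv ≤ v x := fun x hx => hxvmin hx
  set V : List (Fin d) → ℝ := fun γ => ∫ x in Iw γ, v x ∂μt with hVdef
  have hVavg_ge : ∀ γ, v xv ≤ V γ / m γ := fun γ => havg_ge γ v (v xv) hvcont.continuousOn hδvle
  have hVpos : ∀ γ, 0 < V γ := by
    intro γ
    have h3 : v xv * m γ ≤ V γ := (le_div_iff₀ (hm γ)).1 (hVavg_ge γ)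
    exact lt_of_lt_of_le (mul_pos hδv0 (hm γ)) h3
  have hcyl' : ∀ (n : ℕ) (γ : List (Fin d)), γ.length = n →
      μ {ω' : ℕ → Fin d | (List.ofFn fun j : Fin n => ω' j) = γ}
        = ENNReal.ofReal (∫ t in Iw γ, v t ∂μt) := by
    intro n γ h
    subst h
    exact hμcyl γ
  have hVpos' : ∀ γ, 0 < ∫ x in Iw γ, v x ∂μt := by
    intro γ
    have h := hVpos γ
    rwa [hVdef] at h
  have hbV : ∀ k : ℕ,
      (μ {ω' : ℕ → Fin d |
          (List.ofFn fun j : Fin k => ω' j) = Γ k}).toReal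
        / (μ {ω' : ℕ → Fin d |
          (List.ofFn fun j : Fin (Γ k).tail.length => ω' j)
            = (Γ k).tail}).toReal
      = V (Γ k) / V ((Γ k).tail) := by
    intro k
    rw [hcyl' k (Γ k) (hΓlen k), hμcyl ((Γ k).tail),
      ENNReal.toReal_ofReal (hVpos' (Γ k)).le, ENNReal.toReal_ofReal (hVpos' ((Γ k).tail)).le]
  have hbt : ∀ k, V (Γ k) / V ((Γ k).tail)
      = (m (Γ k) / m ((Γ k).tail)) * ((V (Γ k) / m (Γ k)) / (V ((Γ k).tail) / m ((Γ k).tail))) := by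
    intro k
    have h1 := (hm (Γ k)).ne'
    have h2 := (hm ((Γ k).tail)).ne'
    have h3 := (hVpos ((Γ k).tail)).ne'
    field_simp
  have hvosc : ∀ k, ∀ x ∈ Iw ((Γ (k + 1)).tail), ∀ z ∈ Iw ((Γ (k + 1)).tail),
      |v x - v z| ≤ (Cv:ℝ) * ((Λ:ℝ) ^ (rv:ℝ)) ^ k := by
    intro k x hx z hz
    have hd := hIwdiam _ x hx z hz
    rw [hΓtail_len k] at hd
    calc |v x - v z| = dist (v x) (v z) := (Real.dist_eq _ _).symm
      _ ≤ (Cv:ℝ) * dist x z ^ (rv:ℝ) := hHold.dist_le x z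
      _ ≤ (Cv:ℝ) * ((Λ ^ k) ^ (rv:ℝ)) := by
          apply mul_le_mul_of_nonneg_left ?_ Cv.coe_nonneg
          apply Real.rpow_le_rpow dist_nonneg ?_ hrvR.le
          rwa [Real.dist_eq]
      _ = (Cv:ℝ) * ((Λ:ℝ) ^ (rv:ℝ)) ^ k := by
          rw [← Real.rpow_natCast Λ k, ← Real.rpow_mul hΛpos.le, mul_comm (k:ℝ),
            Real.rpow_mul hΛpos.le, Real.rpow_natCast]
  have ht1 : Tendsto (fun k => (V (Γ k) / m (Γ k)) / (V ((Γ k).tail) / m ((Γ k).tail)))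
      atTop (𝓝 1) := by
    have hbound : ∀ k : ℕ,
        |(V (Γ (k + 1)) / m (Γ (k + 1))) / (V ((Γ (k + 1)).tail) / m ((Γ (k + 1)).tail)) - 1|
          ≤ 2 * (Cv:ℝ) / v xv * ((Λ:ℝ) ^ (rv:ℝ)) ^ k := by
      intro k
      obtain ⟨z, hz⟩ := hIwne (Γ (k + 1))
      have hz' : z ∈ Iw ((Γ (k + 1)).tail) := hΓsub k hz
      have h1 : |V (Γ (k + 1)) / m (Γ (k + 1)) - v z| ≤ (Cv:ℝ) * ((Λ:ℝ) ^ (rv:ℝ)) ^ k :=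
        havg_close _ v z _ hvcont.continuousOn (fun x hx => hvosc k x (hΓsub k hx) z hz')
      have h2 : |V ((Γ (k + 1)).tail) / m ((Γ (k + 1)).tail) - v z|
          ≤ (Cv:ℝ) * ((Λ:ℝ) ^ (rv:ℝ)) ^ k :=
        havg_close _ v z _ hvcont.continuousOn (fun x hx => hvosc k x hx z hz')
      have hB := hVavg_ge ((Γ (k + 1)).tail)
      have hq0 : 0 < V ((Γ (k + 1)).tail) / m ((Γ (k + 1)).tail) := lt_of_lt_of_le hδv0 hB
      have hdiff : |V (Γ (k + 1)) / m (Γ (k + 1)) - V ((Γ (k + 1)).tail) / m ((Γ (k + 1)).tail)|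
          ≤ 2 * ((Cv:ℝ) * ((Λ:ℝ) ^ (rv:ℝ)) ^ k) := by
        calc |V (Γ (k + 1)) / m (Γ (k + 1)) - V ((Γ (k + 1)).tail) / m ((Γ (k + 1)).tail)|
            ≤ |V (Γ (k + 1)) / m (Γ (k + 1)) - v z|
              + |v z - V ((Γ (k + 1)).tail) / m ((Γ (k + 1)).tail)| := abs_sub_le _ _ _
          _ ≤ (Cv:ℝ) * ((Λ:ℝ) ^ (rv:ℝ)) ^ k + (Cv:ℝ) * ((Λ:ℝ) ^ (rv:ℝ)) ^ k :=
              add_le_add h1 (by rw [abs_sub_comm]; exact h2)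
          _ = 2 * ((Cv:ℝ) * ((Λ:ℝ) ^ (rv:ℝ)) ^ k) := by ring
      have heq : (V (Γ (k + 1)) / m (Γ (k + 1))) / (V ((Γ (k + 1)).tail) / m ((Γ (k + 1)).tail)) - 1
          = (V (Γ (k + 1)) / m (Γ (k + 1)) - V ((Γ (k + 1)).tail) / m ((Γ (k + 1)).tail))
            / (V ((Γ (k + 1)).tail) / m ((Γ (k + 1)).tail)) := by
        have e1 := (hm (Γ (k + 1))).ne'
        have e2 := (hm ((Γ (k + 1)).tail)).ne'
        have e3 := (hVpos ((Γ (k + 1)).tail)).ne'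
        field_simp
      rw [heq, abs_div, abs_of_pos hq0]
      calc |V (Γ (k + 1)) / m (Γ (k + 1)) - V ((Γ (k + 1)).tail) / m ((Γ (k + 1)).tail)|
            / (V ((Γ (k + 1)).tail) / m ((Γ (k + 1)).tail))
          ≤ |V (Γ (k + 1)) / m (Γ (k + 1)) - V ((Γ (k + 1)).tail) / m ((Γ (k + 1)).tail)| / v xv :=
            div_le_div_of_nonneg_left (abs_nonneg _) hδv0 hB
        _ ≤ 2 * ((Cv:ℝ) * ((Λ:ℝ) ^ (rv:ℝ)) ^ k) / v xv := by
            exact (div_le_div_iff_of_pos_right hδv0).2 hdiff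
        _ = 2 * (Cv:ℝ) / v xv * ((Λ:ℝ) ^ (rv:ℝ)) ^ k := by ring
    have hw0 : (0:ℝ) ≤ (Λ:ℝ) ^ (rv:ℝ) := Real.rpow_nonneg hΛpos.le _
    have hw1 : (Λ:ℝ) ^ (rv:ℝ) < 1 := Real.rpow_lt_one hΛpos.le hΛlt1 hrvR
    have hgeo : Tendsto (fun k : ℕ => 2 * (Cv:ℝ) / v xv * ((Λ:ℝ) ^ (rv:ℝ)) ^ k) atTop (𝓝 0) := by
      have h := tendsto_pow_atTop_nhds_zero_of_lt_one hw0 hw1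
      simpa using h.const_mul (2 * (Cv:ℝ) / v xv)
    have hzz : Tendsto (fun k =>
        (V (Γ (k + 1)) / m (Γ (k + 1))) / (V ((Γ (k + 1)).tail) / m ((Γ (k + 1)).tail)) - 1)
        atTop (𝓝 0) :=
      squeeze_zero_norm (fun k => by rw [Real.norm_eq_abs]; exact hbound k) hgeo
    have hz2 : Tendsto (fun k =>
        (V (Γ (k + 1)) / m (Γ (k + 1))) / (V ((Γ (k + 1)).tail) / m ((Γ (k + 1)).tail)))
        atTop (𝓝 1) := by
      have h := hzz.add_const 1
      simpa using h
    exact (tendsto_add_atTop_iff_nat 1).1 hz2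
  have hpart2 : Tendsto (fun k => V (Γ k) / V ((Γ k).tail)) atTop (𝓝 (Real.exp ℓ)) := by
    have h := hpart1.mul ht1
    rw [mul_one] at h
    exact h.congr (fun k => (hbt k).symm)
  exact ⟨Real.exp ℓ, hpart1, hpart2.congr (fun k => (hbV k).symm)⟩
end

section
/- The function H_∞ restricted to Σ × I is an involution kernel for A = log g: there exists a function A* : Σ → ℝ such that for every w = (w_0, w_1, …) ∈ Σ and every x ∈ I, A*(w) = log g(ψ_{w_0}(x)) + H_∞(σ(w), ψ_{w_0}(x)) − H_∞(w, x); in particular the right-hand side depends only on w. -/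
open MeasureTheory Set Filter Topology
open scoped NNReal ENNReal

/-- Proposition 5.2 of the paper.
The function `H_∞` restricted to `Σ × I` is an involution kernel for `A = log g`:
there is `A* : Σ → ℝ` with
`A*(w) = log g(ψ_{w₀}(x)) + H_∞(σ(w), ψ_{w₀}(x)) − H_∞(w, x)` for every `w ∈ Σ`, `x ∈ I`;
in particular the right-hand side depends only on `w`. -/
theorem stmt8
    -- the degree
    (d : ℕ) (hd : 1 ≤ d)
    -- the complex neighborhood O of I = [0,1]
    (O : Set ℂ) (hOopen : IsOpen O) (hObdd : Bornology.IsBounded O)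
    (hOsc : SimplyConnectedSpace O)
    (hIO : ∀ x : ℝ, x ∈ Icc (0:ℝ) 1 → (x : ℂ) ∈ O)
    -- the expanding map f and its inverse branches ψ_i, extended univalently to O
    (f : ℝ → ℝ) (ψ : Fin d → ℂ → ℂ) (lam : ℝ) (hlam : lam < 1)
    (hψdiff : ∀ i, DifferentiableOn ℂ (ψ i) O)
    (hψinj : ∀ i, InjOn (ψ i) O)
    (hψcont : ∀ i, ContinuousOn (ψ i) (closure O))
    (hψmap : ∀ i, ψ i '' (closure O) ⊆ O)
    (hψderiv : ∀ i, ∀ x ∈ O, ‖deriv (ψ i) x‖ ≤ lam)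
    (hψreal : ∀ i, ∀ x ∈ Icc (0:ℝ) 1, ∃ y ∈ Icc (0:ℝ) 1, ψ i (x : ℂ) = (y : ℂ))
    (hψsection : ∀ i, ∀ x ∈ Icc (0:ℝ) 1, f ((ψ i (x : ℂ)).re) = x)
    -- the complex analytic potential g, through its branches g_i
    (g : Fin d → ℂ → ℂ)
    (hgdiff : ∀ i, DifferentiableOn ℂ (g i) (ψ i '' O))
    (hgcont : ∀ i, ContinuousOn (g i) (closure (ψ i '' O)))
    (hgne : ∀ i, ∀ z ∈ closure (ψ i '' O), g i z ≠ 0)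
    (hgpos : ∀ i, ∀ z ∈ ψ i '' O, z.im = 0 → (g i z).im = 0 ∧ 0 < (g i z).re)
    -- the holomorphic branches r_i of log(g_i ∘ ψ_i), real on O ∩ ℝ
    (r : Fin d → ℂ → ℂ)
    (hrdiff : ∀ i, DifferentiableOn ℂ (r i) O)
    (hrexp : ∀ i, ∀ z ∈ O, g i (ψ i z) = Complex.exp (r i z))
    (hrreal : ∀ i, ∀ x : ℝ, (x : ℂ) ∈ O → (r i (x : ℂ)).im = 0)
    -- compositions ψ_γ along finite words γ = (i₁,…,i_k), the intervals I_γ = ψ_γ(I)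
    (ψw : List (Fin d) → ℂ → ℂ)
    (hψw : ∀ γ x, ψw γ x = γ.foldl (fun z i => ψ i z) x)
    (Iw : List (Fin d) → Set ℝ)
    (hIw : ∀ γ, Iw γ = {y : ℝ | ∃ x ∈ Icc (0:ℝ) 1, ψw γ (x : ℂ) = (y : ℂ)})
    -- the β-twisted products h̃^β_γ
    (htilβ : ℝ → List (Fin d) → ℂ → ℂ)
    (htilβone : ∀ β : ℝ, ∀ i x, htilβ β [i] x = Complex.exp (β * r i x))
    (htilβrec : ∀ β : ℝ, ∀ γ, γ ≠ [] → ∀ i x,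
      htilβ β (γ ++ [i]) x = htilβ β γ x * Complex.exp (β * r i (ψw γ x)))
    -- for each β ≥ 1, the eigenvalue α_β and the conformal probability μ̃_β for P_{β log g}
    (αβ : ℝ → ℝ) (μβ : ℝ → Measure ℝ)
    (hβdata : ∀ β : ℝ, 1 ≤ β →
      0 < αβ β ∧ IsProbabilityMeasure (μβ β) ∧ μβ β (Icc (0:ℝ) 1) = 1 ∧
      (∀ x : ℝ, μβ β {x} = 0) ∧
      (∀ s : Set ℝ, IsOpen s → (s ∩ Icc (0:ℝ) 1).Nonempty → 0 < μβ β s) ∧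
      ∀ q : ℝ → ℝ, ContinuousOn q (Icc (0:ℝ) 1) →
        ∫ x in Icc (0:ℝ) 1,
            (∑ i : Fin d, Real.exp (β * (r i (x : ℂ)).re) * q ((ψ i (x : ℂ)).re)) ∂(μβ β)
          = αβ β * ∫ x in Icc (0:ℝ) 1, q x ∂(μβ β))
    -- the normalized products h_β(γ, ·) = h̃^β_γ / (α_β^{|γ|} μ̃_β(I_γ))
    (hβf : ℝ → List (Fin d) → ℂ → ℂ)
    (hhβf : ∀ β γ x, hβf β γ x = htilβ β γ x / ((αβ β ^ γ.length * (μβ β (Iw γ)).toReal : ℝ) : ℂ))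
    -- the positive limits h_β(ω,x) = lim_k h_β(ω_k,x) on Σ × I
    (hβR : ℝ → (ℕ → Fin d) → ℝ → ℝ)
    (hhβR : ∀ β : ℝ, 1 ≤ β → ∀ ω : ℕ → Fin d, ∀ x ∈ Icc (0:ℝ) 1,
      0 < hβR β ω x ∧
      Tendsto (fun k : ℕ => hβf β (List.ofFn fun j : Fin k => ω j) (x : ℂ))
        atTop (nhds ((hβR β ω x : ℝ) : ℂ)))
    -- the sequence β_n → ∞ provided by Corollary 5.2, and the corresponding limit
    -- H_∞(ω,x) = lim_n H_{β_n}(ω,x), where H_β(ω,x) = (1/β) log h_β(ω,x) on Σ × I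
    (βseq : ℕ → ℝ) (hβseq1 : ∀ n, 1 ≤ βseq n) (hβseqtop : Tendsto βseq atTop atTop)
    (Hinf : (ℕ → Fin d) → ℝ → ℝ)
    (hHinf : ∀ ω : ℕ → Fin d, ∀ x ∈ Icc (0:ℝ) 1,
      Tendsto (fun n : ℕ => (1 / βseq n) * Real.log (hβR (βseq n) ω x))
        atTop (nhds (Hinf ω x))) :
    -- conclusion: H_∞ is an involution kernel for A = log g
    ∃ Astar : (ℕ → Fin d) → ℝ, ∀ w : ℕ → Fin d, ∀ x ∈ Icc (0:ℝ) 1,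
      Astar w = Real.log ((g (w 0) (ψ (w 0) (x : ℂ))).re)
        + Hinf (fun n => w (n + 1)) ((ψ (w 0) (x : ℂ)).re) - Hinf w x := by
    classical
  -- basic facts about words
  have ofFn_cons : ∀ (ω : ℕ → Fin d) (k : ℕ),
      (List.ofFn fun j : Fin (k+1) => ω j) = ω 0 :: (List.ofFn fun j : Fin k => ω (j+1)) := by
    intro ω k; rw [List.ofFn_succ]; simp [Fin.val_succ]
  have ofFn_concat : ∀ (ω : ℕ → Fin d) (k : ℕ),
      (List.ofFn fun j : Fin (k+1) => ω j) = (List.ofFn fun j : Fin k => ω j) ++ [ω k] := by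
    intro ω k; rw [List.ofFn_succ']; simp [List.concat_eq_append, Fin.coe_castSucc]
  have ofFn_ne : ∀ (ω : ℕ → Fin d) (k : ℕ), (List.ofFn fun j : Fin (k+1) => ω j) ≠ [] := by
    intro ω k h
    simpa using congrArg List.length h
  have ψwcons : ∀ (i : Fin d) (γ : List (Fin d)) (x : ℂ), ψw (i :: γ) x = ψw γ (ψ i x) := by
    intro i γ x; rw [hψw, hψw, List.foldl_cons]
  -- the cocycle identity for the twisted products
  have key : ∀ (β : ℝ) (w : ℕ → Fin d) (k : ℕ) (x : ℂ),
      htilβ β (List.ofFn fun j : Fin (k+2) => w j) x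
        = Complex.exp (β * r (w 0) x)
            * htilβ β (List.ofFn fun j : Fin (k+1) => w (j+1)) (ψ (w 0) x) := by
    intro β w k
    induction k with
    | zero =>
      intro x
      have h2 : (List.ofFn fun j : Fin 2 => w j) = [w 0] ++ [w 1] := by
        rw [ofFn_cons]; simp [List.ofFn_succ]
      have h1 : (List.ofFn fun j : Fin 1 => w (j+1)) = [w 1] := by simp [List.ofFn_succ]
      rw [h2, h1, htilβrec β [w 0] (by simp) (w 1) x, htilβone, htilβone]
      congr 2
      rw [hψw]; simp
    | succ k ih =>
      intro x
      have hfull : (List.ofFn fun j : Fin (k+3) => w j)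
          = (List.ofFn fun j : Fin (k+2) => w j) ++ [w (k+2)] := ofFn_concat w (k+2)
      have hγ : (List.ofFn fun j : Fin (k+2) => w (j+1))
          = (List.ofFn fun j : Fin (k+1) => w (j+1)) ++ [w (k+2)] := by
        have := ofFn_concat (fun n => w (n+1)) (k+1)
        simpa using this
      have hψfull : ψw (List.ofFn fun j : Fin (k+2) => w j) x
          = ψw (List.ofFn fun j : Fin (k+1) => w (j+1)) (ψ (w 0) x) := by
        rw [ofFn_cons w (k+1), ψwcons]
      rw [hfull, htilβrec β _ (ofFn_ne w (k+1)) (w (k+2)) x, ih x, hψfull, hγ,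
        htilβrec β _ (ofFn_ne (fun n => w (n+1)) k) (w (k+2)) (ψ (w 0) x)]
      ring
  -- the main claim : the defect is independent of the base point
  have main : ∀ (w : ℕ → Fin d), ∀ x ∈ Icc (0:ℝ) 1, ∀ y ∈ Icc (0:ℝ) 1,
      (r (w 0) (x:ℂ)).re + Hinf (fun n => w (n+1)) ((ψ (w 0) (x:ℂ)).re) - Hinf w x
        = (r (w 0) (y:ℂ)).re + Hinf (fun n => w (n+1)) ((ψ (w 0) (y:ℂ)).re) - Hinf w y := by
    intro w x hx y hy
    set s : ℕ → Fin d := fun n => w (n+1) with hs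
    -- the real points u x, u y
    obtain ⟨ux, hux, hψx⟩ := hψreal (w 0) x hx
    obtain ⟨uy, huy, hψy⟩ := hψreal (w 0) y hy
    have hrex : (ψ (w 0) (x:ℂ)).re = ux := by rw [hψx]; simp
    have hrey : (ψ (w 0) (y:ℂ)).re = uy := by rw [hψy]; simp
    -- step A : for every β ≥ 1 the defect at level β is independent of the base point
    have stepA : ∀ β : ℝ, 1 ≤ β →
        (1/β) * Real.log (hβR β w x) - (r (w 0) (x:ℂ)).re - (1/β) * Real.log (hβR β s ux)
          = (1/β) * Real.log (hβR β w y) - (r (w 0) (y:ℂ)).re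
              - (1/β) * Real.log (hβR β s uy) := by
      intro β hβ1
      have hβpos : (0:ℝ) < β := lt_of_lt_of_le one_pos hβ1
      obtain ⟨hLx, hLxT⟩ := hhβR β hβ1 w x hx
      obtain ⟨hLy, hLyT⟩ := hhβR β hβ1 w y hy
      obtain ⟨hUx, hUxT⟩ := hhβR β hβ1 s ux hux
      obtain ⟨hUy, hUyT⟩ := hhβR β hβ1 s uy huy
      set Ex : ℂ := Complex.exp (β * r (w 0) (x:ℂ)) with hEx
      set Ey : ℂ := Complex.exp (β * r (w 0) (y:ℂ)) with hEy
      -- per-level identity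
      have perk : ∀ k : ℕ,
          hβf β (List.ofFn fun j : Fin (k+2) => w j) (x:ℂ)
              * (Ey * hβf β (List.ofFn fun j : Fin (k+1) => s j) (uy:ℂ))
            = hβf β (List.ofFn fun j : Fin (k+2) => w j) (y:ℂ)
              * (Ex * hβf β (List.ofFn fun j : Fin (k+1) => s j) (ux:ℂ)) := by
        intro k
        rw [hhβf, hhβf, hhβf, hhβf, key β w k (x:ℂ), key β w k (y:ℂ)]
        rw [show ψ (w 0) (x:ℂ) = (ux:ℂ) from hψx, show ψ (w 0) (y:ℂ) = (uy:ℂ) from hψy]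
        simp only [div_eq_mul_inv]
        ring
      -- pass to the limit
      have hTx : Tendsto (fun k : ℕ =>
          hβf β (List.ofFn fun j : Fin (k+2) => w j) (x:ℂ)
            * (Ey * hβf β (List.ofFn fun j : Fin (k+1) => s j) (uy:ℂ))) atTop
          (nhds (((hβR β w x : ℝ):ℂ) * (Ey * ((hβR β s uy : ℝ):ℂ)))) := by
        exact (hLxT.comp (tendsto_add_atTop_nat 2)).mul
          (tendsto_const_nhds.mul (hUyT.comp (tendsto_add_atTop_nat 1)))
      have hTy : Tendsto (fun k : ℕ =>
          hβf β (List.ofFn fun j : Fin (k+2) => w j) (y:ℂ)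
            * (Ex * hβf β (List.ofFn fun j : Fin (k+1) => s j) (ux:ℂ))) atTop
          (nhds (((hβR β w y : ℝ):ℂ) * (Ex * ((hβR β s ux : ℝ):ℂ)))) := by
        exact (hLyT.comp (tendsto_add_atTop_nat 2)).mul
          (tendsto_const_nhds.mul (hUxT.comp (tendsto_add_atTop_nat 1)))
      have hTx' : Tendsto (fun k : ℕ =>
          hβf β (List.ofFn fun j : Fin (k+2) => w j) (x:ℂ)
            * (Ey * hβf β (List.ofFn fun j : Fin (k+1) => s j) (uy:ℂ))) atTop
          (nhds (((hβR β w y : ℝ):ℂ) * (Ex * ((hβR β s ux : ℝ):ℂ)))) := by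
        simpa only [perk] using hTy
      have hceq : ((hβR β w x : ℝ):ℂ) * (Ey * ((hβR β s uy : ℝ):ℂ))
          = ((hβR β w y : ℝ):ℂ) * (Ex * ((hβR β s ux : ℝ):ℂ)) :=
        tendsto_nhds_unique hTx hTx'
      -- identify Ex and Ey as real exponentials
      have himx : (r (w 0) (x:ℂ)).im = 0 := hrreal (w 0) x (hIO x hx)
      have himy : (r (w 0) (y:ℂ)).im = 0 := hrreal (w 0) y (hIO y hy)
      have hExr : Ex = ((Real.exp (β * (r (w 0) (x:ℂ)).re) : ℝ) : ℂ) := by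
        rw [hEx, Complex.ofReal_exp]
        congr 1
        apply Complex.ext <;> simp [himx]
      have hEyr : Ey = ((Real.exp (β * (r (w 0) (y:ℂ)).re) : ℝ) : ℂ) := by
        rw [hEy, Complex.ofReal_exp]
        congr 1
        apply Complex.ext <;> simp [himy]
      rw [hExr, hEyr] at hceq
      have hreq : hβR β w x * (Real.exp (β * (r (w 0) (y:ℂ)).re) * hβR β s uy)
          = hβR β w y * (Real.exp (β * (r (w 0) (x:ℂ)).re) * hβR β s ux) := by
        exact_mod_cast hceq
      -- take logarithms
      have hlog := congrArg Real.log hreq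
      rw [Real.log_mul (ne_of_gt hLx) (by positivity),
          Real.log_mul (by positivity) (ne_of_gt hUy),
          Real.log_mul (ne_of_gt hLy) (by positivity),
          Real.log_mul (by positivity) (ne_of_gt hUx),
          Real.log_exp, Real.log_exp] at hlog
      have hβne : β ≠ 0 := ne_of_gt hβpos
      field_simp
      nlinarith [hlog, hβpos]
    -- step B : pass to the limit β = βseq n → ∞
    have hBx : Tendsto (fun n : ℕ =>
        (1 / βseq n) * Real.log (hβR (βseq n) w x) - (r (w 0) (x:ℂ)).re
          - (1 / βseq n) * Real.log (hβR (βseq n) s ux)) atTop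
        (nhds (Hinf w x - (r (w 0) (x:ℂ)).re - Hinf s ux)) :=
      ((hHinf w x hx).sub tendsto_const_nhds).sub (hHinf s ux hux)
    have hBy : Tendsto (fun n : ℕ =>
        (1 / βseq n) * Real.log (hβR (βseq n) w x) - (r (w 0) (x:ℂ)).re
          - (1 / βseq n) * Real.log (hβR (βseq n) s ux)) atTop
        (nhds (Hinf w y - (r (w 0) (y:ℂ)).re - Hinf s uy)) := by
      have h2 : Tendsto (fun n : ℕ =>
          (1 / βseq n) * Real.log (hβR (βseq n) w y) - (r (w 0) (y:ℂ)).re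
            - (1 / βseq n) * Real.log (hβR (βseq n) s uy)) atTop
          (nhds (Hinf w y - (r (w 0) (y:ℂ)).re - Hinf s uy)) :=
        ((hHinf w y hy).sub tendsto_const_nhds).sub (hHinf s uy huy)
      refine Tendsto.congr (fun n => ?_) h2
      exact (stepA (βseq n) (hβseq1 n)).symm
    have := tendsto_nhds_unique hBx hBy
    rw [hrex, hrey]
    linarith
  -- conclusion
  refine ⟨fun w => (r (w 0) ((0:ℝ):ℂ)).re
      + Hinf (fun n => w (n+1)) ((ψ (w 0) ((0:ℝ):ℂ)).re) - Hinf w 0, ?_⟩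
  intro w x hx
  have h0 : (0:ℝ) ∈ Icc (0:ℝ) 1 := by constructor <;> norm_num
  have hlogg : Real.log ((g (w 0) (ψ (w 0) (x:ℂ))).re) = (r (w 0) (x:ℂ)).re := by
    rw [hrexp (w 0) (x:ℂ) (hIO x hx), Complex.exp_re, hrreal (w 0) x (hIO x hx)]
    simp [Real.log_exp]
  rw [hlogg]
  have := main w 0 h0 x hx
  dsimp only
  linarith
end

section
/- With 𝕋^{-1}(w, x) = (σ(w), ψ_{w_0}(x)): (a) b(w, x) − b(𝕋^{-1}(w, x)) = R(ψ_{w_0}(x)) for every (w, x) ∈ Σ × I with I*(w) < ∞; (b) b(𝕋^{-1}(w, x)) ≤ b(w, x) for every such (w, x), i.e. b is non-decreasing along trajectories of 𝕋; (c) the set Γ_V = {(w, x) : b(w, x) = 0} is backward invariant: 𝕋^{-1}(Γ_V) ⊆ Γ_V; (d) if (w, x) is optimal, i.e. b(w, x) = 0, then R(ψ_{w_0}(x)) = 0. -/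
open Set Filter Topology
open scoped NNReal ENNReal

/-- Lemma 6.1 of the paper.
With `𝕋⁻¹(w,x) = (σ(w), ψ_{w₀}(x))`:
(a) `b(w,x) − b(𝕋⁻¹(w,x)) = R(ψ_{w₀}(x))` whenever `I*(w) < ∞`;
(b) `b(𝕋⁻¹(w,x)) ≤ b(w,x)` for every such `(w,x)`;
(c) `Γ_V = {b = 0}` is backward invariant;
(d) if `b(w,x) = 0` then `R(ψ_{w₀}(x)) = 0`. -/
theorem stmt10
    -- the degree
    (d : ℕ) (hd : 1 ≤ d)
    -- the expanding onto map f of degree d and its inverse branches ψ_i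
    (f : ℝ → ℝ) (ψ : Fin d → ℝ → ℝ)
    (hψI : ∀ i, ∀ x ∈ Icc (0:ℝ) 1, ψ i x ∈ Icc (0:ℝ) 1)
    (hfψ : ∀ i, ∀ x ∈ Icc (0:ℝ) 1, f (ψ i x) = x)
    -- the metric d(ω,γ) = 2^{-n} on Σ, n the first position at which ω and γ disagree
    (dSig : (ℕ → Fin d) → (ℕ → Fin d) → ℝ)
    (hdSigeq : ∀ ω, dSig ω ω = 0)
    (hdSig : ∀ ω γ : ℕ → Fin d, ∀ n : ℕ, (∀ m, m < n → ω m = γ m) → ω n ≠ γ n →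
      dSig ω γ = (2:ℝ)⁻¹ ^ n)
    -- the Hölder potential A, with m(A) = 0
    (A : ℝ → ℝ) (hA : ∃ (C r : ℝ≥0), 0 < r ∧ HolderWith C r A)
    (hmA : (∀ ν : MeasureTheory.Measure ℝ, MeasureTheory.IsProbabilityMeasure ν →
        ν (Icc (0:ℝ) 1) = 1 → (∀ s : Set ℝ, MeasurableSet s → ν (f ⁻¹' s) = ν s) →
        ∫ x, A x ∂ν ≤ 0) ∧
      ∃ ν : MeasureTheory.Measure ℝ, MeasureTheory.IsProbabilityMeasure ν ∧
        ν (Icc (0:ℝ) 1) = 1 ∧ (∀ s : Set ℝ, MeasurableSet s → ν (f ⁻¹' s) = ν s) ∧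
        ∫ x, A x ∂ν = 0)
    -- a continuous involution kernel W for A, with Hölder dual potential A*, m(A*) = 0
    (W : (ℕ → Fin d) → ℝ → ℝ)
    (hWcont : Continuous (fun p : (ℕ → Fin d) × ℝ => W p.1 p.2))
    (Astar : (ℕ → Fin d) → ℝ)
    (hAstarHolder : ∃ C θ : ℝ, 0 < C ∧ 0 < θ ∧
      ∀ w w' : ℕ → Fin d, |Astar w - Astar w'| ≤ C * (dSig w w') ^ θ)
    (hW : ∀ w : ℕ → Fin d, ∀ x ∈ Icc (0:ℝ) 1,
      Astar w = A (ψ (w 0) x) + W (fun n => w (n + 1)) (ψ (w 0) x) - W w x)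
    (hmAstar : (∀ ν : MeasureTheory.Measure (ℕ → Fin d),
        MeasureTheory.IsProbabilityMeasure ν →
        (∀ s : Set (ℕ → Fin d), MeasurableSet s →
          ν ((fun (w : ℕ → Fin d) (n : ℕ) => w (n + 1)) ⁻¹' s) = ν s) →
        ∫ w, Astar w ∂ν ≤ 0) ∧
      ∃ ν : MeasureTheory.Measure (ℕ → Fin d), MeasureTheory.IsProbabilityMeasure ν ∧
        (∀ s : Set (ℕ → Fin d), MeasurableSet s →
          ν ((fun (w : ℕ → Fin d) (n : ℕ) => w (n + 1)) ⁻¹' s) = ν s) ∧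
        ∫ w, Astar w ∂ν = 0)
    -- calibrated subactions V for A and V* for A*
    (V : ℝ → ℝ)
    (hVcal : ∀ x ∈ Icc (0:ℝ) 1,
      (∀ y ∈ Icc (0:ℝ) 1, f y = x → V y + A y ≤ V x) ∧
      ∃ y ∈ Icc (0:ℝ) 1, f y = x ∧ V x = V y + A y)
    (Vstar : (ℕ → Fin d) → ℝ)
    (hVstarcal : ∀ w : ℕ → Fin d,
      (∀ w' : ℕ → Fin d, (fun n => w' (n + 1)) = w → Vstar w' + Astar w' ≤ Vstar w) ∧
      ∃ w' : ℕ → Fin d, (fun n => w' (n + 1)) = w ∧ Vstar w = Vstar w' + Astar w')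
    -- R, R*, the deviation function I*, and the function b
    (R : ℝ → ℝ) (hR : ∀ x, R x = V (f x) - V x - A x)
    (hRnonneg : ∀ x ∈ Icc (0:ℝ) 1, 0 ≤ R x)
    (Rstar : (ℕ → Fin d) → ℝ)
    (hRstar : ∀ w : ℕ → Fin d, Rstar w = Vstar (fun n => w (n + 1)) - Vstar w - Astar w)
    (hRstarnonneg : ∀ w, 0 ≤ Rstar w)
    (Istar : (ℕ → Fin d) → ℝ≥0∞)
    (hIstar : ∀ w : ℕ → Fin d, Istar w = ∑' n : ℕ, ENNReal.ofReal (Rstar (fun m => w (m + n))))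
    (b : (ℕ → Fin d) → ℝ → EReal)
    (hb : ∀ w x, b w x = ((Vstar w + V x - W w x : ℝ) : EReal) + (Istar w : EReal))
    -- V(x) = sup_w (W(w,x) − V*(w) − I*(w)), so that b ≥ 0, and optimal w's exist
    (hVsup : ∀ x ∈ Icc (0:ℝ) 1,
      (V x : EReal) = ⨆ w : ℕ → Fin d, (((W w x - Vstar w : ℝ) : EReal) - (Istar w : EReal)))
    (hbnonneg : ∀ w : ℕ → Fin d, ∀ x ∈ Icc (0:ℝ) 1, 0 ≤ b w x)
    (hopt : ∀ x ∈ Icc (0:ℝ) 1, ∃ w : ℕ → Fin d, b w x = 0)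
    :
    -- (a)
    (∀ w : ℕ → Fin d, ∀ x ∈ Icc (0:ℝ) 1, Istar w ≠ ⊤ →
      b w x - b (fun n => w (n + 1)) (ψ (w 0) x) = ((R (ψ (w 0) x) : ℝ) : EReal)) ∧
    -- (b)
    (∀ w : ℕ → Fin d, ∀ x ∈ Icc (0:ℝ) 1, Istar w ≠ ⊤ →
      b (fun n => w (n + 1)) (ψ (w 0) x) ≤ b w x) ∧
    -- (c)
    (∀ w : ℕ → Fin d, ∀ x ∈ Icc (0:ℝ) 1, b w x = 0 →
      b (fun n => w (n + 1)) (ψ (w 0) x) = 0) ∧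
    -- (d)
    (∀ w : ℕ → Fin d, ∀ x ∈ Icc (0:ℝ) 1, b w x = 0 → R (ψ (w 0) x) = 0) := by

  -- notation
  classical
  -- shift of Istar
  have hshift : ∀ w : ℕ → Fin d,
      Istar w = ENNReal.ofReal (Rstar w) + Istar (fun n => w (n + 1)) := by
    intro w
    rw [hIstar w, hIstar (fun n => w (n + 1))]
    rw [tsum_eq_zero_add' ENNReal.summable]
    rfl
  -- key real identity
  have key : ∀ w : ℕ → Fin d, ∀ x ∈ Icc (0:ℝ) 1,
      Vstar w + V x - W w x + Rstar w
        = Vstar (fun n => w (n + 1)) + V (ψ (w 0) x)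
            - W (fun n => w (n + 1)) (ψ (w 0) x) + R (ψ (w 0) x) := by
    intro w x hx
    have h1 := hW w x hx
    have h2 := hRstar w
    have h3 := hR (ψ (w 0) x)
    have h4 : f (ψ (w 0) x) = x := hfψ (w 0) x hx
    rw [h4] at h3
    linarith
  -- finiteness transfer
  have hfin : ∀ w : ℕ → Fin d, Istar w ≠ ⊤ → Istar (fun n => w (n + 1)) ≠ ⊤ := by
    intro w hw h
    apply hw
    rw [hshift w, h]; simp
  have htoReal : ∀ w : ℕ → Fin d, Istar w ≠ ⊤ →
      (Istar w).toReal = Rstar w + (Istar (fun n => w (n + 1))).toReal := by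
    intro w hw
    have h2 := hfin w hw
    rw [hshift w, ENNReal.toReal_add (by simp) h2, ENNReal.toReal_ofReal (hRstarnonneg w)]
  -- b as a real coercion when finite
  have hbreal : ∀ w : ℕ → Fin d, ∀ x : ℝ, Istar w ≠ ⊤ →
      b w x = ((Vstar w + V x - W w x + (Istar w).toReal : ℝ) : EReal) := by
    intro w x hw
    have h2 : ((Istar w : EReal)) = (((Istar w).toReal : ℝ) : EReal) := by
      rw [← EReal.toReal_coe_ennreal,
        EReal.coe_toReal (by simpa using hw) (EReal.coe_ennreal_ne_bot _)]
    rw [hb w x, h2, ← EReal.coe_add]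
  -- (a)
  have parta : ∀ w : ℕ → Fin d, ∀ x ∈ Icc (0:ℝ) 1, Istar w ≠ ⊤ →
      b w x - b (fun n => w (n + 1)) (ψ (w 0) x) = ((R (ψ (w 0) x) : ℝ) : EReal) := by
    intro w x hx hw
    rw [hbreal w x hw, hbreal _ _ (hfin w hw), ← EReal.coe_sub]
    have hk := key w x hx
    have ht := htoReal w hw
    norm_cast
    linarith
  refine ⟨parta, ?_, ?_, ?_⟩
  · -- (b)
    intro w x hx hw
    rw [hbreal w x hw, hbreal _ _ (hfin w hw)]
    have hk := key w x hx
    have ht := htoReal w hw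
    have hRp := hRnonneg (ψ (w 0) x) (hψI (w 0) x hx)
    exact_mod_cast (by linarith :
      Vstar (fun n => w (n + 1)) + V (ψ (w 0) x)
        - W (fun n => w (n + 1)) (ψ (w 0) x)
        + (Istar (fun n => w (n + 1))).toReal
        ≤ Vstar w + V x - W w x + (Istar w).toReal)
  · -- (c)
    intro w x hx hb0
    have hw : Istar w ≠ ⊤ := by
      intro h
      rw [hb w x, h] at hb0
      simp at hb0
      exact (EReal.zero_ne_top) hb0.symm
    have hle : b (fun n => w (n + 1)) (ψ (w 0) x) ≤ b w x := by
      rw [hbreal w x hw, hbreal _ _ (hfin w hw)]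
      have hk := key w x hx
      have ht := htoReal w hw
      have hRp := hRnonneg (ψ (w 0) x) (hψI (w 0) x hx)
      exact_mod_cast (by linarith :
        Vstar (fun n => w (n + 1)) + V (ψ (w 0) x)
          - W (fun n => w (n + 1)) (ψ (w 0) x)
          + (Istar (fun n => w (n + 1))).toReal
          ≤ Vstar w + V x - W w x + (Istar w).toReal)
    have hge := hbnonneg (fun n => w (n + 1)) (ψ (w 0) x) (hψI (w 0) x hx)
    exact le_antisymm (hb0 ▸ hle) hge
  · -- (d)
    intro w x hx hb0
    have hw : Istar w ≠ ⊤ := by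
      intro h
      rw [hb w x, h] at hb0
      simp at hb0
      exact (EReal.zero_ne_top) hb0.symm
    have hle : b (fun n => w (n + 1)) (ψ (w 0) x) ≤ b w x := by
      rw [hbreal w x hw, hbreal _ _ (hfin w hw)]
      have hk := key w x hx
      have ht := htoReal w hw
      have hRp := hRnonneg (ψ (w 0) x) (hψI (w 0) x hx)
      exact_mod_cast (by linarith :
        Vstar (fun n => w (n + 1)) + V (ψ (w 0) x)
          - W (fun n => w (n + 1)) (ψ (w 0) x)
          + (Istar (fun n => w (n + 1))).toReal
          ≤ Vstar w + V x - W w x + (Istar w).toReal)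
    have hge := hbnonneg (fun n => w (n + 1)) (ψ (w 0) x) (hψI (w 0) x hx)
    have hb0' : b (fun n => w (n + 1)) (ψ (w 0) x) = 0 :=
      le_antisymm (hb0 ▸ hle) hge
    have ha := parta w x hx hw
    rw [hb0, hb0', sub_zero] at ha
    exact_mod_cast ha.symm
end

section
/- Suppose W satisfies the twist condition. If x < x' in I, and w is optimal for x (i.e. W(w, x) − φ(w) = sup_{w'' ∈ Σ} (W(w'', x) − φ(w''))) and w' is optimal for x', then w' ≤ w in the lexicographic order. That is, the (multi-valued) map x ↦ w(x) assigning optimal sequences is monotone non-increasing. -/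
open Set Filter Topology
open scoped NNReal ENNReal

/-- Proposition 6.2 of the paper.
If `W` is twist, `x < x'` in `I`, `w` is optimal for `x` and `w'` is optimal for `x'`,
then `w' ≤ w` in the lexicographic order: the multi-valued map `x ↦ w(x)` is monotone
non-increasing. -/
theorem stmt11
    -- the alphabet size
    (d : ℕ) (hd : 1 ≤ d)
    -- the strict lexicographic order on Σ = {1,…,d}^ℕ
    (lexLt : (ℕ → Fin d) → (ℕ → Fin d) → Prop)
    (hlex : ∀ a a' : ℕ → Fin d,
      lexLt a a' ↔ ∃ n : ℕ, (∀ m, m < n → a m = a' m) ∧ a n < a' n)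
    -- a continuous function W on Σ × I
    (W : (ℕ → Fin d) → ℝ → ℝ)
    (hWcont : Continuous (fun p : (ℕ → Fin d) × ℝ => W p.1 p.2))
    -- a function φ : Σ → ℝ ∪ {+∞}, never −∞ and not identically +∞
    (φ : (ℕ → Fin d) → EReal)
    (hφbot : ∀ w, φ w ≠ ⊥) (hφtop : ∃ w, φ w ≠ ⊤)
    -- the twist condition
    (htwist : ∀ a a' : ℕ → Fin d, ∀ x x' : ℝ, x ∈ Icc (0:ℝ) 1 → x' ∈ Icc (0:ℝ) 1 →
      lexLt a a' → x < x' → W a x + W a' x' < W a x' + W a' x) :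
    -- conclusion
    ∀ x ∈ Icc (0:ℝ) 1, ∀ x' ∈ Icc (0:ℝ) 1, x < x' →
      ∀ w w' : ℕ → Fin d,
        (((W w x : ℝ) : EReal) - φ w = ⨆ w'' : ℕ → Fin d, (((W w'' x : ℝ) : EReal) - φ w'')) →
        (((W w' x' : ℝ) : EReal) - φ w'
            = ⨆ w'' : ℕ → Fin d, (((W w'' x' : ℝ) : EReal) - φ w'')) →
        w' = w ∨ lexLt w' w := by
  classical
  intro x hx x' hx' hxx' w w' hw hw'
  by_contra hcon
  push_neg at hcon
  obtain ⟨hne, hnl⟩ := hcon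
  -- establish lexLt w w'
  have hdiff : ∃ n, w' n ≠ w n := by
    by_contra h; push_neg at h; exact hne (funext h)
  have hfn : w' (Nat.find hdiff) ≠ w (Nat.find hdiff) := Nat.find_spec hdiff
  have hmin : ∀ m, m < Nat.find hdiff → w' m = w m := fun m hm => by
    by_contra h; exact Nat.find_min hdiff hm h
  have hlt : w (Nat.find hdiff) < w' (Nat.find hdiff) := by
    rcases lt_or_gt_of_ne hfn with h | h
    · exact absurd ((hlex w' w).2 ⟨Nat.find hdiff, hmin, h⟩) hnl
    · exact h
  have hww' : lexLt w w' := (hlex w w').2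
    ⟨Nat.find hdiff, fun m hm => (hmin m hm).symm, hlt⟩
  have htw := htwist w w' x x' hx hx' hww' hxx'
  -- the witness with φ finite
  obtain ⟨w₀, hw₀⟩ := hφtop
  obtain ⟨r₀, hr₀⟩ : ∃ r : ℝ, φ w₀ = (r : EReal) :=
    ⟨(φ w₀).toReal, (EReal.coe_toReal hw₀ (hφbot w₀)).symm⟩
  -- φ w ≠ ⊤
  have hφw : ∀ y : ℝ, ∀ v : ℕ → Fin d,
      (((W v y : ℝ) : EReal) - φ v
        = ⨆ w'' : ℕ → Fin d, (((W w'' y : ℝ) : EReal) - φ w'')) → φ v ≠ ⊤ := by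
    intro y v hv htop
    rw [htop, EReal.sub_top] at hv
    have h0 : (((W w₀ y : ℝ) : EReal) - φ w₀)
        ≤ ⨆ w'' : ℕ → Fin d, (((W w'' y : ℝ) : EReal) - φ w'') :=
      le_iSup (fun w'' : ℕ → Fin d => (((W w'' y : ℝ) : EReal) - φ w'')) w₀
    rw [← hv, hr₀, ← EReal.coe_sub, le_bot_iff] at h0
    exact EReal.coe_ne_bot _ h0
  obtain ⟨r, hr⟩ : ∃ s : ℝ, φ w = (s : EReal) :=
    ⟨(φ w).toReal, (EReal.coe_toReal (hφw x w hw) (hφbot w)).symm⟩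
  obtain ⟨r', hr'⟩ : ∃ s : ℝ, φ w' = (s : EReal) :=
    ⟨(φ w').toReal, (EReal.coe_toReal (hφw x' w' hw') (hφbot w')).symm⟩
  -- optimality inequalities
  have h1 : (((W w' x : ℝ) : EReal) - φ w') ≤ (((W w x : ℝ) : EReal) - φ w) := by
    rw [hw]; exact le_iSup (fun w'' : ℕ → Fin d => (((W w'' x : ℝ) : EReal) - φ w'')) w'
  have h2 : (((W w x' : ℝ) : EReal) - φ w) ≤ (((W w' x' : ℝ) : EReal) - φ w') := by
    rw [hw']; exact le_iSup (fun w'' : ℕ → Fin d => (((W w'' x' : ℝ) : EReal) - φ w'')) w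
  rw [hr, hr', ← EReal.coe_sub, ← EReal.coe_sub, EReal.coe_le_coe_iff] at h1 h2
  linarith
end

section
/- If W satisfies the twist condition and the turning point c satisfies 0 < c < 1, then c is a solution of V(ψ_1(c)) + A(ψ_1(c)) = V(ψ_0(c)) + A(ψ_0(c)). -/
open Set Filter Topology
open scoped NNReal ENNReal

/-- Equicontinuity of a continuous kernel on the compact symbol space, via the tube lemma. -/
lemma stmt12_equicont (W : (ℕ → Fin 2) → ℝ → ℝ)
    (hWcont : Continuous (fun p : (ℕ → Fin 2) × ℝ => W p.1 p.2)) (c : ℝ)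
    {ε : ℝ} (hε : 0 < ε) :
    ∃ δ > 0, ∀ (w : ℕ → Fin 2) (x : ℝ), |x - c| < δ → |W w x - W w c| < ε := by
  have hF : Continuous (fun p : (ℕ → Fin 2) × ℝ => W p.1 p.2 - W p.1 c) := by
    exact hWcont.sub (hWcont.comp (by fun_prop : Continuous
      (fun p : (ℕ → Fin 2) × ℝ => ((p.1, c) : (ℕ → Fin 2) × ℝ))))
  set U : Set ((ℕ → Fin 2) × ℝ) :=
    (fun p : (ℕ → Fin 2) × ℝ => W p.1 p.2 - W p.1 c) ⁻¹' (Metric.ball 0 ε) with hU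
  have hUopen : IsOpen U := hF.isOpen_preimage _ Metric.isOpen_ball
  have hsub : (univ : Set (ℕ → Fin 2)) ×ˢ ({c} : Set ℝ) ⊆ U := by
    rintro ⟨w, x⟩ ⟨-, hx⟩
    simp only [mem_singleton_iff] at hx
    simp [hU, hx, Metric.mem_ball, hε]
  obtain ⟨u, v, hu, hv, hsu, hsv, huv⟩ :=
    generalized_tube_lemma isCompact_univ isCompact_singleton hUopen hsub
  obtain ⟨δ, hδ, hball⟩ := Metric.isOpen_iff.1 hv c (hsv rfl)
  refine ⟨δ, hδ, fun w x hx => ?_⟩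
  have hxv : x ∈ v := hball (by simpa [Real.dist_eq] using hx)
  have : (w, x) ∈ U := huv ⟨hsu (mem_univ w), hxv⟩
  simpa [hU, Real.dist_eq] using this

/-- Splitting off the first term of the deviation series. -/
lemma stmt12_split (Rstar : (ℕ → Fin 2) → ℝ) (Istar : (ℕ → Fin 2) → ℝ≥0∞)
    (hIstar : ∀ w : ℕ → Fin 2, Istar w = ∑' n : ℕ, ENNReal.ofReal (Rstar (fun m => w (m + n))))
    (w : ℕ → Fin 2) :
    Istar w = ENNReal.ofReal (Rstar w) + Istar (fun n => w (n + 1)) := by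
  have key : ∀ g : ℕ → ℝ≥0∞, ∑' n : ℕ, g n = g 0 + ∑' n : ℕ, g (n + 1) :=
    fun g => tsum_eq_zero_add' ENNReal.summable
  rw [hIstar w, hIstar (fun n => w (n + 1)),
    key (fun n => ENNReal.ofReal (Rstar (fun m => w (m + n))))]
  congr 1



/-- Lemma 6.2 of the paper.
If `W` satisfies the twist condition and the turning point `c` satisfies `0 < c < 1`,
then `c` solves `V(ψ₁(c)) + A(ψ₁(c)) = V(ψ₀(c)) + A(ψ₀(c))`. -/
theorem stmt12
    -- the expanding onto map f of degree d and its inverse branches ψ_i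
    (f : ℝ → ℝ) (ψ : Fin 2 → ℝ → ℝ)
    (hψI : ∀ i, ∀ x ∈ Icc (0:ℝ) 1, ψ i x ∈ Icc (0:ℝ) 1)
    (hfψ : ∀ i, ∀ x ∈ Icc (0:ℝ) 1, f (ψ i x) = x)
    -- the metric d(ω,γ) = 2^{-n} on Σ, n the first position at which ω and γ disagree
    (dSig : (ℕ → Fin 2) → (ℕ → Fin 2) → ℝ)
    (hdSigeq : ∀ ω, dSig ω ω = 0)
    (hdSig : ∀ ω γ : ℕ → Fin 2, ∀ n : ℕ, (∀ m, m < n → ω m = γ m) → ω n ≠ γ n →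
      dSig ω γ = (2:ℝ)⁻¹ ^ n)
    -- the Hölder potential A, with m(A) = 0
    (A : ℝ → ℝ) (hA : ∃ (C r : ℝ≥0), 0 < r ∧ HolderWith C r A)
    (hmA : (∀ ν : MeasureTheory.Measure ℝ, MeasureTheory.IsProbabilityMeasure ν →
        ν (Icc (0:ℝ) 1) = 1 → (∀ s : Set ℝ, MeasurableSet s → ν (f ⁻¹' s) = ν s) →
        ∫ x, A x ∂ν ≤ 0) ∧
      ∃ ν : MeasureTheory.Measure ℝ, MeasureTheory.IsProbabilityMeasure ν ∧
        ν (Icc (0:ℝ) 1) = 1 ∧ (∀ s : Set ℝ, MeasurableSet s → ν (f ⁻¹' s) = ν s) ∧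
        ∫ x, A x ∂ν = 0)
    -- a continuous involution kernel W for A, with Hölder dual potential A*, m(A*) = 0
    (W : (ℕ → Fin 2) → ℝ → ℝ)
    (hWcont : Continuous (fun p : (ℕ → Fin 2) × ℝ => W p.1 p.2))
    (Astar : (ℕ → Fin 2) → ℝ)
    (hAstarHolder : ∃ C θ : ℝ, 0 < C ∧ 0 < θ ∧
      ∀ w w' : ℕ → Fin 2, |Astar w - Astar w'| ≤ C * (dSig w w') ^ θ)
    (hW : ∀ w : ℕ → Fin 2, ∀ x ∈ Icc (0:ℝ) 1,
      Astar w = A (ψ (w 0) x) + W (fun n => w (n + 1)) (ψ (w 0) x) - W w x)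
    (hmAstar : (∀ ν : MeasureTheory.Measure (ℕ → Fin 2),
        MeasureTheory.IsProbabilityMeasure ν →
        (∀ s : Set (ℕ → Fin 2), MeasurableSet s →
          ν ((fun (w : ℕ → Fin 2) (n : ℕ) => w (n + 1)) ⁻¹' s) = ν s) →
        ∫ w, Astar w ∂ν ≤ 0) ∧
      ∃ ν : MeasureTheory.Measure (ℕ → Fin 2), MeasureTheory.IsProbabilityMeasure ν ∧
        (∀ s : Set (ℕ → Fin 2), MeasurableSet s →
          ν ((fun (w : ℕ → Fin 2) (n : ℕ) => w (n + 1)) ⁻¹' s) = ν s) ∧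
        ∫ w, Astar w ∂ν = 0)
    -- calibrated subactions V for A and V* for A*
    (V : ℝ → ℝ)
    (hVcal : ∀ x ∈ Icc (0:ℝ) 1,
      (∀ y ∈ Icc (0:ℝ) 1, f y = x → V y + A y ≤ V x) ∧
      ∃ y ∈ Icc (0:ℝ) 1, f y = x ∧ V x = V y + A y)
    (Vstar : (ℕ → Fin 2) → ℝ)
    (hVstarcal : ∀ w : ℕ → Fin 2,
      (∀ w' : ℕ → Fin 2, (fun n => w' (n + 1)) = w → Vstar w' + Astar w' ≤ Vstar w) ∧
      ∃ w' : ℕ → Fin 2, (fun n => w' (n + 1)) = w ∧ Vstar w = Vstar w' + Astar w')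
    -- R, R*, the deviation function I*, and the function b
    (R : ℝ → ℝ) (hR : ∀ x, R x = V (f x) - V x - A x)
    (hRnonneg : ∀ x ∈ Icc (0:ℝ) 1, 0 ≤ R x)
    (Rstar : (ℕ → Fin 2) → ℝ)
    (hRstar : ∀ w : ℕ → Fin 2, Rstar w = Vstar (fun n => w (n + 1)) - Vstar w - Astar w)
    (hRstarnonneg : ∀ w, 0 ≤ Rstar w)
    (Istar : (ℕ → Fin 2) → ℝ≥0∞)
    (hIstar : ∀ w : ℕ → Fin 2, Istar w = ∑' n : ℕ, ENNReal.ofReal (Rstar (fun m => w (m + n))))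
    (b : (ℕ → Fin 2) → ℝ → EReal)
    (hb : ∀ w x, b w x = ((Vstar w + V x - W w x : ℝ) : EReal) + (Istar w : EReal))
    -- V(x) = sup_w (W(w,x) − V*(w) − I*(w)), so that b ≥ 0, and optimal w's exist
    (hVsup : ∀ x ∈ Icc (0:ℝ) 1,
      (V x : EReal) = ⨆ w : ℕ → Fin 2, (((W w x - Vstar w : ℝ) : EReal) - (Istar w : EReal)))
    (hbnonneg : ∀ w : ℕ → Fin 2, ∀ x ∈ Icc (0:ℝ) 1, 0 ≤ b w x)
    (hopt : ∀ x ∈ Icc (0:ℝ) 1, ∃ w : ℕ → Fin 2, b w x = 0)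
    -- f preserves orientation: the inverse branches are increasing, ψ₀ to the left of ψ₁
    (hψmono : ∀ i, StrictMonoOn (ψ i) (Icc (0:ℝ) 1))
    (hψorder : ∀ x ∈ Icc (0:ℝ) 1, ∀ y ∈ Icc (0:ℝ) 1, ψ 0 x ≤ ψ 1 y)
    -- the strict lexicographic order on Σ = {0,1}^ℕ and the twist condition for W
    (lexLt : (ℕ → Fin 2) → (ℕ → Fin 2) → Prop)
    (hlex : ∀ a a' : ℕ → Fin 2,
      lexLt a a' ↔ ∃ n : ℕ, (∀ m, m < n → a m = a' m) ∧ a n < a' n)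
    (htwist : ∀ a a' : ℕ → Fin 2, ∀ x x' : ℝ, x ∈ Icc (0:ℝ) 1 → x' ∈ Icc (0:ℝ) 1 →
      lexLt a a' → x < x' → W a x + W a' x' < W a x' + W a' x)
    -- the turning point c
    (c : ℝ)
    (hcdef : c = sSup {x | x ∈ Icc (0:ℝ) 1 ∧
      ∀ w : ℕ → Fin 2, b w x = 0 → w 0 = 1})
    (hc01 : 0 < c ∧ c < 1)
    :
    V (ψ 1 c) + A (ψ 1 c) = V (ψ 0 c) + A (ψ 0 c) := by
  obtain ⟨hc0, hc1⟩ := hc01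
  have hcI : c ∈ Icc (0:ℝ) 1 := ⟨le_of_lt hc0, le_of_lt hc1⟩
  -- real form of optimality
  have realform : ∀ (w : ℕ → Fin 2) (x : ℝ), b w x = 0 →
      Istar w ≠ ⊤ ∧ Vstar w + V x - W w x + (Istar w).toReal = 0 := by
    intro w x h0
    rw [hb] at h0
    have hne : Istar w ≠ ⊤ := by
      intro htop
      rw [htop, EReal.coe_ennreal_top, EReal.coe_add_top] at h0
      exact (by simp : (⊤ : EReal) ≠ 0) h0
    refine ⟨hne, ?_⟩
    have hcoe : (Istar w : EReal) = (((Istar w).toReal : ℝ) : EReal) := by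
      conv_lhs => rw [← ENNReal.ofReal_toReal hne]
      rw [EReal.coe_ennreal_ofReal, max_eq_left ENNReal.toReal_nonneg]
    rw [hcoe, ← EReal.coe_add] at h0
    exact EReal.coe_eq_zero.1 h0
  -- nonnegativity, real form
  have nonnegform : ∀ (w : ℕ → Fin 2), Istar w ≠ ⊤ → ∀ z ∈ Icc (0:ℝ) 1,
      0 ≤ Vstar w + V z - W w z + (Istar w).toReal := by
    intro w hne z hz
    have h0 := hbnonneg w z hz
    rw [hb] at h0
    have hcoe : (Istar w : EReal) = (((Istar w).toReal : ℝ) : EReal) := by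
      conv_lhs => rw [← ENNReal.ofReal_toReal hne]
      rw [EReal.coe_ennreal_ofReal, max_eq_left ENNReal.toReal_nonneg]
    rw [hcoe, ← EReal.coe_add] at h0
    exact EReal.coe_nonneg.1 h0
  -- one step of the dynamics along an optimal pair
  have step : ∀ x ∈ Icc (0:ℝ) 1, ∀ w : ℕ → Fin 2, b w x = 0 →
      V x = V (ψ (w 0) x) + A (ψ (w 0) x) ∧
      Istar (fun n => w (n + 1)) ≠ ⊤ ∧
      Vstar (fun n => w (n + 1)) + V (ψ (w 0) x) - W (fun n => w (n + 1)) (ψ (w 0) x)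
        + (Istar (fun n => w (n + 1))).toReal = 0 := by
    intro x hx w h0
    obtain ⟨hne, heq⟩ := realform w x h0
    have hp : ψ (w 0) x ∈ Icc (0:ℝ) 1 := hψI _ x hx
    have hsplit := stmt12_split Rstar Istar hIstar w
    have hne' : Istar (fun n => w (n + 1)) ≠ ⊤ := by
      intro ht
      exact hne (by rw [hsplit, ht]; simp)
    have htr : (Istar w).toReal = Rstar w + (Istar (fun n => w (n + 1))).toReal := by
      rw [hsplit, ENNReal.toReal_add ENNReal.ofReal_ne_top hne',
        ENNReal.toReal_ofReal (hRstarnonneg w)]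
    have hAs := hW w x hx
    have hRs := hRstar w
    have hb2 := nonnegform (fun n => w (n + 1)) hne' (ψ (w 0) x) hp
    have hRp : 0 ≤ R (ψ (w 0) x) := hRnonneg _ hp
    rw [hR, hfψ (w 0) x hx] at hRp
    refine ⟨by linarith, hne', by linarith⟩
  -- upper bounds from calibration
  have hub : ∀ i : Fin 2, V (ψ i c) + A (ψ i c) ≤ V c :=
    fun i => (hVcal c hcI).1 _ (hψI i c hcI) (hfψ i c hcI)
  -- lower bounds from approximate optimal pairs
  have hlow : ∀ i : Fin 2,
      (∀ δ > (0:ℝ), ∃ x, x ∈ Icc (0:ℝ) 1 ∧ |x - c| < δ ∧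
        ∃ w : ℕ → Fin 2, b w x = 0 ∧ w 0 = i) →
      V c ≤ V (ψ i c) + A (ψ i c) := by
    intro i hex
    by_contra hlt
    push_neg at hlt
    set ε := (V c - (V (ψ i c) + A (ψ i c))) / 5 with hepsdef
    have hε : 0 < ε := by
      have : 0 < V c - (V (ψ i c) + A (ψ i c)) := by linarith
      rw [hepsdef]; linarith
    obtain ⟨δ, hδ, hd⟩ := stmt12_equicont W hWcont c hε
    obtain ⟨x, hxI, hxd, w, hbw, hw0⟩ := hex δ hδ
    subst hw0
    obtain ⟨hVx, hne', heq'⟩ := step x hxI w hbw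
    have hpC : ψ (w 0) c ∈ Icc (0:ℝ) 1 := hψI _ c hcI
    have h1 := nonnegform (fun n => w (n + 1)) hne' (ψ (w 0) c) hpC
    have hAsx := hW w x hxI
    have hAsc := hW w c hcI
    have hWd := abs_lt.1 (hd w x hxd)
    obtain ⟨wh, hwh⟩ := hopt c hcI
    obtain ⟨hneh, heqh⟩ := realform wh c hwh
    have h2 := nonnegform wh hneh x hxI
    have hWdh := abs_lt.1 (hd wh x hxd)
    linarith [hWd.1, hWd.2, hWdh.1, hWdh.2]
  -- witnesses on the left of c
  have hSbdd : BddAbove {x | x ∈ Icc (0:ℝ) 1 ∧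
      ∀ w : ℕ → Fin 2, b w x = 0 → w 0 = 1} :=
    ⟨1, fun x hx => hx.1.2⟩
  have hSne : Set.Nonempty {x | x ∈ Icc (0:ℝ) 1 ∧
      ∀ w : ℕ → Fin 2, b w x = 0 → w 0 = 1} := by
    by_contra h
    rw [not_nonempty_iff_eq_empty] at h
    exact hc0.ne' (by rw [hcdef, h, Real.sSup_empty])
  have wit1 : ∀ δ > (0:ℝ), ∃ x, x ∈ Icc (0:ℝ) 1 ∧ |x - c| < δ ∧
      ∃ w : ℕ → Fin 2, b w x = 0 ∧ w 0 = 1 := by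
    intro δ hδ
    have hlt : c - δ < sSup {x | x ∈ Icc (0:ℝ) 1 ∧
        ∀ w : ℕ → Fin 2, b w x = 0 → w 0 = 1} := by
      rw [← hcdef]; linarith
    obtain ⟨y, hyS, hy⟩ := exists_lt_of_lt_csSup hSne hlt
    have hyle : y ≤ c := hcdef ▸ le_csSup hSbdd hyS
    obtain ⟨w, hbw⟩ := hopt y hyS.1
    exact ⟨y, hyS.1, by rw [abs_sub_lt_iff]; constructor <;> linarith,
      w, hbw, hyS.2 w hbw⟩
  -- witnesses on the right of c
  have wit0 : ∀ δ > (0:ℝ), ∃ x, x ∈ Icc (0:ℝ) 1 ∧ |x - c| < δ ∧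
      ∃ w : ℕ → Fin 2, b w x = 0 ∧ w 0 = 0 := by
    intro δ hδ
    set x := c + min δ (1 - c) / 2 with hxdef
    have hmin : 0 < min δ (1 - c) := lt_min hδ (by linarith)
    have hminle : min δ (1 - c) ≤ 1 - c := min_le_right _ _
    have hminled : min δ (1 - c) ≤ δ := min_le_left _ _
    have hxI : x ∈ Icc (0:ℝ) 1 := ⟨by rw [hxdef]; linarith, by rw [hxdef]; linarith⟩
    have hxgt : c < x := by rw [hxdef]; linarith
    have hxnotS : x ∉ {z | z ∈ Icc (0:ℝ) 1 ∧
        ∀ w : ℕ → Fin 2, b w z = 0 → w 0 = 1} := by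
      intro hxS
      exact absurd (hcdef ▸ le_csSup hSbdd hxS) (not_le.2 hxgt)
    have hex : ¬ (∀ w : ℕ → Fin 2, b w x = 0 → w 0 = 1) := fun h => hxnotS ⟨hxI, h⟩
    push_neg at hex
    obtain ⟨w, hbw, hw1⟩ := hex
    have h2 : ∀ j : Fin 2, j ≠ 1 → j = 0 := by decide
    refine ⟨x, hxI, ?_, w, hbw, h2 _ hw1⟩
    rw [abs_sub_lt_iff]
    constructor
    · rw [hxdef]; linarith
    · rw [hxdef]; linarith
  have l1 := hlow 1 wit1
  have l0 := hlow 0 wit0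
  have u1 := hub 1
  have u0 := hub 0
  linarith
end

section
/- Suppose W satisfies the twist condition and A satisfies the countable condition (the set of w ∈ Σ that are optimal for some x ∈ I is countable). Then the turning point c is isolated from its forward orbit on both sides: there exist δ > 0 and w⁻, w⁺ ∈ Σ such that b(w⁻, x) = 0 for all x ∈ (c − δ, c] and b(w⁺, x) = 0 for all x ∈ [c, c + δ). -/
open Set Filter Topology
open scoped NNReal ENNReal

namespace Stmt16Aux

/-- concrete strict lexicographic order on `ℕ → Fin 2` -/
def LLt (a a' : ℕ → Fin 2) : Prop :=
  ∃ n : ℕ, (∀ m, m < n → a m = a' m) ∧ a n < a' n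

lemma llt_trichotomy {a a' : ℕ → Fin 2} (h : a ≠ a') : LLt a a' ∨ LLt a' a := by
  have hne : ∃ n, a n ≠ a' n := by
    by_contra hc
    push_neg at hc
    exact h (funext hc)
  classical
  let n := Nat.find hne
  have hn : a n ≠ a' n := Nat.find_spec hne
  have hm : ∀ m, m < n → a m = a' m := fun m hm => by
    by_contra hcc
    exact Nat.find_min hne hm hcc
  rcases lt_or_gt_of_ne hn with h1 | h1
  · exact Or.inl ⟨n, hm, h1⟩
  · exact Or.inr ⟨n, fun m hmm => (hm m hmm).symm, h1⟩

lemma fin2_eq_one_of_ne_zero {i : Fin 2} (h : i ≠ 0) : i = 1 := by omega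

lemma fin2_zero_lt_one : (0 : Fin 2) < 1 := by decide


lemma not_countable_nat_bool : ¬ Countable (ℕ → Bool) := by
  intro hcnt
  classical
  set g : Set ℕ → (ℕ → Bool) := fun s n => if n ∈ s then true else false with hg
  have hginj : Function.Injective g := by
    intro s t hst
    ext n
    have := congrFun hst n
    simp only [hg] at this
    by_cases hn : n ∈ s <;> by_cases hn' : n ∈ t <;> simp_all
  obtain ⟨e, he⟩ := (countable_iff_exists_injective (ℕ → Bool)).mp hcnt
  exact Function.cantor_injective (e ∘ g) (he.comp hginj)

/-- All the structure needed for the combinatorial part of the proof. -/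
structure Ctx where
  ψ : Fin 2 → ℝ → ℝ
  bb : (ℕ → Fin 2) → ℝ → Prop
  c : ℝ
  hc0 : 0 < c
  hc1 : c < 1
  hψI : ∀ i, ∀ x ∈ Set.Icc (0:ℝ) 1, ψ i x ∈ Set.Icc (0:ℝ) 1
  hψmono : ∀ i, StrictMonoOn (ψ i) (Set.Icc (0:ℝ) 1)
  hbbI : ∀ w x, bb w x → x ∈ Set.Icc (0:ℝ) 1
  hopt : ∀ x ∈ Set.Icc (0:ℝ) 1, ∃ w, bb w x
  rule : ∀ w x w' x', bb w x → bb w' x' → x < x' → ¬ LLt w w'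
  closed : ∀ w, IsClosed {x | bb w x}
  Ele : ∀ x, x ∈ Set.Icc (0:ℝ) 1 → (∀ w, bb w x → w 0 = 1) → x ≤ c
  Esup : ∀ ε, 0 < ε → ∃ x', x' ∈ Set.Icc (0:ℝ) 1 ∧ c - ε < x' ∧ ∀ w, bb w x' → w 0 = 1
  renorm : ∀ w x, bb w x → bb (fun n => w (n+1)) (ψ (w 0) x)
  cnt : Set.Countable {w | ∃ x, bb w x}

namespace Ctx

variable (C : Ctx)

lemma eq_of_between {w w' : ℕ → Fin 2} {x₁ x₂ t : ℝ} (h1 : C.bb w x₁) (h2 : C.bb w x₂)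
    (ht : C.bb w' t) (hx1 : x₁ < t) (hx2 : t < x₂) : w' = w := by
  by_contra hne
  rcases llt_trichotomy hne with h | h
  · exact C.rule w' t w x₂ ht h2 hx2 h
  · exact C.rule w x₁ w' t h1 ht hx1 h

/-- optimality sets are order convex -/
lemma conv {w : ℕ → Fin 2} {x₁ x₂ t : ℝ} (h1 : C.bb w x₁) (h2 : C.bb w x₂)
    (hx1 : x₁ ≤ t) (hx2 : t ≤ x₂) : C.bb w t := by
  rcases eq_or_lt_of_le hx1 with rfl | hx1
  · exact h1
  rcases eq_or_lt_of_le hx2 with rfl | hx2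
  · exact h2
  have htI : t ∈ Set.Icc (0:ℝ) 1 := by
    have i1 := C.hbbI w x₁ h1
    have i2 := C.hbbI w x₂ h2
    simp only [Set.mem_Icc] at *
    constructor <;> [linarith [i1.1]; linarith [i2.2]]
  obtain ⟨w', hw'⟩ := C.hopt t htI
  have := C.eq_of_between h1 h2 hw' hx1 hx2
  rwa [this] at hw'

/-- below `c` every optimal sequence starts with `1`. -/
lemma E1 {w : ℕ → Fin 2} {x : ℝ} (h : C.bb w x) (hx : x < C.c) : w 0 = 1 := by
  obtain ⟨x', hx'I, hx'gt, hx'prop⟩ := C.Esup (C.c - x) (by linarith)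
  have hxx' : x < x' := by linarith
  obtain ⟨v, hv⟩ := C.hopt x' hx'I
  have hv1 : v 0 = 1 := hx'prop v hv
  by_contra h0
  have hw0 : w 0 = 0 := by omega
  exact C.rule w x v x' h hv hxx' ⟨0, fun m hm => absurd hm (Nat.not_lt_zero m),
    by rw [hw0, hv1]; exact fin2_zero_lt_one⟩

/-- above `c` every optimal sequence starts with `0`. -/
lemma E0 {w : ℕ → Fin 2} {y : ℝ} (h : C.bb w y) (hy : C.c < y) : w 0 = 0 := by
  by_contra h0
  have hw1 : w 0 = 1 := fin2_eq_one_of_ne_zero h0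
  set x := (C.c + y) / 2 with hxdef
  have hyI := C.hbbI w y h
  simp only [Set.mem_Icc] at hyI
  have hxI : x ∈ Set.Icc (0:ℝ) 1 := by
    simp only [Set.mem_Icc]
    constructor <;> [linarith [C.hc0.le]; linarith [hyI.2]]
  have hcx : C.c < x := by simp only [hxdef]; linarith
  have hxy : x < y := by simp only [hxdef]; linarith
  have hall : ∀ v, C.bb v x → v 0 = 1 := by
    intro v hv
    by_contra hv0
    have hv00 : v 0 = 0 := by omega
    exact C.rule v x w y hv h hxy ⟨0, fun m hm => absurd hm (Nat.not_lt_zero m),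
      by rw [hv00, hw1]; exact fin2_zero_lt_one⟩
  have := C.Ele x hxI hall
  linarith

/-- forward branch orbit of `x` along the symbols of `w`. -/
def orb (C : Ctx) (w : ℕ → Fin 2) (x : ℝ) : ℕ → ℝ
  | 0 => x
  | (k+1) => C.ψ (w k) (C.orb w x k)

lemma orb_mem {w : ℕ → Fin 2} {x : ℝ} (hx : x ∈ Set.Icc (0:ℝ) 1) :
    ∀ k, C.orb w x k ∈ Set.Icc (0:ℝ) 1 := by
  intro k
  induction k with
  | zero => exact hx
  | succ k ih => exact C.hψI (w k) _ ih

lemma orb_opt {w : ℕ → Fin 2} {x : ℝ} (h : C.bb w x) :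
    ∀ k, C.bb (fun n => w (n + k)) (C.orb w x k) := by
  intro k
  induction k with
  | zero =>
    have : (fun n => w (n + 0)) = w := by funext n; simp
    rw [this]; exact h
  | succ k ih =>
    have h2 := C.renorm _ _ ih
    have e1 : w (0 + k) = w k := congrArg w (by omega)
    have e2 : (fun n => w (n + 1 + k)) = (fun n => w (n + (k+1))) := by
      funext n; exact congrArg w (by omega)
    rw [e1, e2] at h2
    exact h2

lemma orb_congr {w w' : ℕ → Fin 2} {x : ℝ} {k : ℕ} (h : ∀ i, i < k → w' i = w i) :
    C.orb w' x k = C.orb w x k := by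
  induction k with
  | zero => rfl
  | succ k ih =>
    show C.ψ (w' k) (C.orb w' x k) = C.ψ (w k) (C.orb w x k)
    rw [h k (Nat.lt_succ_self k), ih (fun i hi => h i (Nat.lt_succ_of_lt hi))]

lemma orb_lt {w : ℕ → Fin 2} {x y : ℝ} (hx : x ∈ Set.Icc (0:ℝ) 1)
    (hy : y ∈ Set.Icc (0:ℝ) 1) (hxy : x < y) : ∀ k, C.orb w x k < C.orb w y k := by
  intro k
  induction k with
  | zero => exact hxy
  | succ k ih => exact C.hψmono (w k) (C.orb_mem hx k) (C.orb_mem hy k) ih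

/-- if the branch orbit of `y` along an optimal `w` never hits `c`, then `w` is the
unique optimal sequence at `y`. -/
lemma no_hit_unique {w : ℕ → Fin 2} {y : ℝ} (hw : C.bb w y)
    (hnh : ∀ k, C.orb w y k ≠ C.c) : ∀ w'', C.bb w'' y → w'' = w := by
  intro w'' hw''
  have hall : ∀ j, w'' j = w j := by
    intro j
    induction j using Nat.strong_induction_on with
    | _ j ih =>
      have horb : C.orb w'' y j = C.orb w y j := C.orb_congr ih
      have h1 : C.bb (fun n => w (n + j)) (C.orb w y j) := C.orb_opt hw j
      have h2 : C.bb (fun n => w'' (n + j)) (C.orb w y j) := by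
        have := C.orb_opt hw'' j
        rwa [horb] at this
      rcases lt_or_gt_of_ne (hnh j) with hlt | hgt
      · have a1 := C.E1 h1 hlt
        have a2 := C.E1 h2 hlt
        rw [Nat.zero_add] at a1 a2; rw [a1, a2]
      · have a1 := C.E0 h1 hgt
        have a2 := C.E0 h2 hgt
        rw [Nat.zero_add] at a1 a2; rw [a1, a2]
  exact funext hall

lemma pair_eq {w w' : ℕ → Fin 2} {p q : ℝ} (hpq : p < q) (hwp : C.bb w p) (hwq : C.bb w q)
    (hw'p : C.bb w' p) (hw'q : C.bb w' q) : w' = w := by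
  by_contra hne
  rcases llt_trichotomy hne with h | h
  · exact C.rule w' p w q hw'p hwq hpq h
  · exact C.rule w p w' q hwp hw'q hpq h

/-- if every point of `Ioo a b` has a neighborhood on which a single sequence is
optimal, then a single sequence is optimal on all of `Ioo a b`. -/
lemma glue {a b : ℝ} (hab : a < b)
    (H : ∀ y ∈ Set.Ioo a b, ∃ ε, 0 < ε ∧ ∃ w, ∀ x ∈ Set.Ioo (y - ε) (y + ε), C.bb w x) :
    ∃ w, ∀ x ∈ Set.Ioo a b, C.bb w x := by
  classical
  set y₀ := (a + b) / 2 with hy₀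
  have hy₀mem : y₀ ∈ Set.Ioo a b := ⟨by simp only [hy₀]; linarith, by simp only [hy₀]; linarith⟩
  obtain ⟨ε₀, hε₀, w₀, hball₀⟩ := H y₀ hy₀mem
  have hw₀y₀ : C.bb w₀ y₀ := hball₀ y₀ ⟨by linarith, by linarith⟩
  refine ⟨w₀, ?_⟩
  have right : ∀ t ∈ Set.Ioo a b, y₀ ≤ t → C.bb w₀ t := by
    by_contra hcon
    push_neg at hcon
    obtain ⟨t₀, ht₀io, ht₀y, ht₀nb⟩ := hcon
    set RS := {t | t ∈ Set.Ioo a b ∧ y₀ ≤ t ∧ ¬ C.bb w₀ t} with hRS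
    have hRSne : RS.Nonempty := ⟨t₀, ht₀io, ht₀y, ht₀nb⟩
    have hbdd : BddBelow RS := ⟨y₀, fun r hr => hr.2.1⟩
    set s := sInf RS with hsdef
    have hys : y₀ ≤ s := le_csInf hRSne (fun r hr => hr.2.1)
    have hsb : s < b := lt_of_le_of_lt (csInf_le hbdd ⟨ht₀io, ht₀y, ht₀nb⟩) ht₀io.2
    have hsa : a < s := lt_of_lt_of_le hy₀mem.1 hys
    obtain ⟨εs, hεs, ws, hballs⟩ := H s ⟨hsa, hsb⟩
    have hleft : ∀ t, t ∈ Set.Ioo a b → y₀ ≤ t → t < s → C.bb w₀ t := by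
      intro t htio hty hts
      by_contra hnb
      exact absurd (csInf_le hbdd ⟨htio, hty, hnb⟩) (not_le.mpr hts)
    have hwse : ws = w₀ := by
      by_cases hcase : y₀ + ε₀ ≤ s
      · -- far case: use two points just left of s
        have hy₀s : y₀ < s := by linarith
        set lo := max y₀ (s - εs) with hlo
        have hlos : lo < s := by
          apply max_lt hy₀s; linarith
        set p := lo + (s - lo) / 3 with hp
        set q := lo + 2 * (s - lo) / 3 with hq
        have hlop : lo < p := by simp only [hp]; linarith
        have hpq : p < q := by simp only [hp, hq]; linarith
        have hqs : q < s := by simp only [hq]; linarith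
        have hyp : y₀ ≤ p := le_trans (le_max_left _ _) hlop.le
        have hyq : y₀ ≤ q := le_trans hyp hpq.le
        have hpio : p ∈ Set.Ioo a b := ⟨lt_of_lt_of_le hy₀mem.1 hyp, by linarith⟩
        have hqio : q ∈ Set.Ioo a b := ⟨lt_of_lt_of_le hy₀mem.1 hyq, by linarith⟩
        have hpb : s - εs < p := lt_of_le_of_lt (le_max_right y₀ (s - εs)) hlop
        have hpball : p ∈ Set.Ioo (s - εs) (s + εs) := ⟨hpb, by linarith⟩
        have hqball : q ∈ Set.Ioo (s - εs) (s + εs) := ⟨by linarith, by linarith⟩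
        exact C.pair_eq hpq (hleft p hpio hyp (by linarith)) (hleft q hqio hyq hqs)
          (hballs p hpball) (hballs q hqball)
      · -- near case: s is in the ball around y₀
        push_neg at hcase
        have hsball₀ : s ∈ Set.Ioo (y₀ - ε₀) (y₀ + ε₀) := ⟨by linarith, hcase⟩
        set lo := max (y₀ - ε₀) (s - εs) with hlo
        have hlos : lo < s := max_lt (by linarith) (by linarith)
        set p := (lo + s) / 2 with hp
        have hlop : lo < p := by simp only [hp]; linarith
        have hps : p < s := by simp only [hp]; linarith
        have hpball₀ : p ∈ Set.Ioo (y₀ - ε₀) (y₀ + ε₀) :=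
          ⟨lt_of_le_of_lt (le_max_left _ _) hlop, by linarith⟩
        have hpballs : p ∈ Set.Ioo (s - εs) (s + εs) :=
          ⟨lt_of_le_of_lt (le_max_right _ _) hlop, by linarith⟩
        exact C.pair_eq hps (hball₀ p hpball₀) (hball₀ s hsball₀)
          (hballs p hpballs) (hballs s ⟨by linarith, by linarith⟩)
    obtain ⟨r, hrRS, hrlt⟩ : ∃ r ∈ RS, r < s + εs := by
      by_contra hno
      push_neg at hno
      have : s + εs ≤ s := le_csInf hRSne hno
      linarith
    have hrs : s ≤ r := csInf_le hbdd hrRS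
    have : C.bb w₀ r := by
      have := hballs r ⟨by linarith, hrlt⟩
      rwa [hwse] at this
    exact hrRS.2.2 this
  have left : ∀ t ∈ Set.Ioo a b, t ≤ y₀ → C.bb w₀ t := by
    by_contra hcon
    push_neg at hcon
    obtain ⟨t₀, ht₀io, ht₀y, ht₀nb⟩ := hcon
    set LS := {t | t ∈ Set.Ioo a b ∧ t ≤ y₀ ∧ ¬ C.bb w₀ t} with hLS
    have hLSne : LS.Nonempty := ⟨t₀, ht₀io, ht₀y, ht₀nb⟩
    have hbdd : BddAbove LS := ⟨y₀, fun r hr => hr.2.1⟩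
    set s := sSup LS with hsdef
    have hys : s ≤ y₀ := csSup_le hLSne (fun r hr => hr.2.1)
    have hsa : a < s := lt_of_lt_of_le ht₀io.1 (le_csSup hbdd ⟨ht₀io, ht₀y, ht₀nb⟩)
    have hsb : s < b := lt_of_le_of_lt hys hy₀mem.2
    obtain ⟨εs, hεs, ws, hballs⟩ := H s ⟨hsa, hsb⟩
    have hright : ∀ t, t ∈ Set.Ioo a b → t ≤ y₀ → s < t → C.bb w₀ t := by
      intro t htio hty hts
      by_contra hnb
      exact absurd (le_csSup hbdd ⟨htio, hty, hnb⟩) (not_le.mpr hts)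
    have hwse : ws = w₀ := by
      by_cases hcase : s ≤ y₀ - ε₀
      · have hy₀s : s < y₀ := by linarith
        set hi := min y₀ (s + εs) with hhi
        have hshi : s < hi := lt_min hy₀s (by linarith)
        set p := s + (hi - s) / 3 with hp
        set q := s + 2 * (hi - s) / 3 with hq
        have hsp : s < p := by simp only [hp]; linarith
        have hpq : p < q := by simp only [hp, hq]; linarith
        have hqhi : q < hi := by simp only [hq]; linarith
        have hpy : p ≤ y₀ := le_trans (by linarith : p ≤ hi) (min_le_left _ _)
        have hqy : q ≤ y₀ := le_trans hqhi.le (min_le_left _ _)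
        have hpio : p ∈ Set.Ioo a b := ⟨by linarith, lt_of_le_of_lt hpy hy₀mem.2⟩
        have hqio : q ∈ Set.Ioo a b := ⟨by linarith, lt_of_le_of_lt hqy hy₀mem.2⟩
        have hqb : q < s + εs := lt_of_lt_of_le hqhi (min_le_right y₀ (s + εs))
        have hpball : p ∈ Set.Ioo (s - εs) (s + εs) := ⟨by linarith, by linarith⟩
        have hqball : q ∈ Set.Ioo (s - εs) (s + εs) := ⟨by linarith, hqb⟩
        exact C.pair_eq hpq (hright p hpio hpy hsp) (hright q hqio hqy (by linarith))
          (hballs p hpball) (hballs q hqball)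
      · push_neg at hcase
        have hsball₀ : s ∈ Set.Ioo (y₀ - ε₀) (y₀ + ε₀) := ⟨hcase, by linarith⟩
        set hi := min (y₀ + ε₀) (s + εs) with hhi
        have hshi : s < hi := lt_min (by linarith) (by linarith)
        set q := (s + hi) / 2 with hq
        have hsq : s < q := by simp only [hq]; linarith
        have hqhi : q < hi := by simp only [hq]; linarith
        have hqball₀ : q ∈ Set.Ioo (y₀ - ε₀) (y₀ + ε₀) :=
          ⟨by linarith, lt_of_lt_of_le hqhi (min_le_left _ _)⟩
        have hqballs : q ∈ Set.Ioo (s - εs) (s + εs) :=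
          ⟨by linarith, lt_of_lt_of_le hqhi (min_le_right _ _)⟩
        exact C.pair_eq hsq (hball₀ s hsball₀) (hball₀ q hqball₀)
          (hballs s ⟨by linarith, by linarith⟩) (hballs q hqballs)
    obtain ⟨r, hrLS, hrgt⟩ : ∃ r ∈ LS, s - εs < r := by
      by_contra hno
      push_neg at hno
      have : s ≤ s - εs := csSup_le hLSne hno
      linarith
    have hrs : r ≤ s := le_csSup hbdd hrLS
    have : C.bb w₀ r := by
      have := hballs r ⟨hrgt, by linarith⟩
      rwa [hwse] at this
    exact hrLS.2.2 this
  intro x hx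
  rcases le_total y₀ x with h | h
  · exact right x hx h
  · exact left x hx h

/-- the set of "kink" points in `(0,1)`: no single optimal sequence covers a
neighborhood. -/
def Kk (C : Ctx) : Set ℝ :=
  {y | y ∈ Set.Ioo (0:ℝ) 1 ∧
    ¬ ∃ ε, 0 < ε ∧ ∃ w, ∀ x ∈ Set.Ioo (y - ε) (y + ε), C.bb w x}

lemma cover_of_no_kink {a b : ℝ} (hab : a < b) (hsub : Set.Ioo a b ⊆ Set.Ioo 0 1)
    (hnk : ∀ y ∈ Set.Ioo a b, y ∉ C.Kk) : ∃ w, ∀ x ∈ Set.Icc a b, C.bb w x := by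
  obtain ⟨w, hw⟩ := C.glue hab (fun y hy => by
    have h1 := hnk y hy
    simp only [Kk, Set.mem_setOf_eq, not_and, not_not] at h1
    exact h1 (hsub hy))
  refine ⟨w, fun x hx => ?_⟩
  have hcl : Set.Icc a b ⊆ {x | C.bb w x} := by
    rw [← closure_Ioo hab.ne]
    exact closure_minimal hw (C.closed w)
  exact hcl hx

lemma closure_Kk_countable : (closure C.Kk).Countable := by
  have hEPc : (⋃ w ∈ {w : ℕ → Fin 2 | ∃ x, C.bb w x},
      ({sInf {x | C.bb w x}, sSup {x | C.bb w x}} : Set ℝ)).Countable :=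
    C.cnt.biUnion (fun w _ => (Set.countable_singleton _).insert _)
  refine hEPc.mono ?_
  intro η hη
  have hηI : η ∈ Set.Icc (0:ℝ) 1 := by
    have h1 : closure C.Kk ⊆ Set.Icc 0 1 := by
      have h2 : C.Kk ⊆ Set.Ioo 0 1 := fun y hy => hy.1
      calc closure C.Kk ⊆ closure (Set.Ioo (0:ℝ) 1) := closure_mono h2
        _ = Set.Icc 0 1 := closure_Ioo (by norm_num)
    exact h1 hη
  obtain ⟨w, hw⟩ := C.hopt η hηI
  have hOsub : {x | C.bb w x} ⊆ Set.Icc (0:ℝ) 1 := fun x hx => C.hbbI w x hx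
  have hOcpt : IsCompact {x | C.bb w x} := isCompact_Icc.of_isClosed_subset (C.closed w) hOsub
  have hOne : Set.Nonempty {x | C.bb w x} := ⟨η, hw⟩
  have hinfO : sInf {x | C.bb w x} ∈ {x | C.bb w x} := hOcpt.sInf_mem hOne
  have hsupO : sSup {x | C.bb w x} ∈ {x | C.bb w x} := hOcpt.sSup_mem hOne
  have hbdda : BddAbove {x | C.bb w x} := ⟨1, fun x hx => (hOsub hx).2⟩
  have hbddb : BddBelow {x | C.bb w x} := ⟨0, fun x hx => (hOsub hx).1⟩
  have hWS : w ∈ {w : ℕ → Fin 2 | ∃ x, C.bb w x} := ⟨η, hw⟩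
  by_contra hno
  have hne1 : η ≠ sInf {x | C.bb w x} := by
    intro h
    exact hno (Set.mem_biUnion hWS (by rw [h]; exact Set.mem_insert _ _))
  have hne2 : η ≠ sSup {x | C.bb w x} := by
    intro h
    exact hno (Set.mem_biUnion hWS (by rw [h]; exact Set.mem_insert_of_mem _ rfl))
  have hlt1 : sInf {x | C.bb w x} < η := lt_of_le_of_ne (csInf_le hbddb hw) (Ne.symm hne1)
  have hlt2 : η < sSup {x | C.bb w x} := lt_of_le_of_ne (le_csSup hbdda hw) hne2
  set ε := min (η - sInf {x | C.bb w x}) (sSup {x | C.bb w x} - η) with hεdef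
  have hεpos : 0 < ε := lt_min (by linarith) (by linarith)
  have hε1 : ε ≤ η - sInf {x | C.bb w x} := min_le_left _ _
  have hε2 : ε ≤ sSup {x | C.bb w x} - η := min_le_right _ _
  rw [mem_closure_iff] at hη
  obtain ⟨z, hzo, hzK⟩ := hη (Set.Ioo (η - ε) (η + ε)) isOpen_Ioo ⟨by linarith, by linarith⟩
  have hz1 : sInf {x | C.bb w x} < z := by have := hzo.1; linarith
  have hz2 : z < sSup {x | C.bb w x} := by have := hzo.2; linarith
  apply hzK.2
  refine ⟨min (z - sInf {x | C.bb w x}) (sSup {x | C.bb w x} - z),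
    lt_min (by linarith) (by linarith), w, ?_⟩
  intro x hx
  have hm1 : min (z - sInf {x | C.bb w x}) (sSup {x | C.bb w x} - z)
      ≤ z - sInf {x | C.bb w x} := min_le_left _ _
  have hm2 : min (z - sInf {x | C.bb w x}) (sSup {x | C.bb w x} - z)
      ≤ sSup {x | C.bb w x} - z := min_le_right _ _
  exact C.conv hinfO hsupO (by have := hx.1; linarith) (by have := hx.2; linarith)

lemma uncountable_contradiction (hne : C.Kk.Nonempty)
    (hacc : ∀ y ∈ C.Kk, ∀ ε, 0 < ε → ∃ z ∈ C.Kk, z ≠ y ∧ |z - y| < ε) : False := by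
  have hpre : Preperfect C.Kk := by
    rw [preperfect_iff_nhds]
    intro x hx U hU
    rw [Metric.mem_nhds_iff] at hU
    obtain ⟨ε, hε, hball⟩ := hU
    obtain ⟨z, hzK, hzne, hzd⟩ := hacc x hx ε hε
    exact ⟨z, ⟨hball (by rw [Metric.mem_ball, Real.dist_eq]; exact hzd), hzK⟩, hzne⟩
  have hperf : Perfect (closure C.Kk) := hpre.perfect_closure
  obtain ⟨f, hrange, _, hinj⟩ := hperf.exists_nat_bool_injection hne.closure
  have hc1 : (Set.range f).Countable := C.closure_Kk_countable.mono hrange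
  have hc2 : (f ⁻¹' (Set.range f)).Countable := hc1.preimage hinj
  rw [Set.preimage_range] at hc2
  exact not_countable_nat_bool (Set.countable_univ_iff.mp hc2)

lemma leftGood : ∃ δ, 0 < δ ∧ ∃ w, ∀ x ∈ Set.Ioc (C.c - δ) C.c, C.bb w x := by
  by_contra hbad
  push_neg at hbad
  have hc0 := C.hc0
  have hc1 := C.hc1
  have hKnear : ∀ ε, 0 < ε → ∃ y, y ∈ C.Kk ∧ C.c - ε < y ∧ y < C.c := by
    intro ε hε
    by_contra hno
    push_neg at hno
    set a := max (C.c - ε) (C.c / 2) with ha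
    have hac : a < C.c := max_lt (by linarith) (by linarith)
    have hnk : ∀ y ∈ Set.Ioo a C.c, y ∉ C.Kk := by
      intro y hy hyK
      have h1 : C.c - ε < y := lt_of_le_of_lt (le_max_left _ _) hy.1
      have := hno y hyK h1
      linarith [hy.2]
    have hsub : Set.Ioo a C.c ⊆ Set.Ioo 0 1 := by
      intro x hx
      have h1 : C.c / 2 ≤ a := le_max_right _ _
      exact ⟨by linarith [hx.1], by linarith [hx.2]⟩
    obtain ⟨w, hw⟩ := C.cover_of_no_kink hac hsub hnk
    obtain ⟨x, hx, hnb⟩ := hbad (C.c - a) (by linarith) w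
    exact hnb (hw x ⟨by linarith [hx.1], hx.2⟩)
  have hacc : ∀ y ∈ C.Kk, ∀ ε, 0 < ε → ∃ z ∈ C.Kk, z ≠ y ∧ |z - y| < ε := by
    intro y hyK ε hε
    obtain ⟨hyIoo, hynk⟩ := hyK
    by_cases hL : ∀ ε', 0 < ε' → ∃ z, z ∈ C.Kk ∧ y - ε' < z ∧ z < y
    · obtain ⟨z, hzK, hz1, hz2⟩ := hL ε hε
      exact ⟨z, hzK, ne_of_lt hz2, by rw [abs_sub_lt_iff]; constructor <;> linarith⟩
    · push_neg at hL
      obtain ⟨ε₁, hε₁, hno1⟩ := hL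
      set ε₂ := min ε₁ (y / 2) with hε₂
      have hε₂pos : 0 < ε₂ := lt_min hε₁ (by linarith [hyIoo.1])
      have hε₂le : ε₂ ≤ ε₁ := min_le_left _ _
      have hε₂le2 : ε₂ ≤ y / 2 := min_le_right _ _
      have hnk2 : ∀ t ∈ Set.Ioo (y - ε₂) y, t ∉ C.Kk := by
        intro t ht htK
        have := hno1 t htK (by linarith [ht.1])
        linarith [ht.2]
      have hsub2 : Set.Ioo (y - ε₂) y ⊆ Set.Ioo 0 1 := by
        intro t ht
        exact ⟨by linarith [ht.1, hyIoo.1], lt_trans ht.2 hyIoo.2⟩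
      obtain ⟨w, hw⟩ := C.cover_of_no_kink (by linarith : y - ε₂ < y) hsub2 hnk2
      have hwy : C.bb w y := hw y ⟨by linarith, le_refl y⟩
      by_cases hhit : ∃ k, C.orb w y k = C.c
      · exfalso
        obtain ⟨k, hk⟩ := hhit
        have hu : C.bb (fun n => w (n + k)) C.c := by
          have := C.orb_opt hwy k
          rwa [hk] at this
        have hwx₁ : C.bb w (y - ε₂) := hw (y - ε₂) ⟨le_refl _, by linarith⟩
        have hx₁I := C.hbbI w (y - ε₂) hwx₁
        have hyI := C.hbbI w y hwy
        have hux : C.bb (fun n => w (n + k)) (C.orb w (y - ε₂) k) := C.orb_opt hwx₁ k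
        have hlt : C.orb w (y - ε₂) k < C.c := by
          have := C.orb_lt (w := w) hx₁I hyI (by linarith : y - ε₂ < y) k
          rwa [hk] at this
        obtain ⟨x, hx, hnb⟩ := hbad (C.c - C.orb w (y - ε₂) k) (by linarith)
          (fun n => w (n + k))
        exact hnb (C.conv hux hu (by linarith [hx.1]) hx.2)
      · push_neg at hhit
        have huniq := C.no_hit_unique hwy hhit
        by_contra hno2
        push_neg at hno2
        set ε₃ := min ε ((1 - y) / 2) with hε₃
        have hε₃pos : 0 < ε₃ := lt_min hε (by linarith [hyIoo.2])
        have hε₃le : ε₃ ≤ ε := min_le_left _ _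
        have hε₃le2 : ε₃ ≤ (1 - y) / 2 := min_le_right _ _
        have hnk3 : ∀ t ∈ Set.Ioo y (y + ε₃), t ∉ C.Kk := by
          intro t ht htK
          have h1 : t ≠ y := ne_of_gt ht.1
          have h2 := hno2 t htK h1
          have habs : |t - y| < ε := by
            rw [abs_sub_lt_iff]
            constructor <;> [linarith [ht.2]; linarith [ht.1]]
          linarith
        have hsub3 : Set.Ioo y (y + ε₃) ⊆ Set.Ioo 0 1 := by
          intro t ht
          exact ⟨lt_trans hyIoo.1 ht.1, by linarith [ht.2, hyIoo.2]⟩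
        obtain ⟨w₂, hw₂⟩ := C.cover_of_no_kink (by linarith : y < y + ε₃) hsub3 hnk3
        have hw₂y : C.bb w₂ y := hw₂ y ⟨le_refl _, by linarith⟩
        have heq : w₂ = w := huniq w₂ hw₂y
        rw [heq] at hw₂
        apply hynk
        refine ⟨min ε₂ ε₃, lt_min hε₂pos hε₃pos, w, ?_⟩
        intro x hx
        have hm1 : min ε₂ ε₃ ≤ ε₂ := min_le_left _ _
        have hm2 : min ε₂ ε₃ ≤ ε₃ := min_le_right _ _
        rcases le_total x y with hxy | hxy
        · exact hw x ⟨by linarith [hx.1], hxy⟩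
        · exact hw₂ x ⟨hxy, by linarith [hx.2]⟩
  obtain ⟨y₀, hy₀K, _, _⟩ := hKnear (C.c / 2) (by linarith)
  exact C.uncountable_contradiction ⟨y₀, hy₀K⟩ hacc

lemma rightGood : ∃ δ, 0 < δ ∧ ∃ w, ∀ x ∈ Set.Ico C.c (C.c + δ), C.bb w x := by
  by_contra hbad
  push_neg at hbad
  have hc0 := C.hc0
  have hc1 := C.hc1
  have hKnear : ∀ ε, 0 < ε → ∃ y, y ∈ C.Kk ∧ C.c < y ∧ y < C.c + ε := by
    intro ε hε
    by_contra hno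
    push_neg at hno
    set a := min (C.c + ε) ((C.c + 1) / 2) with ha
    have hac : C.c < a := lt_min (by linarith) (by linarith)
    have hnk : ∀ y ∈ Set.Ioo C.c a, y ∉ C.Kk := by
      intro y hy hyK
      have h1 : y < C.c + ε := lt_of_lt_of_le hy.2 (min_le_left _ _)
      have := hno y hyK hy.1
      linarith
    have hsub : Set.Ioo C.c a ⊆ Set.Ioo 0 1 := by
      intro x hx
      have h1 : a ≤ (C.c + 1) / 2 := min_le_right _ _
      exact ⟨by linarith [hx.1], by linarith [hx.2]⟩
    obtain ⟨w, hw⟩ := C.cover_of_no_kink hac hsub hnk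
    obtain ⟨x, hx, hnb⟩ := hbad (a - C.c) (by linarith) w
    exact hnb (hw x ⟨hx.1, by linarith [hx.2]⟩)
  have hacc : ∀ y ∈ C.Kk, ∀ ε, 0 < ε → ∃ z ∈ C.Kk, z ≠ y ∧ |z - y| < ε := by
    intro y hyK ε hε
    obtain ⟨hyIoo, hynk⟩ := hyK
    by_cases hR : ∀ ε', 0 < ε' → ∃ z, z ∈ C.Kk ∧ y < z ∧ z < y + ε'
    · obtain ⟨z, hzK, hz1, hz2⟩ := hR ε hε
      exact ⟨z, hzK, ne_of_gt hz1, by rw [abs_sub_lt_iff]; constructor <;> linarith⟩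
    · push_neg at hR
      obtain ⟨ε₁, hε₁, hno1⟩ := hR
      set ε₂ := min ε₁ ((1 - y) / 2) with hε₂
      have hε₂pos : 0 < ε₂ := lt_min hε₁ (by linarith [hyIoo.2])
      have hε₂le : ε₂ ≤ ε₁ := min_le_left _ _
      have hε₂le2 : ε₂ ≤ (1 - y) / 2 := min_le_right _ _
      have hnk2 : ∀ t ∈ Set.Ioo y (y + ε₂), t ∉ C.Kk := by
        intro t ht htK
        have := hno1 t htK ht.1
        linarith [ht.2]
      have hsub2 : Set.Ioo y (y + ε₂) ⊆ Set.Ioo 0 1 := by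
        intro t ht
        exact ⟨lt_trans hyIoo.1 ht.1, by linarith [ht.2, hyIoo.2]⟩
      obtain ⟨w, hw⟩ := C.cover_of_no_kink (by linarith : y < y + ε₂) hsub2 hnk2
      have hwy : C.bb w y := hw y ⟨le_refl y, by linarith⟩
      by_cases hhit : ∃ k, C.orb w y k = C.c
      · exfalso
        obtain ⟨k, hk⟩ := hhit
        have hu : C.bb (fun n => w (n + k)) C.c := by
          have := C.orb_opt hwy k
          rwa [hk] at this
        have hwx₁ : C.bb w (y + ε₂) := hw (y + ε₂) ⟨by linarith, le_refl _⟩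
        have hx₁I := C.hbbI w (y + ε₂) hwx₁
        have hyI := C.hbbI w y hwy
        have hux : C.bb (fun n => w (n + k)) (C.orb w (y + ε₂) k) := C.orb_opt hwx₁ k
        have hlt : C.c < C.orb w (y + ε₂) k := by
          have := C.orb_lt (w := w) hyI hx₁I (by linarith : y < y + ε₂) k
          rwa [hk] at this
        obtain ⟨x, hx, hnb⟩ := hbad (C.orb w (y + ε₂) k - C.c) (by linarith)
          (fun n => w (n + k))
        exact hnb (C.conv hu hux hx.1 (by linarith [hx.2]))
      · push_neg at hhit
        have huniq := C.no_hit_unique hwy hhit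
        by_contra hno2
        push_neg at hno2
        set ε₃ := min ε (y / 2) with hε₃
        have hε₃pos : 0 < ε₃ := lt_min hε (by linarith [hyIoo.1])
        have hε₃le : ε₃ ≤ ε := min_le_left _ _
        have hε₃le2 : ε₃ ≤ y / 2 := min_le_right _ _
        have hnk3 : ∀ t ∈ Set.Ioo (y - ε₃) y, t ∉ C.Kk := by
          intro t ht htK
          have h1 : t ≠ y := ne_of_lt ht.2
          have h2 := hno2 t htK h1
          have habs : |t - y| < ε := by
            rw [abs_sub_lt_iff]
            constructor <;> [linarith [ht.2]; linarith [ht.1]]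
          linarith
        have hsub3 : Set.Ioo (y - ε₃) y ⊆ Set.Ioo 0 1 := by
          intro t ht
          exact ⟨by linarith [ht.1, hyIoo.1], lt_trans ht.2 hyIoo.2⟩
        obtain ⟨w₂, hw₂⟩ := C.cover_of_no_kink (by linarith : y - ε₃ < y) hsub3 hnk3
        have hw₂y : C.bb w₂ y := hw₂ y ⟨by linarith, le_refl y⟩
        have heq : w₂ = w := huniq w₂ hw₂y
        rw [heq] at hw₂
        apply hynk
        refine ⟨min ε₂ ε₃, lt_min hε₂pos hε₃pos, w, ?_⟩
        intro x hx
        have hm1 : min ε₂ ε₃ ≤ ε₂ := min_le_left _ _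
        have hm2 : min ε₂ ε₃ ≤ ε₃ := min_le_right _ _
        rcases le_total x y with hxy | hxy
        · exact hw₂ x ⟨by linarith [hx.1], hxy⟩
        · exact hw x ⟨hxy, by linarith [hx.2]⟩
  obtain ⟨y₀, hy₀K, _, _⟩ := hKnear ((1 - C.c) / 2) (by linarith)
  exact C.uncountable_contradiction ⟨y₀, hy₀K⟩ hacc

end Ctx
end Stmt16Aux


/-- Lemma 7.2 of the paper.
If `W` is twist and `A` satisfies the countable condition (the set of `w ∈ Σ` optimal
for some `x ∈ I` is countable), then the turning point `c` is isolated from its forward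
orbit on both sides: there are `δ > 0` and `w⁻, w⁺ ∈ Σ` with `b(w⁻,x) = 0` for all
`x ∈ (c−δ, c]` and `b(w⁺,x) = 0` for all `x ∈ [c, c+δ)`. -/
theorem stmt16
    -- the expanding onto map f of degree d and its inverse branches ψ_i
    (f : ℝ → ℝ) (ψ : Fin 2 → ℝ → ℝ)
    (hψI : ∀ i, ∀ x ∈ Icc (0:ℝ) 1, ψ i x ∈ Icc (0:ℝ) 1)
    (hfψ : ∀ i, ∀ x ∈ Icc (0:ℝ) 1, f (ψ i x) = x)
    -- the metric d(ω,γ) = 2^{-n} on Σ, n the first position at which ω and γ disagree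
    (dSig : (ℕ → Fin 2) → (ℕ → Fin 2) → ℝ)
    (hdSigeq : ∀ ω, dSig ω ω = 0)
    (hdSig : ∀ ω γ : ℕ → Fin 2, ∀ n : ℕ, (∀ m, m < n → ω m = γ m) → ω n ≠ γ n →
      dSig ω γ = (2:ℝ)⁻¹ ^ n)
    -- the Hölder potential A, with m(A) = 0
    (A : ℝ → ℝ) (hA : ∃ (C r : ℝ≥0), 0 < r ∧ HolderWith C r A)
    (hmA : (∀ ν : MeasureTheory.Measure ℝ, MeasureTheory.IsProbabilityMeasure ν →
        ν (Icc (0:ℝ) 1) = 1 → (∀ s : Set ℝ, MeasurableSet s → ν (f ⁻¹' s) = ν s) →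
        ∫ x, A x ∂ν ≤ 0) ∧
      ∃ ν : MeasureTheory.Measure ℝ, MeasureTheory.IsProbabilityMeasure ν ∧
        ν (Icc (0:ℝ) 1) = 1 ∧ (∀ s : Set ℝ, MeasurableSet s → ν (f ⁻¹' s) = ν s) ∧
        ∫ x, A x ∂ν = 0)
    -- a continuous involution kernel W for A, with Hölder dual potential A*, m(A*) = 0
    (W : (ℕ → Fin 2) → ℝ → ℝ)
    (hWcont : Continuous (fun p : (ℕ → Fin 2) × ℝ => W p.1 p.2))
    (Astar : (ℕ → Fin 2) → ℝ)
    (hAstarHolder : ∃ C θ : ℝ, 0 < C ∧ 0 < θ ∧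
      ∀ w w' : ℕ → Fin 2, |Astar w - Astar w'| ≤ C * (dSig w w') ^ θ)
    (hW : ∀ w : ℕ → Fin 2, ∀ x ∈ Icc (0:ℝ) 1,
      Astar w = A (ψ (w 0) x) + W (fun n => w (n + 1)) (ψ (w 0) x) - W w x)
    (hmAstar : (∀ ν : MeasureTheory.Measure (ℕ → Fin 2),
        MeasureTheory.IsProbabilityMeasure ν →
        (∀ s : Set (ℕ → Fin 2), MeasurableSet s →
          ν ((fun (w : ℕ → Fin 2) (n : ℕ) => w (n + 1)) ⁻¹' s) = ν s) →
        ∫ w, Astar w ∂ν ≤ 0) ∧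
      ∃ ν : MeasureTheory.Measure (ℕ → Fin 2), MeasureTheory.IsProbabilityMeasure ν ∧
        (∀ s : Set (ℕ → Fin 2), MeasurableSet s →
          ν ((fun (w : ℕ → Fin 2) (n : ℕ) => w (n + 1)) ⁻¹' s) = ν s) ∧
        ∫ w, Astar w ∂ν = 0)
    -- calibrated subactions V for A and V* for A*
    (V : ℝ → ℝ)
    (hVcal : ∀ x ∈ Icc (0:ℝ) 1,
      (∀ y ∈ Icc (0:ℝ) 1, f y = x → V y + A y ≤ V x) ∧
      ∃ y ∈ Icc (0:ℝ) 1, f y = x ∧ V x = V y + A y)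
    (Vstar : (ℕ → Fin 2) → ℝ)
    (hVstarcal : ∀ w : ℕ → Fin 2,
      (∀ w' : ℕ → Fin 2, (fun n => w' (n + 1)) = w → Vstar w' + Astar w' ≤ Vstar w) ∧
      ∃ w' : ℕ → Fin 2, (fun n => w' (n + 1)) = w ∧ Vstar w = Vstar w' + Astar w')
    -- R, R*, the deviation function I*, and the function b
    (R : ℝ → ℝ) (hR : ∀ x, R x = V (f x) - V x - A x)
    (hRnonneg : ∀ x ∈ Icc (0:ℝ) 1, 0 ≤ R x)
    (Rstar : (ℕ → Fin 2) → ℝ)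
    (hRstar : ∀ w : ℕ → Fin 2, Rstar w = Vstar (fun n => w (n + 1)) - Vstar w - Astar w)
    (hRstarnonneg : ∀ w, 0 ≤ Rstar w)
    (Istar : (ℕ → Fin 2) → ℝ≥0∞)
    (hIstar : ∀ w : ℕ → Fin 2, Istar w = ∑' n : ℕ, ENNReal.ofReal (Rstar (fun m => w (m + n))))
    (b : (ℕ → Fin 2) → ℝ → EReal)
    (hb : ∀ w x, b w x = ((Vstar w + V x - W w x : ℝ) : EReal) + (Istar w : EReal))
    -- V(x) = sup_w (W(w,x) − V*(w) − I*(w)), so that b ≥ 0, and optimal w's exist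
    (hVsup : ∀ x ∈ Icc (0:ℝ) 1,
      (V x : EReal) = ⨆ w : ℕ → Fin 2, (((W w x - Vstar w : ℝ) : EReal) - (Istar w : EReal)))
    (hbnonneg : ∀ w : ℕ → Fin 2, ∀ x ∈ Icc (0:ℝ) 1, 0 ≤ b w x)
    (hopt : ∀ x ∈ Icc (0:ℝ) 1, ∃ w : ℕ → Fin 2, b w x = 0)
    -- f preserves orientation: the inverse branches are increasing, ψ₀ to the left of ψ₁
    (hψmono : ∀ i, StrictMonoOn (ψ i) (Icc (0:ℝ) 1))
    (hψorder : ∀ x ∈ Icc (0:ℝ) 1, ∀ y ∈ Icc (0:ℝ) 1, ψ 0 x ≤ ψ 1 y)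
    -- the strict lexicographic order on Σ = {0,1}^ℕ and the twist condition for W
    (lexLt : (ℕ → Fin 2) → (ℕ → Fin 2) → Prop)
    (hlex : ∀ a a' : ℕ → Fin 2,
      lexLt a a' ↔ ∃ n : ℕ, (∀ m, m < n → a m = a' m) ∧ a n < a' n)
    (htwist : ∀ a a' : ℕ → Fin 2, ∀ x x' : ℝ, x ∈ Icc (0:ℝ) 1 → x' ∈ Icc (0:ℝ) 1 →
      lexLt a a' → x < x' → W a x + W a' x' < W a x' + W a' x)
    -- the turning point c
    (c : ℝ)
    (hcdef : c = sSup {x | x ∈ Icc (0:ℝ) 1 ∧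
      ∀ w : ℕ → Fin 2, b w x = 0 → w 0 = 1})
    (hc01 : 0 < c ∧ c < 1)
    -- the countable condition
    (hcount : Set.Countable {w : ℕ → Fin 2 | ∃ x ∈ Icc (0:ℝ) 1, b w x = 0}) :
    -- conclusion
    ∃ δ > (0:ℝ), ∃ wminus wplus : ℕ → Fin 2,
      (∀ x ∈ Ioc (c - δ) c, b wminus x = 0) ∧
      (∀ x ∈ Ico c (c + δ), b wplus x = 0) := by
  classical
  obtain ⟨hc0, hc1⟩ := hc01
  have coeE : ∀ i : ℝ≥0∞, i ≠ ⊤ → (i : EReal) = ((i.toReal : ℝ) : EReal) := by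
    intro i hi
    obtain ⟨r, hr⟩ := (ENNReal.lt_iff_exists_coe.mp (lt_top_iff_ne_top.mpr hi)).imp
      (fun r h => h.1)
    rw [hr, EReal.coe_nnreal_eq_coe_real, ENNReal.coe_toReal]
  have m1 : ∀ w x, b w x = 0 → Istar w ≠ ⊤ := by
    intro w x h0 htop
    rw [hb, htop, EReal.coe_ennreal_top,
      EReal.add_top_of_ne_bot (EReal.coe_ne_bot _)] at h0
    simp at h0
  have m2 : ∀ w x, b w x = 0 → Vstar w + V x - W w x + (Istar w).toReal = 0 := by
    intro w x h0
    have hfin := m1 w x h0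
    rw [hb, coeE _ hfin, ← EReal.coe_add] at h0
    exact_mod_cast h0
  have m4 : ∀ w x, Istar w ≠ ⊤ → Vstar w + V x - W w x + (Istar w).toReal = 0 →
      b w x = 0 := by
    intro w x hfin heq
    rw [hb, coeE _ hfin, ← EReal.coe_add, heq, EReal.coe_zero]
  have m3 : ∀ w, ∀ x ∈ Icc (0:ℝ) 1, Istar w ≠ ⊤ →
      0 ≤ Vstar w + V x - W w x + (Istar w).toReal := by
    intro w x hx hfin
    have hnn := hbnonneg w x hx
    rw [hb, coeE _ hfin, ← EReal.coe_add] at hnn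
    exact_mod_cast hnn
  set bb : (ℕ → Fin 2) → ℝ → Prop := fun w x => x ∈ Icc (0:ℝ) 1 ∧ b w x = 0 with hbbdef
  have hrule : ∀ w x w' x', bb w x → bb w' x' → x < x' →
      ¬ ∃ n : ℕ, (∀ m, m < n → w m = w' m) ∧ w n < w' n := by
    rintro w x w' x' ⟨hxI, h0⟩ ⟨hx'I, h0'⟩ hxx' hlt
    have hfin := m1 w x h0
    have hfin' := m1 w' x' h0'
    have e1 := m2 w x h0
    have e2 := m2 w' x' h0'
    have i3 := m3 w x' hx'I hfin
    have i4 := m3 w' x hxI hfin'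
    have htw := htwist w w' x x' hxI hx'I ((hlex w w').mpr hlt) hxx'
    linarith
  -- uniform continuity of W in the second variable, by compactness of the shift space
  have hWbound : ∀ x₀ : ℝ, ∀ ε : ℝ, 0 < ε → ∃ δ, 0 < δ ∧
      ∀ x, |x - x₀| < δ → ∀ w, |W w x - W w x₀| ≤ ε := by
    intro x₀ ε hε
    have hcont2 : Continuous (fun p : (ℕ → Fin 2) × ℝ => |W p.1 p.2 - W p.1 x₀|) := by
      apply Continuous.abs
      exact hWcont.sub (hWcont.comp (continuous_fst.prodMk continuous_const))
    have hopen : IsOpen {p : (ℕ → Fin 2) × ℝ | |W p.1 p.2 - W p.1 x₀| < ε} :=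
      isOpen_lt hcont2 continuous_const
    have hsub : (Set.univ : Set (ℕ → Fin 2)) ×ˢ ({x₀} : Set ℝ) ⊆
        {p : (ℕ → Fin 2) × ℝ | |W p.1 p.2 - W p.1 x₀| < ε} := by
      rintro ⟨w, x⟩ ⟨-, hx⟩
      simp only [Set.mem_singleton_iff] at hx
      simp [hx, hε]
    obtain ⟨u, v, hu, hv, hsu, htv, huv⟩ :=
      generalized_tube_lemma isCompact_univ isCompact_singleton hopen hsub
    obtain ⟨δ, hδ, hball⟩ := Metric.isOpen_iff.mp hv x₀ (htv rfl)
    refine ⟨δ, hδ, fun x hx w => ?_⟩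
    have hmem : (w, x) ∈ u ×ˢ v :=
      ⟨hsu trivial, hball (by rwa [Metric.mem_ball, Real.dist_eq])⟩
    exact le_of_lt (huv hmem)
  have hVshift : ∀ x ∈ Icc (0:ℝ) 1, ∀ x' ∈ Icc (0:ℝ) 1, ∀ r : ℝ,
      (∀ w, W w x - W w x' ≤ r) → V x ≤ V x' + r := by
    intro x hx x' hx' r hr
    have h1 : (V x : EReal) ≤ ((V x' + r : ℝ) : EReal) := by
      rw [hVsup x hx]
      apply iSup_le
      intro w
      by_cases hfin : Istar w = ⊤
      · rw [hfin, EReal.coe_ennreal_top]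
        have hbot : ((W w x - Vstar w : ℝ) : EReal) - ⊤ = ⊥ := rfl
        rw [hbot]
        exact bot_le
      · rw [coeE _ hfin, ← EReal.coe_sub]
        have h3 : ((W w x' - Vstar w - (Istar w).toReal : ℝ) : EReal) ≤ (V x' : EReal) := by
          rw [hVsup x' hx']
          refine le_trans (le_of_eq ?_) (le_iSup _ w)
          rw [coeE _ hfin, ← EReal.coe_sub]
        have h2 : ((W w x - Vstar w - (Istar w).toReal : ℝ) : EReal)
            ≤ ((W w x' - Vstar w - (Istar w).toReal : ℝ) : EReal) + (r : EReal) := by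
          rw [← EReal.coe_add]
          exact_mod_cast (by linarith [hr w] :
            (W w x - Vstar w - (Istar w).toReal : ℝ) ≤ W w x' - Vstar w - (Istar w).toReal + r)
        refine le_trans h2 ?_
        calc ((W w x' - Vstar w - (Istar w).toReal : ℝ) : EReal) + (r : EReal)
            ≤ (V x' : EReal) + (r : EReal) := add_le_add h3 le_rfl
          _ = ((V x' + r : ℝ) : EReal) := by rw [← EReal.coe_add]
    exact_mod_cast h1
  have hVcont : ContinuousOn V (Icc (0:ℝ) 1) := by
    intro x₀ hx₀
    rw [Metric.continuousWithinAt_iff]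
    intro ε hε
    obtain ⟨δ, hδ, hδb⟩ := hWbound x₀ (ε/2) (by linarith)
    refine ⟨δ, hδ, fun {x} hxI hxd => ?_⟩
    have hbd := hδb x (by rwa [Real.dist_eq] at hxd)
    have h1 : V x ≤ V x₀ + ε/2 := hVshift x hxI x₀ hx₀ (ε/2) (fun w =>
      by have := abs_le.mp (hbd w); linarith [this.2])
    have h2 : V x₀ ≤ V x + ε/2 := hVshift x₀ hx₀ x hxI (ε/2) (fun w =>
      by have := abs_le.mp (hbd w); linarith [this.1])
    rw [Real.dist_eq, abs_sub_lt_iff]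
    constructor <;> linarith
  have hclosed : ∀ w, IsClosed {x | bb w x} := by
    intro w
    by_cases hfin : Istar w = ⊤
    · have hempty : {x | bb w x} = ∅ := by
        rw [Set.eq_empty_iff_forall_notMem]
        rintro x ⟨hxI, h0⟩
        exact m1 w x h0 hfin
      rw [hempty]
      exact isClosed_empty
    · have heq : {x | bb w x} = Icc (0:ℝ) 1 ∩
          (fun x => Vstar w + V x - W w x + (Istar w).toReal) ⁻¹' {0} := by
        ext x
        constructor
        · rintro ⟨hxI, h0⟩
          exact ⟨hxI, m2 w x h0⟩
        · rintro ⟨hxI, h0⟩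
          exact ⟨hxI, m4 w x hfin h0⟩
      rw [heq]
      refine ContinuousOn.preimage_isClosed_of_isClosed ?_ isClosed_Icc isClosed_singleton
      refine ContinuousOn.add (ContinuousOn.sub (continuousOn_const.add hVcont) ?_)
        continuousOn_const
      exact (hWcont.comp (continuous_const.prodMk continuous_id)).continuousOn
  have hEne : {x | x ∈ Icc (0:ℝ) 1 ∧ ∀ w : ℕ → Fin 2, b w x = 0 → w 0 = 1}.Nonempty := by
    by_contra hne
    rw [Set.not_nonempty_iff_eq_empty] at hne
    rw [hne, Real.sSup_empty] at hcdef
    linarith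
  have hEbdd : BddAbove {x | x ∈ Icc (0:ℝ) 1 ∧ ∀ w : ℕ → Fin 2, b w x = 0 → w 0 = 1} :=
    ⟨1, fun x hx => hx.1.2⟩
  have hEle : ∀ x, x ∈ Icc (0:ℝ) 1 → (∀ w, bb w x → w 0 = 1) → x ≤ c := by
    intro x hxI hall
    rw [hcdef]
    exact le_csSup hEbdd ⟨hxI, fun w h0 => hall w ⟨hxI, h0⟩⟩
  have hEsup : ∀ ε, 0 < ε → ∃ x', x' ∈ Icc (0:ℝ) 1 ∧ c - ε < x' ∧
      ∀ w, bb w x' → w 0 = 1 := by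
    intro ε hε
    have hlt : c - ε < sSup {x | x ∈ Icc (0:ℝ) 1 ∧ ∀ w : ℕ → Fin 2, b w x = 0 → w 0 = 1} := by
      rw [← hcdef]; linarith
    obtain ⟨x', hx'E, hx'gt⟩ := exists_lt_of_lt_csSup hEne hlt
    exact ⟨x', hx'E.1, hx'gt, fun w hw => hx'E.2 w hw.2⟩
  have hIsplit : ∀ w : ℕ → Fin 2,
      Istar w = ENNReal.ofReal (Rstar w) + Istar (fun n => w (n+1)) := by
    intro w
    rw [hIstar w, hIstar (fun n => w (n+1)), tsum_eq_zero_add' ENNReal.summable]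
    have e1 : (fun m => w (m + 0)) = w := by
      funext m
      exact congrArg w (by omega)
    rw [e1]
    congr 1
  have hrenorm : ∀ w x, bb w x → bb (fun n => w (n+1)) (ψ (w 0) x) := by
    rintro w x ⟨hxI, h0⟩
    have hfin := m1 w x h0
    have hψxI := hψI (w 0) x hxI
    have hsplit := hIsplit w
    have hfin' : Istar (fun n => w (n+1)) ≠ ⊤ := by
      intro h
      apply hfin
      rw [hsplit, h]
      simp
    have htr : (Istar w).toReal = Rstar w + (Istar (fun n => w (n+1))).toReal := by
      rw [hsplit, ENNReal.toReal_add ENNReal.ofReal_ne_top hfin',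
        ENNReal.toReal_ofReal (hRstarnonneg w)]
    have e0 := m2 w x h0
    have hWeq := hW w x hxI
    have hRs := hRstar w
    have hRψ : R (ψ (w 0) x) = V x - V (ψ (w 0) x) - A (ψ (w 0) x) := by
      rw [hR, hfψ (w 0) x hxI]
    have hRψnn := hRnonneg (ψ (w 0) x) hψxI
    have hbσnn := m3 (fun n => w (n+1)) (ψ (w 0) x) hψxI hfin'
    have key : (Vstar (fun n => w (n+1)) + V (ψ (w 0) x)
        - W (fun n => w (n+1)) (ψ (w 0) x) + (Istar (fun n => w (n+1))).toReal)
        + R (ψ (w 0) x) = 0 := by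
      rw [hRψ]
      linarith
    have hz : Vstar (fun n => w (n+1)) + V (ψ (w 0) x)
        - W (fun n => w (n+1)) (ψ (w 0) x) + (Istar (fun n => w (n+1))).toReal = 0 := by
      linarith
    exact ⟨hψxI, m4 _ _ hfin' hz⟩
  set C : Stmt16Aux.Ctx := {
    ψ := ψ
    bb := bb
    c := c
    hc0 := hc0
    hc1 := hc1
    hψI := hψI
    hψmono := hψmono
    hbbI := fun w x h => h.1
    hopt := fun x hx => (hopt x hx).imp (fun w h0 => ⟨hx, h0⟩)
    rule := hrule
    closed := hclosed
    Ele := hEle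
    Esup := hEsup
    renorm := hrenorm
    cnt := hcount } with hCdef
  obtain ⟨δ₁, hδ₁, wminus, hwm⟩ := C.leftGood
  obtain ⟨δ₂, hδ₂, wplus, hwp⟩ := C.rightGood
  refine ⟨min (min δ₁ δ₂) (min c (1 - c)), lt_min (lt_min hδ₁ hδ₂) (lt_min hc0 (by linarith)),
    wminus, wplus, ?_, ?_⟩
  · intro x hx
    have hmin : min (min δ₁ δ₂) (min c (1 - c)) ≤ δ₁ :=
      le_trans (min_le_left _ _) (min_le_left _ _)
    exact (hwm x ⟨by have := hx.1; linarith, hx.2⟩).2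
  · intro x hx
    have hmin : min (min δ₁ δ₂) (min c (1 - c)) ≤ δ₂ :=
      le_trans (min_le_left _ _) (min_le_right _ _)
    exact (hwp x ⟨hx.1, by have := hx.2; linarith⟩).2
end

section
/- Suppose W satisfies the twist condition, the maximizing probability for A is unique and is supported on a periodic orbit of f, and the turning point c is eventually periodic for f (fⁿ(c) = f^m(c) for some n ≠ m). Then the calibrated subaction V is real analytic up to a finite number of points: there exist finitely many points 0 = t_0 < t_1 < … < t_N = 1 such that V is real analytic on each open interval (t_{j−1}, t_j). -/
open Set Filter Topology
open scoped NNReal ENNReal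

private def Yorb (ψ : Fin 2 → ℝ → ℝ) (u : ℕ → Fin 2) (x : ℝ) : ℕ → ℝ
  | 0 => x
  | n + 1 => ψ (u n) (Yorb ψ u x n)

private lemma Yorb_mem {ψ : Fin 2 → ℝ → ℝ} (hψI : ∀ i, ∀ x ∈ Icc (0:ℝ) 1, ψ i x ∈ Icc (0:ℝ) 1)
    {u : ℕ → Fin 2} {x : ℝ} (hx : x ∈ Icc (0:ℝ) 1) : ∀ n, Yorb ψ u x n ∈ Icc (0:ℝ) 1
  | 0 => hx
  | n + 1 => hψI (u n) _ (Yorb_mem hψI hx n)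

private lemma Yorb_iter {f : ℝ → ℝ} {ψ : Fin 2 → ℝ → ℝ}
    (hψI : ∀ i, ∀ x ∈ Icc (0:ℝ) 1, ψ i x ∈ Icc (0:ℝ) 1)
    (hfψ : ∀ i, ∀ x ∈ Icc (0:ℝ) 1, f (ψ i x) = x)
    {u : ℕ → Fin 2} {x : ℝ} (hx : x ∈ Icc (0:ℝ) 1) : ∀ n, f^[n] (Yorb ψ u x n) = x
  | 0 => rfl
  | n + 1 => by
    rw [Function.iterate_succ_apply]
    have h1 : f (Yorb ψ u x (n+1)) = Yorb ψ u x n := hfψ (u n) _ (Yorb_mem hψI hx n)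
    rw [h1]
    exact Yorb_iter hψI hfψ hx n

private lemma Yorb_congr {ψ : Fin 2 → ℝ → ℝ} {u u' : ℕ → Fin 2} {x : ℝ} :
    ∀ n, (∀ m, m < n → u m = u' m) → Yorb ψ u x n = Yorb ψ u' x n
  | 0, _ => rfl
  | n + 1, h => by
    show ψ (u n) (Yorb ψ u x n) = ψ (u' n) (Yorb ψ u' x n)
    rw [h n (by omega), Yorb_congr n (fun m hm => h m (by omega))]

private lemma Yorb_cont {ψ : Fin 2 → ℝ → ℝ}
    (hψI : ∀ i, ∀ x ∈ Icc (0:ℝ) 1, ψ i x ∈ Icc (0:ℝ) 1)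
    (hψc : ∀ i, ContinuousOn (ψ i) (Icc (0:ℝ) 1)) (u : ℕ → Fin 2) :
    ∀ n, ContinuousOn (fun ξ => Yorb ψ u ξ n) (Icc (0:ℝ) 1)
  | 0 => continuousOn_id
  | n + 1 => ContinuousOn.comp (hψc (u n)) (Yorb_cont hψI hψc u n)
      (fun _ hξ => Yorb_mem hψI hξ n)

/-- Theorem 7.2, the main theorem of the paper.
If `W` is twist, the maximizing probability for `A` is unique and supported on a
periodic orbit, and the turning point `c` is eventually periodic for `f`, then the
calibrated subaction `V` is real analytic up to a finite number of points: there are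
`0 = t₀ < t₁ < … < t_N = 1` with `V` real analytic on each `(t_{j−1}, t_j)`. -/
theorem stmt18
    -- the expanding onto map f of degree d and its inverse branches ψ_i
    (f : ℝ → ℝ) (ψ : Fin 2 → ℝ → ℝ)
    (hψI : ∀ i, ∀ x ∈ Icc (0:ℝ) 1, ψ i x ∈ Icc (0:ℝ) 1)
    (hfψ : ∀ i, ∀ x ∈ Icc (0:ℝ) 1, f (ψ i x) = x)
    -- the metric d(ω,γ) = 2^{-n} on Σ, n the first position at which ω and γ disagree
    (dSig : (ℕ → Fin 2) → (ℕ → Fin 2) → ℝ)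
    (hdSigeq : ∀ ω, dSig ω ω = 0)
    (hdSig : ∀ ω γ : ℕ → Fin 2, ∀ n : ℕ, (∀ m, m < n → ω m = γ m) → ω n ≠ γ n →
      dSig ω γ = (2:ℝ)⁻¹ ^ n)
    -- the Hölder potential A, with m(A) = 0
    (A : ℝ → ℝ) (hA : ∃ (C r : ℝ≥0), 0 < r ∧ HolderWith C r A)
    (hmA : (∀ ν : MeasureTheory.Measure ℝ, MeasureTheory.IsProbabilityMeasure ν →
        ν (Icc (0:ℝ) 1) = 1 → (∀ s : Set ℝ, MeasurableSet s → ν (f ⁻¹' s) = ν s) →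
        ∫ x, A x ∂ν ≤ 0) ∧
      ∃ ν : MeasureTheory.Measure ℝ, MeasureTheory.IsProbabilityMeasure ν ∧
        ν (Icc (0:ℝ) 1) = 1 ∧ (∀ s : Set ℝ, MeasurableSet s → ν (f ⁻¹' s) = ν s) ∧
        ∫ x, A x ∂ν = 0)
    -- a continuous involution kernel W for A, with Hölder dual potential A*, m(A*) = 0
    (W : (ℕ → Fin 2) → ℝ → ℝ)
    (hWcont : Continuous (fun p : (ℕ → Fin 2) × ℝ => W p.1 p.2))
    (Astar : (ℕ → Fin 2) → ℝ)
    (hAstarHolder : ∃ C θ : ℝ, 0 < C ∧ 0 < θ ∧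
      ∀ w w' : ℕ → Fin 2, |Astar w - Astar w'| ≤ C * (dSig w w') ^ θ)
    (hW : ∀ w : ℕ → Fin 2, ∀ x ∈ Icc (0:ℝ) 1,
      Astar w = A (ψ (w 0) x) + W (fun n => w (n + 1)) (ψ (w 0) x) - W w x)
    (hmAstar : (∀ ν : MeasureTheory.Measure (ℕ → Fin 2),
        MeasureTheory.IsProbabilityMeasure ν →
        (∀ s : Set (ℕ → Fin 2), MeasurableSet s →
          ν ((fun (w : ℕ → Fin 2) (n : ℕ) => w (n + 1)) ⁻¹' s) = ν s) →
        ∫ w, Astar w ∂ν ≤ 0) ∧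
      ∃ ν : MeasureTheory.Measure (ℕ → Fin 2), MeasureTheory.IsProbabilityMeasure ν ∧
        (∀ s : Set (ℕ → Fin 2), MeasurableSet s →
          ν ((fun (w : ℕ → Fin 2) (n : ℕ) => w (n + 1)) ⁻¹' s) = ν s) ∧
        ∫ w, Astar w ∂ν = 0)
    -- calibrated subactions V for A and V* for A*
    (V : ℝ → ℝ)
    (hVcal : ∀ x ∈ Icc (0:ℝ) 1,
      (∀ y ∈ Icc (0:ℝ) 1, f y = x → V y + A y ≤ V x) ∧
      ∃ y ∈ Icc (0:ℝ) 1, f y = x ∧ V x = V y + A y)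
    (Vstar : (ℕ → Fin 2) → ℝ)
    (hVstarcal : ∀ w : ℕ → Fin 2,
      (∀ w' : ℕ → Fin 2, (fun n => w' (n + 1)) = w → Vstar w' + Astar w' ≤ Vstar w) ∧
      ∃ w' : ℕ → Fin 2, (fun n => w' (n + 1)) = w ∧ Vstar w = Vstar w' + Astar w')
    -- R, R*, the deviation function I*, and the function b
    (R : ℝ → ℝ) (hR : ∀ x, R x = V (f x) - V x - A x)
    (hRnonneg : ∀ x ∈ Icc (0:ℝ) 1, 0 ≤ R x)
    (Rstar : (ℕ → Fin 2) → ℝ)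
    (hRstar : ∀ w : ℕ → Fin 2, Rstar w = Vstar (fun n => w (n + 1)) - Vstar w - Astar w)
    (hRstarnonneg : ∀ w, 0 ≤ Rstar w)
    (Istar : (ℕ → Fin 2) → ℝ≥0∞)
    (hIstar : ∀ w : ℕ → Fin 2, Istar w = ∑' n : ℕ, ENNReal.ofReal (Rstar (fun m => w (m + n))))
    (b : (ℕ → Fin 2) → ℝ → EReal)
    (hb : ∀ w x, b w x = ((Vstar w + V x - W w x : ℝ) : EReal) + (Istar w : EReal))
    -- V(x) = sup_w (W(w,x) − V*(w) − I*(w)), so that b ≥ 0, and optimal w's exist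
    (hVsup : ∀ x ∈ Icc (0:ℝ) 1,
      (V x : EReal) = ⨆ w : ℕ → Fin 2, (((W w x - Vstar w : ℝ) : EReal) - (Istar w : EReal)))
    (hbnonneg : ∀ w : ℕ → Fin 2, ∀ x ∈ Icc (0:ℝ) 1, 0 ≤ b w x)
    (hopt : ∀ x ∈ Icc (0:ℝ) 1, ∃ w : ℕ → Fin 2, b w x = 0)
    -- f preserves orientation: the inverse branches are increasing, ψ₀ to the left of ψ₁
    (hψmono : ∀ i, StrictMonoOn (ψ i) (Icc (0:ℝ) 1))
    (hψorder : ∀ x ∈ Icc (0:ℝ) 1, ∀ y ∈ Icc (0:ℝ) 1, ψ 0 x ≤ ψ 1 y)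
    -- the strict lexicographic order on Σ = {0,1}^ℕ and the twist condition for W
    (lexLt : (ℕ → Fin 2) → (ℕ → Fin 2) → Prop)
    (hlex : ∀ a a' : ℕ → Fin 2,
      lexLt a a' ↔ ∃ n : ℕ, (∀ m, m < n → a m = a' m) ∧ a n < a' n)
    (htwist : ∀ a a' : ℕ → Fin 2, ∀ x x' : ℝ, x ∈ Icc (0:ℝ) 1 → x' ∈ Icc (0:ℝ) 1 →
      lexLt a a' → x < x' → W a x + W a' x' < W a x' + W a' x)
    -- the turning point c
    (c : ℝ)
    (hcdef : c = sSup {x | x ∈ Icc (0:ℝ) 1 ∧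
      ∀ w : ℕ → Fin 2, b w x = 0 → w 0 = 1})
    -- the complex neighborhood O of I, univalent extensions of the inverse branches
    (O : Set ℂ) (hOopen : IsOpen O) (hObdd : Bornology.IsBounded O)
    (hOsc : SimplyConnectedSpace O)
    (hIO : ∀ x : ℝ, x ∈ Icc (0:ℝ) 1 → (x : ℂ) ∈ O)
    (Ψ : Fin 2 → ℂ → ℂ)
    (hΨdiff : ∀ i, DifferentiableOn ℂ (Ψ i) O) (hΨinj : ∀ i, InjOn (Ψ i) O)
    (hΨψ : ∀ i, ∀ x ∈ Icc (0:ℝ) 1, Ψ i (x : ℂ) = ((ψ i x : ℝ) : ℂ))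
    -- A = log g with g real analytic and positive, admitting a nonvanishing
    -- complex analytic extension G to O
    (g : ℝ → ℝ) (hgpos : ∀ x ∈ Icc (0:ℝ) 1, 0 < g x)
    (hAlog : ∀ x ∈ Icc (0:ℝ) 1, A x = Real.log (g x))
    (G : ℂ → ℂ) (hGdiff : DifferentiableOn ℂ G O) (hGne : ∀ z ∈ O, G z ≠ 0)
    (hGg : ∀ x ∈ Icc (0:ℝ) 1, G (x : ℂ) = ((g x : ℝ) : ℂ))
    -- for each fixed w, x ↦ W(w,x) extends holomorphically to O, uniformly boundedly in w
    (M : ℝ) (Wext : (ℕ → Fin 2) → ℂ → ℂ)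
    (hWext : ∀ w : ℕ → Fin 2, DifferentiableOn ℂ (Wext w) O ∧
      (∀ x ∈ Icc (0:ℝ) 1, Wext w (x : ℂ) = ((W w x : ℝ) : ℂ)) ∧
      ∀ z ∈ O, ‖Wext w z‖ ≤ M)
    -- the maximizing probability for A is unique and supported on a periodic orbit
    (νmax : MeasureTheory.Measure ℝ) (p : ℝ) (N : ℕ) (hN : 0 < N)
    (hpI : p ∈ Icc (0:ℝ) 1) (hper : f^[N] p = p)
    (hνmaxdef : νmax
      = (N : ENNReal)⁻¹ • ∑ j ∈ Finset.range N, MeasureTheory.Measure.dirac (f^[j] p))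
    (hνmaxprob : MeasureTheory.IsProbabilityMeasure νmax)
    (hνmaxI : νmax (Icc (0:ℝ) 1) = 1)
    (hνmaxinv : ∀ s : Set ℝ, MeasurableSet s → νmax (f ⁻¹' s) = νmax s)
    (hνmaxmax : ∫ x, A x ∂νmax = 0)
    (hνmaxuniq : ∀ ν : MeasureTheory.Measure ℝ, MeasureTheory.IsProbabilityMeasure ν →
      ν (Icc (0:ℝ) 1) = 1 → (∀ s : Set ℝ, MeasurableSet s → ν (f ⁻¹' s) = ν s) →
      ∫ x, A x ∂ν = 0 → ν = νmax)
    -- the turning point c is eventually periodic for f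
    (hcper : ∃ n m : ℕ, n ≠ m ∧ f^[n] c = f^[m] c) :
    -- conclusion: V is piecewise real analytic with finitely many pieces
    ∃ NN : ℕ, 0 < NN ∧ ∃ t : ℕ → ℝ, t 0 = 0 ∧ t NN = 1 ∧
      (∀ j, j < NN → t j < t (j + 1)) ∧
      ∀ j, j < NN → AnalyticOnNhd ℝ V (Ioo (t j) (t (j + 1))) := by
    classical
  -- name the set defining the turning point
  set S : Set ℝ := {x | x ∈ Icc (0:ℝ) 1 ∧ ∀ w : ℕ → Fin 2, b w x = 0 → w 0 = 1} with hSdef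
  -- continuity of the inverse branches, from the holomorphic extensions
  have hψcont : ∀ i, ContinuousOn (ψ i) (Icc (0:ℝ) 1) := by
    intro i
    have h1 : ContinuousOn (fun ξ : ℝ => (Ψ i (ξ:ℂ)).re) (Icc (0:ℝ) 1) :=
      Complex.continuous_re.comp_continuousOn
        (((hΨdiff i).continuousOn).comp (Complex.continuous_ofReal.continuousOn)
          (fun x hx => hIO x hx))
    exact h1.congr (fun x hx => by simp [hΨψ i x hx])
  -- real-number reformulation of optimality
  have bfin : ∀ u x, b u x = 0 → Istar u ≠ ⊤ := by
    intro u x h hI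
    rw [hb, hI, EReal.coe_ennreal_top,
      EReal.add_top_of_ne_bot (EReal.coe_ne_bot _)] at h
    exact EReal.top_ne_zero h
  have coeIstar : ∀ u : ℕ → Fin 2, Istar u ≠ ⊤ →
      (((Istar u).toReal : ℝ) : EReal) = (Istar u : EReal) := by
    intro u h
    rw [← ENNReal.ofReal_toReal h]
    exact_mod_cast rfl
  have beq : ∀ u x, b u x = 0 → Vstar u + V x - W u x + (Istar u).toReal = 0 := by
    intro u x h
    have hfin := bfin u x h
    rw [hb, ← coeIstar u hfin, ← EReal.coe_add] at h
    exact_mod_cast h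
  have bge : ∀ u x, x ∈ Icc (0:ℝ) 1 → Istar u ≠ ⊤ →
      0 ≤ Vstar u + V x - W u x + (Istar u).toReal := by
    intro u x hx hfin
    have h := hbnonneg u x hx
    rw [hb, ← coeIstar u hfin, ← EReal.coe_add] at h
    exact_mod_cast h
  have bzero : ∀ u x, Istar u ≠ ⊤ → Vstar u + V x - W u x + (Istar u).toReal = 0 →
      b u x = 0 := by
    intro u x hfin h
    rw [hb, ← coeIstar u hfin, ← EReal.coe_add, h]
    exact EReal.coe_zero
  -- twist monotonicity of optimal sequences
  have hmono : ∀ x x' u u', x ∈ Icc (0:ℝ) 1 → x' ∈ Icc (0:ℝ) 1 → x < x' →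
      b u x = 0 → b u' x' = 0 → ¬ lexLt u u' := by
    intro x x' u u' hx hx' hlt hu hu' hlex'
    have e1 := beq u x hu
    have e2 := beq u' x' hu'
    have g1 := bge u' x hx (bfin u' x' hu')
    have g2 := bge u x' hx' (bfin u x hu)
    have ht := htwist u u' x x' hx hx' hlex' hlt
    linarith
  have fin2 : ∀ v : Fin 2, v = 0 ∨ v = 1 := by decide
  have hlex0 : ∀ u v : ℕ → Fin 2, u 0 < v 0 → lexLt u v := by
    intro u v h
    exact (hlex u v).2 ⟨0, fun m hm => absurd hm (Nat.not_lt_zero m), h⟩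
  have hge0 : ∀ u v : ℕ → Fin 2, ¬ lexLt u v → v 0 ≤ u 0 := by
    intro u v h
    by_contra hc
    exact h (hlex0 u v (lt_of_not_ge hc))
  have hSbdd : BddAbove S := ⟨1, fun y hy => hy.1.2⟩
  have hcge0 : 0 ≤ c := by
    rw [hcdef]
    exact Real.sSup_nonneg (fun y hy => hy.1.1)
  -- the first symbol of an optimal sequence is determined by the side of c
  have hfirst1 : ∀ u x, x ∈ Icc (0:ℝ) 1 → b u x = 0 → x < c → u 0 = 1 := by
    intro u x hx hbu hxc
    have hSne : S.Nonempty := by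
      rcases Set.eq_empty_or_nonempty S with h | h
      · exfalso
        rw [hcdef, h, Real.sSup_empty] at hxc
        linarith [hx.1]
      · exact h
    obtain ⟨s, hsS, hxs⟩ := exists_lt_of_lt_csSup hSne (by rw [← hcdef]; exact hxc)
    obtain ⟨ws, hws⟩ := hopt s hsS.1
    have hws1 : ws 0 = 1 := hsS.2 ws hws
    have hle := hge0 u ws (hmono x s u ws hx hsS.1 hxs hbu hws)
    rcases fin2 (u 0) with h0 | h1
    · rw [hws1, h0] at hle
      exact absurd hle (by decide)
    · exact h1
  have hfirst0 : ∀ u x, x ∈ Icc (0:ℝ) 1 → b u x = 0 → c < x → u 0 = 0 := by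
    intro u x hx hbu hcx
    rcases fin2 (u 0) with h0 | h1
    · exact h0
    exfalso
    have hz1 : c < (c + x)/2 := by linarith
    have hz2 : (c + x)/2 < x := by linarith
    have hzI : (c + x)/2 ∈ Icc (0:ℝ) 1 := ⟨by linarith, by linarith [hx.2]⟩
    have hzS : (c + x)/2 ∈ S := by
      refine ⟨hzI, ?_⟩
      intro w hw
      have hle := hge0 w u (hmono ((c + x)/2) x w u hzI hx hz2 hw hbu)
      rw [h1] at hle
      rcases fin2 (w 0) with h' | h'
      · rw [h'] at hle
        exact absurd hle (by decide)
      · exact h'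
    have h2 : (c + x)/2 ≤ sSup S := le_csSup hSbdd hzS
    rw [← hcdef] at h2
    linarith
  -- optimality is shift invariant along the inverse branches
  have hshift : ∀ u x, x ∈ Icc (0:ℝ) 1 → b u x = 0 →
      b (fun n => u (n+1)) (ψ (u 0) x) = 0 := by
    intro u x hx hbu
    have hfin := bfin u x hbu
    have hy : ψ (u 0) x ∈ Icc (0:ℝ) 1 := hψI _ x hx
    have hsplit : Istar u = ENNReal.ofReal (Rstar u) + Istar (fun n => u (n+1)) := by
      rw [hIstar u, hIstar (fun n => u (n+1)), tsum_eq_zero_add' ENNReal.summable]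
      rfl
    have hfin' : Istar (fun n => u (n+1)) ≠ ⊤ := by
      intro h
      rw [hsplit, h, add_top] at hfin
      exact hfin rfl
    have htr : (Istar u).toReal = Rstar u + (Istar (fun n => u (n+1))).toReal := by
      rw [hsplit, ENNReal.toReal_add ENNReal.ofReal_ne_top hfin',
        ENNReal.toReal_ofReal (hRstarnonneg u)]
    have e1 := beq u x hbu
    have eW := hW u x hx
    have eR : R (ψ (u 0) x) = V x - V (ψ (u 0) x) - A (ψ (u 0) x) := by
      rw [hR, hfψ _ x hx]
    have hRy := hRnonneg _ hy
    have hbge := bge (fun n => u (n+1)) (ψ (u 0) x) hy hfin'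
    have hrs := hRstar u
    apply bzero _ _ hfin'
    linarith
  -- iterated optimality along the backward orbit
  have hiter : ∀ u x, x ∈ Icc (0:ℝ) 1 → b u x = 0 →
      ∀ n, b (fun m => u (m + n)) (Yorb ψ u x n) = 0 := by
    intro u x hx hbu n
    induction n with
    | zero => exact hbu
    | succ n ih =>
      show b (fun m => u (m + (n+1))) (ψ (u n) (Yorb ψ u x n)) = 0
      have e1 : (fun m => u (m + (n+1))) = (fun m => u (m + 1 + n)) := by
        funext m
        congr 1
        omega
      have e2 : u n = u (0 + n) := by rw [Nat.zero_add]
      rw [e1, e2]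
      exact hshift (fun k => u (k + n)) (Yorb ψ u x n) (Yorb_mem hψI hx n) ih
  -- uniqueness of the optimal coding on intervals avoiding the orbit of c
  have huniq : ∀ x x', x ∈ Icc (0:ℝ) 1 → x' ∈ Icc (0:ℝ) 1 →
      (∀ ξ ∈ uIcc x x', ∀ n : ℕ, f^[n] c ≠ ξ) →
      ∀ u u', b u x = 0 → b u' x' = 0 → u = u' := by
    intro x x' hx hx' hgapx u u' hu hu'
    have hsub : uIcc x x' ⊆ Icc (0:ℝ) 1 := (Set.ordConnected_Icc).uIcc_subset hx hx'
    have key : ∀ n, u n = u' n := by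
      intro n
      induction n using Nat.strong_induction_on with
      | _ n IH =>
        have hbn := hiter u x hx hu n
        have hbn' := hiter u' x' hx' hu' n
        have hYmem : Yorb ψ u x n ∈ Icc (0:ℝ) 1 := Yorb_mem hψI hx n
        have hY'mem : Yorb ψ u' x' n ∈ Icc (0:ℝ) 1 := Yorb_mem hψI hx' n
        have hYne : Yorb ψ u x n ≠ c := by
          intro h
          refine hgapx x Set.left_mem_uIcc n ?_
          rw [← h]
          exact Yorb_iter hψI hfψ hx n
        have hY'ne : Yorb ψ u' x' n ≠ c := by
          intro h
          refine hgapx x' Set.right_mem_uIcc n ?_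
          rw [← h]
          exact Yorb_iter hψI hfψ hx' n
        have hmid : c ∈ uIcc (Yorb ψ u x n) (Yorb ψ u' x' n) → False := by
          intro hc
          have hcongr : Yorb ψ u x' n = Yorb ψ u' x' n := Yorb_congr n (fun m hm => IH m hm)
          rw [← hcongr] at hc
          have hctn : ContinuousOn (fun ξ => Yorb ψ u ξ n) (uIcc x x') :=
            (Yorb_cont hψI hψcont u n).mono hsub
          obtain ⟨ξ, hξmem, hξeq⟩ := intermediate_value_uIcc hctn hc
          have hξeq' : Yorb ψ u ξ n = c := hξeq
          refine hgapx ξ hξmem n ?_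
          rw [← hξeq']
          exact Yorb_iter hψI hfψ (hsub hξmem) n
        have hside : (Yorb ψ u x n < c ∧ Yorb ψ u' x' n < c) ∨
            (c < Yorb ψ u x n ∧ c < Yorb ψ u' x' n) := by
          rcases lt_or_gt_of_ne hYne with h1 | h1 <;>
            rcases lt_or_gt_of_ne hY'ne with h2 | h2
          · exact Or.inl ⟨h1, h2⟩
          · exact absurd (show c ∈ uIcc (Yorb ψ u x n) (Yorb ψ u' x' n) from
              Set.mem_uIcc.2 (Or.inl ⟨le_of_lt h1, le_of_lt h2⟩)) hmid
          · exact absurd (show c ∈ uIcc (Yorb ψ u x n) (Yorb ψ u' x' n) from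
              Set.mem_uIcc.2 (Or.inr ⟨le_of_lt h2, le_of_lt h1⟩)) hmid
          · exact Or.inr ⟨h1, h2⟩
        rcases hside with ⟨ha, hb'⟩ | ⟨ha, hb'⟩
        · have ea : u (0 + n) = 1 := hfirst1 _ _ hYmem hbn ha
          have eb : u' (0 + n) = 1 := hfirst1 _ _ hY'mem hbn' hb'
          rw [Nat.zero_add] at ea eb
          rw [ea, eb]
        · have ea : u (0 + n) = 0 := hfirst0 _ _ hYmem hbn ha
          have eb : u' (0 + n) = 0 := hfirst0 _ _ hY'mem hbn' hb'
          rw [Nat.zero_add] at ea eb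
          rw [ea, eb]
    exact funext key
  -- the forward orbit of c is finite
  obtain ⟨n₀, m₀, hnm, hper'⟩ := hcper
  have hperiod : f^[max n₀ m₀] c = f^[min n₀ m₀] c := by
    rcases le_total n₀ m₀ with h | h
    · rw [max_eq_right h, min_eq_left h]
      exact hper'.symm
    · rw [max_eq_left h, min_eq_right h]
      exact hper'
  have horb : ∀ k : ℕ, ∃ j, j < max n₀ m₀ ∧ f^[k] c = f^[j] c := by
    intro k
    induction k using Nat.strong_induction_on with
    | _ k IH =>
      by_cases hk : k < max n₀ m₀
      · exact ⟨k, hk, rfl⟩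
      · push_neg at hk
        have h1 : f^[k] c = f^[k - max n₀ m₀ + min n₀ m₀] c := by
          calc f^[k] c = f^[(k - max n₀ m₀) + max n₀ m₀] c := by
                congr 1
                omega
            _ = f^[k - max n₀ m₀] (f^[max n₀ m₀] c) :=
                Function.iterate_add_apply f _ _ c
            _ = f^[k - max n₀ m₀] (f^[min n₀ m₀] c) := by rw [hperiod]
            _ = f^[k - max n₀ m₀ + min n₀ m₀] c :=
                (Function.iterate_add_apply f _ _ c).symm
        have hlt : k - max n₀ m₀ + min n₀ m₀ < k := by omega
        obtain ⟨j, hj, he⟩ := IH _ hlt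
        exact ⟨j, hj, h1.trans he⟩
  -- the finite set of partition points
  set clamp : ℝ → ℝ := fun z => max 0 (min 1 z) with hclampdef
  set Tfin : Finset ℝ := (Finset.range (max n₀ m₀)).image (fun j => clamp (f^[j] c)) with hTfindef
  set sfin : Finset ℝ := insert 0 (insert 1 Tfin) with hsfindef
  have hs01 : ∀ z ∈ sfin, 0 ≤ z ∧ z ≤ 1 := by
    intro z hz
    rcases Finset.mem_insert.mp hz with h | h
    · subst h; norm_num
    rcases Finset.mem_insert.mp h with h | h
    · subst h; norm_num
    obtain ⟨j, _, hj⟩ := Finset.mem_image.mp h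
    rw [← hj]
    exact ⟨le_max_left _ _, max_le zero_le_one (min_le_left _ _)⟩
  have h0s : (0:ℝ) ∈ sfin := Finset.mem_insert_self _ _
  have h1s : (1:ℝ) ∈ sfin := Finset.mem_insert_of_mem (Finset.mem_insert_self _ _)
  have horbs : ∀ k : ℕ, 0 < f^[k] c → f^[k] c < 1 → f^[k] c ∈ sfin := by
    intro k h0 h1
    obtain ⟨j, hj, he⟩ := horb k
    have hcl : clamp (f^[j] c) = f^[k] c := by
      rw [← he]
      simp only [hclampdef]
      rw [min_eq_right (le_of_lt h1), max_eq_right (le_of_lt h0)]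
    exact Finset.mem_insert_of_mem (Finset.mem_insert_of_mem
      (Finset.mem_image.mpr ⟨j, Finset.mem_range.mpr hj, hcl⟩))
  set L : List ℝ := sfin.sort (· ≤ ·) with hLdef
  have hLsorted : L.SortedLT := Finset.sortedLT_sort _
  have hLlen : 2 ≤ L.length := by
    rw [hLdef, Finset.length_sort]
    have hsub : ({0, 1} : Finset ℝ) ⊆ sfin :=
      Finset.insert_subset_iff.mpr ⟨h0s, Finset.singleton_subset_iff.mpr h1s⟩
    calc 2 = ({0, 1} : Finset ℝ).card := (Finset.card_pair (by norm_num : (0:ℝ) ≠ 1)).symm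
      _ ≤ sfin.card := Finset.card_le_card hsub
  have hmemL : ∀ z, z ∈ L ↔ z ∈ sfin := fun z => Finset.mem_sort _
  have hget : ∀ (j : ℕ) (h : j < L.length), L.getD j 1 = L.get ⟨j, h⟩ := by
    intro j h
    rw [List.getD_eq_getElem L 1 h]
    simp
  have hmonoL : ∀ (i j : ℕ) (hi : i < L.length) (hj : j < L.length), i ≤ j →
      L.get ⟨i, hi⟩ ≤ L.get ⟨j, hj⟩ := by
    intro i j hi hj hij
    exact hLsorted.strictMono_get.monotone (by simp [Fin.le_def]; omega)
  have hmonoLs : ∀ (i j : ℕ) (hi : i < L.length) (hj : j < L.length), i < j →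
      L.get ⟨i, hi⟩ < L.get ⟨j, hj⟩ := by
    intro i j hi hj hij
    exact hLsorted.strictMono_get (by simp [Fin.lt_def]; omega)
  have hbound : ∀ (i : Fin L.length), 0 ≤ L.get i ∧ L.get i ≤ 1 :=
    fun i => hs01 _ ((hmemL _).mp (L.get_mem i))
  refine ⟨L.length - 1, by omega, fun j => L.getD j 1, ?_, ?_, ?_, ?_⟩
  · -- t 0 = 0
    show L.getD 0 1 = 0
    have h0len : 0 < L.length := by omega
    rw [hget 0 h0len]
    obtain ⟨i, hi⟩ := List.mem_iff_get.mp ((hmemL (0:ℝ)).mpr h0s)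
    have hle : L.get ⟨0, h0len⟩ ≤ L.get i := hmonoL 0 i.1 h0len i.2 (Nat.zero_le _)
    rw [hi] at hle
    exact le_antisymm hle (hbound ⟨0, h0len⟩).1
  · -- t NN = 1
    show L.getD (L.length - 1) 1 = 1
    have hNNlt : L.length - 1 < L.length := by omega
    rw [hget _ hNNlt]
    obtain ⟨i, hi⟩ := List.mem_iff_get.mp ((hmemL (1:ℝ)).mpr h1s)
    have hle : L.get i ≤ L.get ⟨L.length - 1, hNNlt⟩ :=
      hmonoL i.1 (L.length - 1) i.2 hNNlt (by have := i.2; omega)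
    rw [hi] at hle
    exact le_antisymm (hbound ⟨L.length - 1, hNNlt⟩).2 hle
  · -- strictly increasing
    intro j hj
    show L.getD j 1 < L.getD (j+1) 1
    have hjlt : j < L.length := by omega
    have hj1lt : j + 1 < L.length := by omega
    rw [hget j hjlt, hget (j+1) hj1lt]
    exact hmonoLs j (j+1) hjlt hj1lt (by omega)
  · -- analyticity on each piece
    intro j hj
    show AnalyticOnNhd ℝ V (Ioo (L.getD j 1) (L.getD (j+1) 1))
    have hjlt : j < L.length := by omega
    have hj1lt : j + 1 < L.length := by omega
    have hα0 : 0 ≤ L.getD j 1 := by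
      rw [hget j hjlt]
      exact (hbound _).1
    have hβ1 : L.getD (j+1) 1 ≤ 1 := by
      rw [hget (j+1) hj1lt]
      exact (hbound _).2
    have hJI : Ioo (L.getD j 1) (L.getD (j+1) 1) ⊆ Icc (0:ℝ) 1 :=
      fun z hz => ⟨le_of_lt (lt_of_le_of_lt hα0 hz.1), le_of_lt (lt_of_lt_of_le hz.2 hβ1)⟩
    have hgapJ : ∀ z ∈ Ioo (L.getD j 1) (L.getD (j+1) 1), ∀ n : ℕ, f^[n] c ≠ z := by
      intro z hz n he
      have hz0 : 0 < z := lt_of_le_of_lt hα0 hz.1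
      have hz1 : z < 1 := lt_of_lt_of_le hz.2 hβ1
      have hzs : z ∈ sfin := by
        have := horbs n (by rw [he]; exact hz0) (by rw [he]; exact hz1)
        rw [he] at this
        exact this
      obtain ⟨i, hi⟩ := List.mem_iff_get.mp ((hmemL z).mpr hzs)
      have hlow : L.get ⟨j, hjlt⟩ < L.get i := by
        rw [hi, ← hget j hjlt]
        exact hz.1
      have hhigh : L.get i < L.get ⟨j+1, hj1lt⟩ := by
        rw [hi, ← hget (j+1) hj1lt]
        exact hz.2
      rcases lt_or_ge i.1 (j+1) with h | h
      · have := hmonoL i.1 j i.2 hjlt (by omega)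
        have h2 : L.get ⟨i.1, i.2⟩ = L.get i := by congr
        rw [h2] at this
        linarith
      · have := hmonoL (j+1) i.1 hj1lt i.2 h
        have h2 : L.get ⟨i.1, i.2⟩ = L.get i := by congr
        rw [h2] at this
        linarith
    have hlt' : L.getD j 1 < L.getD (j+1) 1 := by
      rw [hget j hjlt, hget (j+1) hj1lt]
      exact hmonoLs j (j+1) hjlt hj1lt (by omega)
    set x₀ : ℝ := (L.getD j 1 + L.getD (j+1) 1)/2 with hx₀def
    have hx₀J : x₀ ∈ Ioo (L.getD j 1) (L.getD (j+1) 1) := ⟨by rw [hx₀def]; linarith, by rw [hx₀def]; linarith⟩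
    have hx₀I : x₀ ∈ Icc (0:ℝ) 1 := hJI hx₀J
    obtain ⟨uJ, huJ⟩ := hopt x₀ hx₀I
    have hVeq : ∀ y ∈ Ioo (L.getD j 1) (L.getD (j+1) 1),
        V y = (Wext uJ (y:ℂ)).re - (Vstar uJ + (Istar uJ).toReal) := by
      intro y hy
      have hyI := hJI hy
      obtain ⟨uy, huy⟩ := hopt y hyI
      have hsub : uIcc y x₀ ⊆ Ioo (L.getD j 1) (L.getD (j+1) 1) :=
        (Set.ordConnected_Ioo).uIcc_subset hy hx₀J
      have huu : uy = uJ :=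
        huniq y x₀ hyI hx₀I (fun ξ hξ n he => hgapJ ξ (hsub hξ) n he) uy uJ huy huJ
      have heq := beq uJ y (huu ▸ huy)
      have hWe : (Wext uJ (y:ℂ)).re = W uJ y := by
        rw [(hWext uJ).2.1 y hyI]
        exact Complex.ofReal_re _
      rw [hWe]
      linarith
    intro z hz
    have hanal : AnalyticAt ℝ
        (fun y : ℝ => (Wext uJ (y:ℂ)).re - (Vstar uJ + (Istar uJ).toReal)) z := by
      have h1 : AnalyticAt ℂ (Wext uJ) ((z:ℝ):ℂ) :=
        ((hWext uJ).1.analyticOnNhd hOopen) _ (hIO z (hJI hz))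
      have h2 : AnalyticAt ℝ (fun t : ℝ => (t:ℂ)) z := Complex.ofRealCLM.analyticAt z
      have h3 : AnalyticAt ℝ (fun t : ℝ => Wext uJ (t:ℂ)) z := (h1.restrictScalars).comp h2
      exact ((Complex.reCLM.analyticAt _).comp h3).sub analyticAt_const
    exact hanal.congr (Filter.eventuallyEq_of_mem (isOpen_Ioo.mem_nhds hz)
      (fun y hy => (hVeq y hy).symm))
end
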